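/- arXiv:1510.02947 — 11 statements merged into one kernel-verified Lean document; each statement's English description precedes it below -/
import Mathlib

section
/- Efron–Stein–Steele inequality: If X₁,…,Xₙ are independent random variables and Z = f(X₁,…,Xₙ) is square-integrable, then Var[Z] ≤ Σ_{k=1}^n E[Var[Z | X̄ᵏ]], where X̄ᵏ = (X₁,…,X_{k−1},X_{k+1},…,Xₙ) denotes all coordinates except the k-th, and Var[Z | X̄ᵏ] is the conditional variance of Z given X̄ᵏ. -/
open MeasureTheory ProbabilityTheory RealInnerProductSpace

section Aux


variable {Ω : Type*} {m mΩ : MeasurableSpace Ω} {μ : Measure Ω}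

private lemma trimSF (hm : m ≤ mΩ) (μ : Measure Ω) [IsFiniteMeasure μ] :
    SigmaFinite (μ.trim hm) := by
  haveI := isFiniteMeasure_trim hm (μ := μ)
  infer_instance

private lemma memLp_mul_integrable {f g : Ω → ℝ} (hf : MemLp f 2 μ) (hg : MemLp g 2 μ) :
    Integrable (fun x => f x * g x) μ := by
  have h := L2.integrable_inner (𝕜 := ℝ) (hf.toLp f) (hg.toLp g)
  refine h.congr ?_
  filter_upwards [hf.coeFn_toLp, hg.coeFn_toLp] with x h1 h2
  simp [h1, h2, RCLike.inner_apply, mul_comm]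

private lemma condexp_ae_eq_condexpL2' [IsFiniteMeasure μ] (hm : m ≤ mΩ)
    {g : Ω → ℝ} (hg : MemLp g 2 μ) :
    μ[g|m] =ᵐ[μ] (condExpL2 ℝ ℝ hm (hg.toLp g) : Ω →₂[μ] ℝ) := by
  haveI := trimSF hm μ
  refine (ae_eq_condExp_of_forall_setIntegral_eq hm (hg.integrable one_le_two) ?_ ?_ ?_).symm
  · intro s _ _
    exact (integrable_condExpL2_of_isFiniteMeasure hm).integrableOn
  · intro s hs hμs
    rw [integral_condExpL2_eq hm (hg.toLp g) hs hμs.ne]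
    exact setIntegral_congr_ae (hm s hs) (hg.coeFn_toLp.mono fun x hx _ => hx)
  · exact aestronglyMeasurable_condExpL2 hm _

private lemma memLp_condexp_two [IsFiniteMeasure μ] (hm : m ≤ mΩ)
    {g : Ω → ℝ} (hg : MemLp g 2 μ) : MemLp (μ[g|m]) 2 μ :=
  (Lp.memLp _).ae_eq (condexp_ae_eq_condexpL2' hm hg).symm

private lemma integral_sq_eq_norm_sq (h : Lp ℝ 2 μ) :
    ∫ x, (h : Ω → ℝ) x ^ 2 ∂μ = ‖h‖ ^ 2 := by
  have h1 : ⟪h, h⟫ = ∫ x, (h : Ω → ℝ) x * (h : Ω → ℝ) x ∂μ := L2.inner_def h h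
  rw [real_inner_self_eq_norm_sq] at h1
  rw [h1]
  simp_rw [pow_two]

private lemma integral_sq_condexp_le [IsFiniteMeasure μ] (hm : m ≤ mΩ)
    {g : Ω → ℝ} (hg : MemLp g 2 μ) :
    ∫ x, (μ[g|m]) x ^ 2 ∂μ ≤ ∫ x, g x ^ 2 ∂μ := by
  have h1 : ∫ x, (μ[g|m]) x ^ 2 ∂μ
      = ∫ x, ((condExpL2 ℝ ℝ hm (hg.toLp g) : Ω →₂[μ] ℝ) : Ω → ℝ) x ^ 2 ∂μ :=
    integral_congr_ae (by filter_upwards [condexp_ae_eq_condexpL2' hm hg] with x hx; rw [hx])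
  have h2 : ∫ x, g x ^ 2 ∂μ = ∫ x, ((hg.toLp g : Ω →₂[μ] ℝ) : Ω → ℝ) x ^ 2 ∂μ :=
    integral_congr_ae (by filter_upwards [hg.coeFn_toLp] with x hx; rw [hx])
  rw [h1, h2, integral_sq_eq_norm_sq, integral_sq_eq_norm_sq]
  have hle := norm_condExpL2_le (𝕜 := ℝ) hm (hg.toLp g)
  exact pow_le_pow_left₀ (norm_nonneg _) hle 2

variable {Ω : Type*} {m mΩ : MeasurableSpace Ω} {μ : Measure Ω}

private lemma trimSF' (hm : m ≤ mΩ) (μ : Measure Ω) [IsFiniteMeasure μ] :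
    SigmaFinite (μ.trim hm) := by
  haveI := isFiniteMeasure_trim hm (μ := μ)
  infer_instance

private lemma indep_mono {m₁ m₂ m₁' m₂' : MeasurableSpace Ω} (h : Indep m₁' m₂' μ)
    (h1 : m₁ ≤ m₁') (h2 : m₂ ≤ m₂') : Indep m₁ m₂ μ := by
  rw [Indep_iff] at h ⊢
  exact fun t1 t2 ht1 ht2 => h t1 t2 (h1 _ ht1) (h2 _ ht2)

private lemma condexp_sup_of_indep {Ω : Type*} {m₁ m' m₂ mΩ : MeasurableSpace Ω}
    {μ : Measure Ω} [IsProbabilityMeasure μ]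
    (hm₁ : m₁ ≤ m') (hm' : m' ≤ mΩ) (hm₂ : m₂ ≤ mΩ)
    (hindep : Indep m' m₂ μ) {W : Ω → ℝ} (hWint : Integrable W μ)
    (hWm : StronglyMeasurable[m'] W) :
    μ[W | m₁ ⊔ m₂] =ᵐ[μ] μ[W | m₁] := by
  have hm₁Ω : m₁ ≤ mΩ := hm₁.trans hm'
  have hm12 : m₁ ⊔ m₂ ≤ mΩ := sup_le hm₁Ω hm₂
  haveI := trimSF' hm12 μ
  haveI := trimSF' hm₁Ω μ
  set p : Set (Set Ω) := {s | ∃ A, MeasurableSet[m₁] A ∧ ∃ B, MeasurableSet[m₂] B ∧ s = A ∩ B}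
    with hp
  have h_eq : m₁ ⊔ m₂ = MeasurableSpace.generateFrom p := by
    refine le_antisymm (sup_le ?_ ?_) (MeasurableSpace.generateFrom_le ?_)
    · exact fun s hs => MeasurableSpace.measurableSet_generateFrom
        ⟨s, hs, Set.univ, MeasurableSet.univ, (Set.inter_univ s).symm⟩
    · exact fun s hs => MeasurableSpace.measurableSet_generateFrom
        ⟨Set.univ, MeasurableSet.univ, s, hs, (Set.univ_inter s).symm⟩
    · rintro s ⟨A, hA, B, hB, rfl⟩
      exact ((le_sup_left : m₁ ≤ m₁ ⊔ m₂) _ hA).inter ((le_sup_right : m₂ ≤ m₁ ⊔ m₂) _ hB)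
  have h_pi : IsPiSystem p := by
    rintro s ⟨A, hA, B, hB, rfl⟩ t ⟨A', hA', B', hB', rfl⟩ -
    exact ⟨A ∩ A', hA.inter hA', B ∩ B', hB.inter hB', by rw [Set.inter_inter_inter_comm]⟩
  have hVint : Integrable (μ[W|m₁]) μ := integrable_condExp
  have hVm : StronglyMeasurable[m₁] (μ[W|m₁]) := stronglyMeasurable_condExp
  have key : ∀ s : Set Ω, MeasurableSet[m₁ ⊔ m₂] s →
      ∫ x in s, (μ[W|m₁]) x ∂μ = ∫ x in s, W x ∂μ := by
    intro s hs
    refine MeasurableSpace.induction_on_inter (m := m₁ ⊔ m₂)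
      (C := fun s _ => ∫ x in s, (μ[W|m₁]) x ∂μ = ∫ x in s, W x ∂μ) h_eq h_pi ?_ ?_ ?_ ?_ s hs
    · simp
    · rintro t ⟨A, hA, B, hB, rfl⟩
      have hAΩ : MeasurableSet[mΩ] A := hm₁Ω _ hA
      have hBΩ : MeasurableSet[mΩ] B := hm₂ _ hB
      have prod_eq : ∀ (g : Ω → ℝ), StronglyMeasurable[m'] g → Integrable g μ →
          ∫ x in A ∩ B, g x ∂μ = (∫ x in A, g x ∂μ) * (μ B).toReal := by
        intro g hgm hgint
        have hgA : Measurable[m'] (A.indicator g) :=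
          hgm.measurable.indicator (hm₁ _ hA)
        have hIndicB : Measurable[m₂] (B.indicator (fun _ => (1:ℝ))) :=
          measurable_const.indicator hB
        have hIndep : IndepFun (A.indicator g) (B.indicator (fun _ => (1:ℝ))) μ := by
          rw [IndepFun_iff_Indep]
          exact indep_mono hindep hgA.comap_le hIndicB.comap_le
        have h1 := IndepFun.integral_mul_eq_mul_integral hIndep
          (hgint.indicator hAΩ).aestronglyMeasurable ((integrable_const (1:ℝ)).indicator hBΩ).aestronglyMeasurable
        have h2 : (A.indicator g) * (B.indicator (fun _ => (1:ℝ)))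
            = (A ∩ B).indicator g := by
          funext x
          by_cases hxA : x ∈ A <;> by_cases hxB : x ∈ B <;>
            simp [Set.indicator_apply, hxA, hxB]
        rw [h2] at h1
        rw [← integral_indicator (hAΩ.inter hBΩ), h1, integral_indicator hAΩ,
          integral_indicator hBΩ]
        simp [Measure.real]
      rw [prod_eq _ (hVm.mono hm₁) hVint, prod_eq _ hWm hWint,
        setIntegral_condExp hm₁Ω hWint hA]
    · intro t ht hC
      have htΩ : MeasurableSet[mΩ] t := hm12 _ ht
      have e1 := integral_add_compl htΩ hVint
      have e2 := integral_add_compl htΩ hWint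
      have e3 : ∫ x, (μ[W|m₁]) x ∂μ = ∫ x, W x ∂μ := integral_condExp hm₁Ω
      linarith
    · intro g hdisj hmeas hC
      have hgΩ : ∀ i, MeasurableSet[mΩ] (g i) := fun i => hm12 _ (hmeas i)
      rw [integral_iUnion_ae (fun i => (hgΩ i).nullMeasurableSet)
          (hdisj.mono fun _ _ h => Disjoint.aedisjoint h) hVint.integrableOn,
        integral_iUnion_ae (fun i => (hgΩ i).nullMeasurableSet)
          (hdisj.mono fun _ _ h => Disjoint.aedisjoint h) hWint.integrableOn]
      exact tsum_congr hC
  refine (ae_eq_condExp_of_forall_setIntegral_eq hm12 hWint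
    (fun s _ _ => integrable_condExp.integrableOn) (fun s hs _ => key s hs) ?_).symm
  exact ((stronglyMeasurable_condExp : StronglyMeasurable[m₁] (μ[W|m₁])).mono (le_sup_left : m₁ ≤ m₁ ⊔ m₂)).aestronglyMeasurable
end Aux

open MeasureTheory ProbabilityTheory

/-- **Efron–Stein–Steele inequality**: if `X 1, …, X n` are independent random variables and
`Z = f (X 1, …, X n)` is square-integrable, then
`Var[Z] ≤ ∑ k, E[Var[Z | X̄ᵏ]]`, where `X̄ᵏ` collects all coordinates except the `k`-th and
`Var[Z | X̄ᵏ] = E[(Z - E[Z | X̄ᵏ])² | X̄ᵏ]` is the conditional variance given the σ-algebra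
generated by `X̄ᵏ`. -/
theorem efron_stein_steele
    {Ω : Type*} [MeasurableSpace Ω] (μ : Measure Ω) [IsProbabilityMeasure μ]
    {n : ℕ} {α : Fin n → Type*} [∀ i, MeasurableSpace (α i)]
    (X : ∀ i, Ω → α i) (hXmeas : ∀ i, Measurable (X i))
    (hXindep : iIndepFun X μ)
    (f : (∀ i, α i) → ℝ) (hf : Measurable f)
    (Z : Ω → ℝ) (hZ : Z = fun ω => f (fun i => X i ω))
    (hZsq : MemLp Z 2 μ) :
    variance Z μ ≤
      ∑ k : Fin n,
        ∫ ω,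
          (μ[(fun ω' =>
              (Z ω' -
                (μ[Z | MeasurableSpace.comap
                    (fun ω'' (j : {j : Fin n // j ≠ k}) => X j ω'') MeasurableSpace.pi]) ω') ^ 2) |
            MeasurableSpace.comap
              (fun ω'' (j : {j : Fin n // j ≠ k}) => X j ω'') MeasurableSpace.pi]) ω ∂μ := by
  classical
  set mX : Fin n → MeasurableSpace Ω := fun i => MeasurableSpace.comap (X i) inferInstance
    with hmXdef
  have hmX : ∀ i, mX i ≤ ‹MeasurableSpace Ω› := fun i => (hXmeas i).comap_le
  set G : Fin n → MeasurableSpace Ω := fun k =>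
    MeasurableSpace.comap (fun ω'' (j : {j : Fin n // j ≠ k}) => X j ω'') MeasurableSpace.pi
    with hGdef
  have hG_le : ∀ k, G k ≤ ‹MeasurableSpace Ω› := by
    intro k
    exact Measurable.comap_le (measurable_pi_lambda _ fun j => hXmeas j)
  have hG_eq : ∀ k, G k = ⨆ j : {j : Fin n // j ≠ k}, mX ↑j := by
    intro k
    show MeasurableSpace.comap _ MeasurableSpace.pi = _
    simp only [MeasurableSpace.pi, MeasurableSpace.comap_iSup, MeasurableSpace.comap_comp]
    rfl
  set F : ℕ → MeasurableSpace Ω := fun t => ⨆ i : Fin n, ⨆ _ : (i : ℕ) < t, mX i with hFdef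
  have hF_le : ∀ t, F t ≤ ‹MeasurableSpace Ω› :=
    fun t => iSup₂_le fun i _ => hmX i
  have hF_zero : F 0 = ⊥ := by
    simp [hFdef]
  have hF_mono : ∀ s t : ℕ, s ≤ t → F s ≤ F t := fun s t hst =>
    iSup₂_le fun i hi => le_iSup₂ (f := fun (i : Fin n) (_ : (i : ℕ) < t) => mX i) i (hi.trans_le hst)
  have hF_le_G : ∀ k : Fin n, F ↑k ≤ G k := by
    intro k
    rw [hG_eq k]
    refine iSup₂_le fun i hi => ?_
    have hne : i ≠ k := by
      rintro rfl
      exact lt_irrefl _ hi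
    exact le_iSup_of_le ⟨i, hne⟩ le_rfl
  have hF_succ : ∀ k : Fin n, F (↑k + 1) = F ↑k ⊔ mX k := by
    intro k
    apply le_antisymm
    · refine iSup₂_le fun i hi => ?_
      rcases lt_or_eq_of_le (Nat.lt_succ_iff.mp hi) with h | h
      · exact le_sup_of_le_left (le_iSup₂ (f := fun (i : Fin n) (_ : (i : ℕ) < ↑k) => mX i) i h)
      · have hik : i = k := Fin.ext h
        subst hik
        exact le_sup_right
    · refine sup_le ?_ ?_
      · exact iSup₂_le fun i hi =>
          le_iSup₂ (f := fun (i : Fin n) (_ : (i : ℕ) < ↑k + 1) => mX i) i (hi.trans (Nat.lt_succ_self _))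
      · exact le_iSup₂ (f := fun (i : Fin n) (_ : (i : ℕ) < ↑k + 1) => mX i) k (Nat.lt_succ_self _)
  have hZF : StronglyMeasurable[F n] Z := by
    letI mF : MeasurableSpace Ω := F n
    have hXm : ∀ i : Fin n, Measurable[F n] (X i) := fun i => measurable_iff_comap_le.2
      (le_iSup₂ (f := fun (i : Fin n) (_ : (i : ℕ) < n) => mX i) i i.isLt)
    rw [hZ]
    exact (hf.comp (measurable_pi_lambda _ hXm)).stronglyMeasurable
  have hIndep : ∀ k : Fin n, Indep (G k) (mX k) μ := by
    intro k
    have hd : Disjoint {j : Fin n | j ≠ k} ({k} : Set (Fin n)) := by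
      rw [Set.disjoint_left]
      intro j hj hk
      exact hj (Set.mem_singleton_iff.mp hk)
    have h := indep_iSup_of_disjoint (μ := μ) hmX hXindep hd
    have e1 : (⨆ i ∈ {j : Fin n | j ≠ k}, mX i) = ⨆ j : {j : Fin n // j ≠ k}, mX ↑j :=
      le_antisymm (iSup₂_le fun i hi => le_iSup_of_le ⟨i, hi⟩ le_rfl)
        (iSup_le fun j => le_iSup₂ (f := fun i (_ : i ∈ {j : Fin n | j ≠ k}) => mX i) j.1 j.2)
    have e2 : (⨆ i ∈ ({k} : Set (Fin n)), mX i) = mX k := by simp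
    rw [e1, e2] at h
    rw [hG_eq k]
    exact h
  set Y : ℕ → Ω → ℝ := fun t => μ[Z | F t] with hYdef
  set W : Fin n → Ω → ℝ := fun k => μ[Z | G k] with hWdef
  have hrwG : ∀ k : Fin n, MeasurableSpace.comap
      (fun ω'' (j : {j : Fin n // j ≠ k}) => X j ω'') MeasurableSpace.pi = G k := fun k => rfl
  simp only [hrwG]
  have hrwW : ∀ k : Fin n, μ[Z | G k] = W k := fun k => rfl
  simp only [hrwW]
  have hZint : Integrable Z μ := hZsq.integrable one_le_two
  have hY2 : ∀ t, MemLp (Y t) 2 μ := fun t => memLp_condexp_two (hF_le t) hZsq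
  have hYsm : ∀ t, StronglyMeasurable[F t] (Y t) := fun t => stronglyMeasurable_condExp
  have hW2 : ∀ k, MemLp (W k) 2 μ := fun k => memLp_condexp_two (hG_le k) hZsq
  have hWint : ∀ k, Integrable (W k) μ := fun k => integrable_condExp
  have hWsm : ∀ k, StronglyMeasurable[G k] (W k) := fun k => stronglyMeasurable_condExp
  -- pull-out property
  have pull : ∀ t s : ℕ, s ≤ t → ∫ x, Y s x * Y t x ∂μ = ∫ x, Y s x * Z x ∂μ := by
    intro t s hst
    haveI := trimSF' (hF_le t) μ
    have hsm : StronglyMeasurable[F t] (Y s) := (hYsm s).mono (hF_mono s t hst)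
    have hmul : μ[Y s * Z | F t] =ᵐ[μ] Y s * μ[Z | F t] :=
      condExp_mul_of_stronglyMeasurable_left hsm (memLp_mul_integrable (hY2 s) hZsq) hZint
    calc ∫ x, Y s x * Y t x ∂μ
        = ∫ x, (μ[Y s * Z | F t]) x ∂μ := (integral_congr_ae hmul).symm
      _ = ∫ x, (Y s * Z) x ∂μ := integral_condExp (hF_le t)
      _ = ∫ x, Y s x * Z x ∂μ := rfl
  have cross : ∀ k : Fin n, ∫ x, Y ↑k x * Y (↑k + 1) x ∂μ = ∫ x, Y ↑k x * Y ↑k x ∂μ := by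
    intro k
    rw [pull (↑k + 1) ↑k (Nat.le_succ _), pull ↑k ↑k le_rfl]
  -- expansion of the square
  have hexp : ∀ k : Fin n,
      ∫ x, (Y (↑k + 1) x - Y ↑k x) ^ 2 ∂μ
        = (∫ x, Y (↑k + 1) x * Y (↑k + 1) x ∂μ) - ∫ x, Y ↑k x * Y ↑k x ∂μ := by
    intro k
    have iAA : Integrable (fun x => Y (↑k + 1) x * Y (↑k + 1) x) μ :=
      memLp_mul_integrable (hY2 _) (hY2 _)
    have iBB : Integrable (fun x => Y ↑k x * Y ↑k x) μ :=
      memLp_mul_integrable (hY2 _) (hY2 _)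
    have iAB : Integrable (fun x => Y ↑k x * Y (↑k + 1) x) μ :=
      memLp_mul_integrable (hY2 _) (hY2 _)
    have e : (fun x => (Y (↑k + 1) x - Y ↑k x) ^ 2)
        = fun x => Y (↑k + 1) x * Y (↑k + 1) x
            - (2 * (Y ↑k x * Y (↑k + 1) x) - Y ↑k x * Y ↑k x) := by
      funext x; ring
    have ig : Integrable (fun x => 2 * (Y ↑k x * Y (↑k + 1) x) - Y ↑k x * Y ↑k x) μ :=
      (iAB.const_mul 2).sub iBB
    have i2 : Integrable (fun x => 2 * (Y ↑k x * Y (↑k + 1) x)) μ := iAB.const_mul 2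
    rw [e, integral_sub iAA ig, integral_sub i2 iBB, integral_const_mul, cross k]
    ring
  -- the per-coordinate bound
  have step : ∀ k : Fin n,
      (∫ x, Y (↑k + 1) x * Y (↑k + 1) x ∂μ) - ∫ x, Y ↑k x * Y ↑k x ∂μ
        ≤ ∫ ω, (μ[(fun ω' => (Z ω' - W k ω') ^ 2) | G k]) ω ∂μ := by
    intro k
    haveI := trimSF' (hF_le (↑k + 1)) μ
    haveI := trimSF' (hF_le ↑k) μ
    haveI := trimSF' (hG_le k) μ
    have h1 : μ[W k | F (↑k + 1)] =ᵐ[μ] μ[W k | F ↑k] := by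
      rw [hF_succ k]
      exact condexp_sup_of_indep (hF_le_G k) (hG_le k) (hmX k) (hIndep k) (hWint k) (hWsm k)
    have h2 : μ[W k | F ↑k] =ᵐ[μ] Y ↑k := condExp_condExp_of_le (hF_le_G k) (hG_le k)
    have h3 : μ[Z - W k | F (↑k + 1)] =ᵐ[μ] μ[Z | F (↑k + 1)] - μ[W k | F (↑k + 1)] :=
      condExp_sub hZint (hWint k) _
    have hdiff : μ[Z - W k | F (↑k + 1)] =ᵐ[μ] fun x => Y (↑k + 1) x - Y ↑k x := by
      filter_upwards [h1, h2, h3] with x hx1 hx2 hx3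
      rw [hx3]
      show (μ[Z | F (↑k + 1)]) x - (μ[W k | F (↑k + 1)]) x = _
      rw [hx1, hx2]
    have hZW2 : MemLp (Z - W k) 2 μ := hZsq.sub (hW2 k)
    have hle : ∫ x, (μ[Z - W k | F (↑k + 1)]) x ^ 2 ∂μ ≤ ∫ x, (Z - W k) x ^ 2 ∂μ :=
      integral_sq_condexp_le (mΩ := ‹MeasurableSpace Ω›) (hF_le (↑k + 1)) hZW2
    have hL : ∫ x, (Y (↑k + 1) x - Y ↑k x) ^ 2 ∂μ
        = ∫ x, (μ[Z - W k | F (↑k + 1)]) x ^ 2 ∂μ := by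
      refine integral_congr_ae ?_
      filter_upwards [hdiff] with x hx
      rw [hx]
    have hR : ∫ ω, (μ[(fun ω' => (Z ω' - W k ω') ^ 2) | G k]) ω ∂μ
        = ∫ x, (Z - W k) x ^ 2 ∂μ :=
      integral_condExp (hG_le k)
    rw [← hexp k, hL, hR]
    exact hle
  -- assembling
  haveI := trimSF' (hF_le n) μ
  have hYn : Y n = Z := condExp_of_stronglyMeasurable (hF_le n) hZF hZint
  have hY0 : Y 0 = fun _ => ∫ x, Z x ∂μ := by
    show μ[Z | F 0] = _
    rw [hF_zero]
    exact condExp_bot Z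
  set φ : ℕ → ℝ := fun t => ∫ x, Y t x * Y t x ∂μ with hφdef
  have hvar : variance Z μ = φ n - φ 0 := by
    rw [variance_eq_sub hZsq]
    have hφn : φ n = ∫ x, Z x ^ 2 ∂μ := by
      simp only [hφdef, hYn, pow_two]
    have hφ0 : φ 0 = (∫ x, Z x ∂μ) ^ 2 := by
      simp only [hφdef, hY0]
      rw [integral_const]
      simp [pow_two]
    rw [hφn, hφ0]
    rfl
  have htel : φ n - φ 0 = ∑ k : Fin n, (φ (↑k + 1) - φ ↑k) := by
    calc φ n - φ 0 = ∑ i ∈ Finset.range n, (φ (i + 1) - φ i) := (Finset.sum_range_sub φ n).symm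
      _ = ∑ k : Fin n, (φ (↑k + 1) - φ ↑k) :=
          (Fin.sum_univ_eq_sum_range (fun i => φ (i + 1) - φ i) n).symm
  rw [hvar, htel]
  refine Finset.sum_le_sum fun k _ => ?_
  exact step k
end

section
/- Bounded-difference variance bound: Let X₁,…,Xₙ be independent random variables and Z = f(X₁,…,Xₙ), where f satisfies the bounded difference property with constants c₁,…,cₙ ≥ 0, i.e., for every i and all fixed values of the other coordinates, sup_x f(…,x,…) − inf_x f(…,x,…) ≤ cᵢ, where the varying argument is in position i. Then Var[Z] ≤ (1/4)·Σ_{k=1}^n cₖ². -/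
/-!
Induct on the number of coordinates. Splitting off the first coordinate, the law of total variance
writes `Var f` as the mean of the conditional variances plus the variance of the conditional mean.
Each conditional variance is at most `c₀² / 4` by Popoviciu's inequality, and the conditional mean
again has bounded differences, with the remaining constants. Independence makes the joint law of
the `Xᵢ` the product of their laws.
-/

open MeasureTheory ProbabilityTheory

lemma variance_le_sq_div_four_of_sub_le {Ω : Type*} [MeasurableSpace Ω] {μ : Measure Ω}
    [IsProbabilityMeasure μ] {Y : Ω → ℝ} (hY : AEMeasurable Y μ) {c : ℝ}
    (h : ∀ ω ω', Y ω - Y ω' ≤ c) : Var[Y; μ] ≤ c ^ 2 / 4 := by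
  have : Nonempty Ω := Measure.nonempty_of_neZero μ
  have hbdd : BddBelow (Set.range Y) :=
    ⟨Y (Classical.arbitrary Ω) - c, by rintro _ ⟨ω, rfl⟩; linarith [h (Classical.arbitrary Ω) ω]⟩
  have hY_mem : ∀ ω, Y ω ∈ Set.Icc (⨅ ω, Y ω) ((⨅ ω, Y ω) + c) := fun ω =>
    ⟨ciInf_le hbdd ω, by linarith [le_ciInf fun ω' => (by linarith [h ω ω'] : Y ω - c ≤ Y ω')]⟩
  calc Var[Y; μ] ≤ (((⨅ ω, Y ω) + c - ⨅ ω, Y ω) / 2) ^ 2 :=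
        variance_le_sq_of_bounded (ae_of_all _ hY_mem) hY
    _ = c ^ 2 / 4 := by ring

lemma variance_prod_eq_integral_variance_add_variance_integral {β γ : Type*} [MeasurableSpace β]
    [MeasurableSpace γ] (μ : Measure β) (ν : Measure γ) [IsProbabilityMeasure μ]
    [IsProbabilityMeasure ν] {F : β × γ → ℝ} (hF : Measurable F) {C : ℝ} (hC : ∀ p, ‖F p‖ ≤ C) :
    Var[F; μ.prod ν] =
      ∫ y, Var[fun x => F (x, y); μ] ∂ν + Var[fun y => ∫ x, F (x, y) ∂μ; ν] := by
  set g : γ → ℝ := fun y => ∫ x, F (x, y) ∂μ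
  have hF_memLp : MemLp F 2 (μ.prod ν) := .of_bound hF.aestronglyMeasurable C (ae_of_all _ hC)
  have hg_memLp : MemLp g 2 ν :=
    .of_bound hF.stronglyMeasurable.integral_prod_left'.aestronglyMeasurable C <| ae_of_all _
      fun y => (norm_integral_le_of_norm_le_const (ae_of_all _ fun x => hC (x, y))).trans_eq
        (by simp)
  have hslice : ∀ y, Var[fun x => F (x, y); μ] = ∫ x, F (x, y) ^ 2 ∂μ - g y ^ 2 := fun y =>
    variance_eq_sub (.of_bound (hF.comp measurable_prodMk_right).aestronglyMeasurable C
      (ae_of_all _ fun x => hC (x, y)))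
  have hF_sq_int : Integrable (fun p => F p ^ 2) (μ.prod ν) := hF_memLp.integrable_sq
  rw [variance_eq_sub hF_memLp, variance_eq_sub hg_memLp]
  simp only [Pi.pow_apply]
  rw [integral_congr_ae (ae_of_all _ hslice),
    integral_sub hF_sq_int.integral_prod_right hg_memLp.integrable_sq,
    integral_prod_symm _ hF_sq_int, integral_prod_symm _ (hF_memLp.integrable one_le_two)]
  ring

section BoundedDifferences

variable {ι : Type*} [DecidableEq ι] {α : ι → Type*}

def HasBoundedDifferences (f : (∀ i, α i) → ℝ) (c : ι → ℝ) : Prop :=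
  ∀ i (x : ∀ j, α j) (y y' : α i), f (Function.update x i y) - f (Function.update x i y') ≤ c i

namespace HasBoundedDifferences

variable {f : (∀ i, α i) → ℝ} {c : ι → ℝ}

lemma abs_sub_update_le (h : HasBoundedDifferences f c) (i : ι) (x : ∀ j, α j) (y : α i) :
    |f (Function.update x i y) - f x| ≤ c i := by
  rw [abs_sub_le_iff]
  constructor
  · simpa only [Function.update_eq_self] using h i x y (x i)
  · simpa only [Function.update_eq_self] using h i x (x i) y

lemma abs_sub_le_sum [Fintype ι] (h : HasBoundedDifferences f c) (x₀ x : ∀ i, α i) :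
    |f x - f x₀| ≤ ∑ i, c i := by
  suffices ∀ s : Finset ι, |f (s.piecewise x x₀) - f x₀| ≤ ∑ i ∈ s, c i by
    simpa only [Finset.piecewise_univ] using this Finset.univ
  intro s
  induction s using Finset.induction_on with
  | empty => simp
  | insert i s hi ih =>
    rw [Finset.piecewise_insert, Finset.sum_insert hi]
    calc |f (Function.update (s.piecewise x x₀) i (x i)) - f x₀|
        ≤ |f (Function.update (s.piecewise x x₀) i (x i)) - f (s.piecewise x x₀)| +
            |f (s.piecewise x x₀) - f x₀| := abs_sub_le _ _ _
      _ ≤ c i + ∑ i ∈ s, c i := add_le_add (h.abs_sub_update_le i _ _) ih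

lemma exists_norm_le [Fintype ι] [Nonempty (∀ i, α i)] (h : HasBoundedDifferences f c) :
    ∃ C, ∀ x, ‖f x‖ ≤ C := by
  obtain ⟨x₀⟩ := ‹Nonempty (∀ i, α i)›
  refine ⟨|f x₀| + ∑ i, c i, fun x => ?_⟩
  rw [Real.norm_eq_abs]
  linarith [abs_sub_abs_le_abs_sub (f x) (f x₀), h.abs_sub_le_sum x₀ x]

lemma integral {β : Type*} [MeasurableSpace β] {ν : Measure β} [IsProbabilityMeasure ν]
    {F : β → (∀ i, α i) → ℝ} (hF : ∀ x, Integrable (fun b => F b x) ν)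
    (h : ∀ b, HasBoundedDifferences (F b) c) :
    HasBoundedDifferences (fun x => ∫ b, F b x ∂ν) c := by
  intro i x y y'
  rw [← integral_sub (hF _) (hF _)]
  calc ∫ b, (F b (Function.update x i y) - F b (Function.update x i y')) ∂ν
      ≤ ∫ _, c i ∂ν := integral_mono ((hF _).sub (hF _)) (integrable_const _) fun b => h b i x y y'
    _ = c i := by simp

end HasBoundedDifferences

end BoundedDifferences

namespace HasBoundedDifferences

section Fin

variable {n : ℕ} {α : Fin (n + 1) → Type*} {f : (∀ i, α i) → ℝ} {c : Fin (n + 1) → ℝ}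

lemma comp_insertNth (h : HasBoundedDifferences f c) (p : Fin (n + 1)) (a : α p) :
    HasBoundedDifferences (fun x => f (p.insertNth a x)) (fun j => c (p.succAbove j)) := by
  intro j x y y'
  simpa only [Fin.insertNth_update] using h (p.succAbove j) (p.insertNth a x) y y'

lemma sub_insertNth_le (h : HasBoundedDifferences f c) (p : Fin (n + 1))
    (x : ∀ j, α (p.succAbove j)) (a a' : α p) :
    f (p.insertNth a x) - f (p.insertNth a' x) ≤ c p := by
  simpa only [Fin.update_insertNth] using h p (p.insertNth a x) a a'

end Fin

theorem variance_pi_le {n : ℕ} {α : Fin n → Type*} [∀ i, MeasurableSpace (α i)]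
    {ν : ∀ i, Measure (α i)} [∀ i, IsProbabilityMeasure (ν i)] {f : (∀ i, α i) → ℝ}
    (hf : Measurable f) {c : Fin n → ℝ} (h : HasBoundedDifferences f c) :
    Var[f; Measure.pi ν] ≤ (1 / 4) * ∑ k, c k ^ 2 := by
  induction n with
  | zero =>
    simpa using variance_le_sq_div_four_of_sub_le hf.aemeasurable (μ := Measure.pi ν) (c := 0)
      fun x x' => by rw [Subsingleton.elim x x', sub_self]
  | succ n ih =>
    have : Nonempty (∀ i, α i) := Measure.nonempty_of_neZero (Measure.pi ν)
    obtain ⟨C, hC⟩ := h.exists_norm_le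
    set ν' := Measure.pi fun j => ν (Fin.succAbove 0 j)
    set F : α 0 × (∀ j, α (Fin.succAbove 0 j)) → ℝ := fun q => f (Fin.insertNth 0 q.1 q.2)
    have hF : Measurable F := hf.comp (MeasurableEquiv.piFinSuccAbove α 0).symm.measurable
    have hVar_eq : Var[f; Measure.pi ν] = Var[F; (ν 0).prod ν'] :=
      (((measurePreserving_piFinSuccAbove ν 0).symm _).variance_fun_comp hf.aemeasurable).symm
    have hcondVar : ∫ y, Var[fun x => F (x, y); ν 0] ∂ν' ≤ c 0 ^ 2 / 4 := by
      have hslice : ∀ y, Var[fun x => F (x, y); ν 0] ≤ c 0 ^ 2 / 4 := fun y =>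
        variance_le_sq_div_four_of_sub_le (hF.comp measurable_prodMk_right).aemeasurable
          fun a a' => h.sub_insertNth_le 0 y a a'
      calc ∫ y, Var[fun x => F (x, y); ν 0] ∂ν' ≤ ∫ _, c 0 ^ 2 / 4 ∂ν' :=
            integral_mono_of_nonneg (ae_of_all _ fun _ => variance_nonneg _ _)
              (integrable_const _) (ae_of_all _ hslice)
        _ = c 0 ^ 2 / 4 := by rw [integral_const, probReal_univ, one_smul]
    have hcondMean :
        Var[fun y => ∫ x, F (x, y) ∂ν 0; ν'] ≤ 1 / 4 * ∑ j, c (Fin.succAbove 0 j) ^ 2 := by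
      refine ih hF.stronglyMeasurable.integral_prod_left'.measurable
        (HasBoundedDifferences.integral (fun y => ?_) fun a => h.comp_insertNth 0 a)
      exact .of_bound (hF.comp measurable_prodMk_right).aestronglyMeasurable C
        (ae_of_all _ fun _ => hC _)
    rw [hVar_eq, variance_prod_eq_integral_variance_add_variance_integral _ _ hF fun _ => hC _,
      Fin.sum_univ_succAbove _ 0]
    linarith

end HasBoundedDifferences

theorem variance_le_of_bounded_differences_general
    {Ω : Type*} [MeasurableSpace Ω] (μ : Measure Ω) [IsProbabilityMeasure μ]
    {n : ℕ} {α : Fin n → Type*} [∀ i, MeasurableSpace (α i)]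
    (X : ∀ i, Ω → α i) (hXmeas : ∀ i, Measurable (X i))
    (hXindep : iIndepFun X μ)
    (f : (∀ i, α i) → ℝ) (hf : Measurable f)
    (c : Fin n → ℝ)
    (hbdd : ∀ (i : Fin n) (x : ∀ j, α j) (y y' : α i),
      f (Function.update x i y) - f (Function.update x i y') ≤ c i) :
    variance (fun ω => f (fun i => X i ω)) μ ≤ (1 / 4) * ∑ k : Fin n, (c k) ^ 2 := by
  have : ∀ i, IsProbabilityMeasure (μ.map (X i)) := fun i =>
    Measure.isProbabilityMeasure_map (hXmeas i).aemeasurable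
  have hX : Measurable fun ω i => X i ω := measurable_pi_lambda _ hXmeas
  calc variance (fun ω => f (fun i => X i ω)) μ = Var[f; μ.map fun ω i => X i ω] :=
        (variance_map hf.aemeasurable hX.aemeasurable).symm
    _ = Var[f; Measure.pi fun i => μ.map (X i)] := by
        rw [hXindep.map_fun_eq_pi_map fun i => (hXmeas i).aemeasurable]
    _ ≤ (1 / 4) * ∑ k, c k ^ 2 := HasBoundedDifferences.variance_pi_le hf hbdd

/-- **Bounded-difference variance bound**: if `X 1, …, X n` are independent random variables and
`f` has the bounded difference property with constants `c 1, …, c n ≥ 0` (changing only the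
`i`-th coordinate changes the value of `f` by at most `c i`), then
`Var[f (X 1, …, X n)] ≤ (1/4) ∑ k, (c k)²`. -/
theorem variance_le_of_bounded_differences
    {Ω : Type*} [MeasurableSpace Ω] (μ : Measure Ω) [IsProbabilityMeasure μ]
    {n : ℕ} {α : Fin n → Type*} [∀ i, MeasurableSpace (α i)]
    (X : ∀ i, Ω → α i) (hXmeas : ∀ i, Measurable (X i))
    (hXindep : iIndepFun X μ)
    (f : (∀ i, α i) → ℝ) (hf : Measurable f)
    (c : Fin n → ℝ) (hc : ∀ i, 0 ≤ c i)
    (hbdd : ∀ (i : Fin n) (x : ∀ j, α j) (y y' : α i),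
      f (Function.update x i y) - f (Function.update x i y') ≤ c i) :
    variance (fun ω => f (fun i => X i ω)) μ ≤ (1 / 4) * ∑ k : Fin n, (c k) ^ 2 :=
  variance_le_of_bounded_differences_general μ X hXmeas hXindep f hf c hbdd
end

section
/- Variance bound for the L¹ error of kernel density estimation: Let X₁,…,Xₙ be i.i.d. real random variables with probability density φ, let K : ℝ → ℝ₊ be integrable with ∫K(u)du = 1, let h > 0, and define the kernel density estimate φₙ(x) = (1/(nh))·Σ_{i=1}^n K((x − Xᵢ)/h). Then the L¹ error Zₙ = ∫ |φₙ(x) − φ(x)| dx satisfies Var[Zₙ] ≤ 1/n. -/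
/-!
Replacing one observation `Xᵢ` changes `φₙ` by `(K((x - Xᵢ)/h) - K((x - Xᵢ')/h))/(nh)`, whose
`L¹` norm is at most `2/n`; by the triangle inequality `Zₙ` moves by at most `2/n` as well.
For a function of independent coordinates whose differences in coordinate `i` are bounded by
`cᵢ`, the variance is at most `∑ cᵢ²/4`: split off the first coordinate by the law of total
variance on a product, bound the variance of the conditional mean by Popoviciu's inequality
and the conditional variances by induction. Here this gives `n · (2/n)²/4 = 1/n`.
-/

open MeasureTheory ProbabilityTheory

section BoundedDifferences

variable {α β : Type*} [MeasurableSpace α] [MeasurableSpace β]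

lemma variance_le_of_abs_sub_le {μ : Measure α} [IsProbabilityMeasure μ] {f : α → ℝ}
    (hf : AEMeasurable f μ) {c : ℝ} (hc : ∀ a b, |f a - f b| ≤ c) :
    Var[f; μ] ≤ c ^ 2 / 4 := by
  have : Nonempty α := nonempty_of_isProbabilityMeasure μ
  let a₀ : α := Classical.arbitrary α
  have hbdd : BddBelow (Set.range f) :=
    ⟨f a₀ - c, by rintro _ ⟨b, rfl⟩; linarith [(abs_le.mp (hc a₀ b)).2]⟩
  have hrange : ∀ a, f a ∈ Set.Icc (⨅ b, f b) ((⨅ b, f b) + c) := fun a =>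
    ⟨ciInf_le hbdd a, by
      have : f a - c ≤ ⨅ b, f b := le_ciInf fun b => by linarith [(abs_le.mp (hc a b)).2]
      linarith⟩
  calc Var[f; μ] ≤ (((⨅ b, f b) + c - ⨅ b, f b) / 2) ^ 2 :=
        variance_le_sq_of_bounded (ae_of_all μ hrange) hf
    _ = c ^ 2 / 4 := by ring

lemma variance_prod_eq_integral_variance_add_variance_integral_s4
    {μ : Measure α} {ν : Measure β} [IsProbabilityMeasure μ] [IsProbabilityMeasure ν]
    {G : α × β → ℝ} (hG : Measurable G) {B : ℝ} (hB : ∀ p, |G p| ≤ B) :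
    Var[G; μ.prod ν] =
      ∫ a, Var[fun b ↦ G (a, b); ν] ∂μ + Var[fun a ↦ ∫ b, G (a, b) ∂ν; μ] := by
  have hB2 : ∀ p, |G p ^ 2| ≤ B ^ 2 := fun p => by
    rw [abs_pow]; exact pow_le_pow_left₀ (abs_nonneg _) (hB p) 2
  set m : α → ℝ := fun a ↦ ∫ b, G (a, b) ∂ν
  set q : α → ℝ := fun a ↦ ∫ b, G (a, b) ^ 2 ∂ν
  have hm : Measurable m := hG.stronglyMeasurable.integral_prod_right'.measurable
  have hq : Measurable q := (hG.pow_const 2).stronglyMeasurable.integral_prod_right'.measurable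
  have hmB : ∀ a, |m a| ≤ B := fun a => by
    simpa [← Real.norm_eq_abs] using
      norm_integral_le_of_norm_le_const (μ := ν) (ae_of_all _ fun b => (hB (a, b)))
  have hqB : ∀ a, |q a| ≤ B ^ 2 := fun a => by
    simpa [← Real.norm_eq_abs] using
      norm_integral_le_of_norm_le_const (μ := ν) (ae_of_all _ fun b => (hB2 (a, b)))
  have hsection : ∀ a, Var[fun b ↦ G (a, b); ν] = q a - m a ^ 2 := fun a =>
    variance_eq_sub (.of_bound (hG.comp measurable_prodMk_left).aestronglyMeasurable B
      (ae_of_all _ fun b => hB (a, b)))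
  have hmLp : MemLp m 2 μ := MemLp.of_bound hm.aestronglyMeasurable B (ae_of_all _ hmB)
  rw [variance_eq_sub (.of_bound hG.aestronglyMeasurable B (ae_of_all _ hB)), variance_eq_sub hmLp,
    integral_congr_ae (ae_of_all μ hsection),
    integral_sub (.of_bound hq.aestronglyMeasurable _ (ae_of_all μ hqB))
      hmLp.integrable_sq]
  simp only [Pi.pow_apply]
  rw [integral_prod _ (.of_bound hG.aestronglyMeasurable _ (ae_of_all _ hB)),
    integral_prod (fun p ↦ G p ^ 2)
      (.of_bound (hG.pow_const 2).aestronglyMeasurable _ (ae_of_all _ hB2))]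
  ring

lemma variance_integral_le_of_abs_sub_le
    {μ : Measure α} {ν : Measure β} [IsProbabilityMeasure μ] [IsProbabilityMeasure ν]
    {G : α × β → ℝ} (hG : Measurable G) {B : ℝ} (hB : ∀ p, |G p| ≤ B) {c : ℝ}
    (hc : ∀ a a' b, |G (a, b) - G (a', b)| ≤ c) :
    Var[fun a ↦ ∫ b, G (a, b) ∂ν; μ] ≤ c ^ 2 / 4 := by
  have hint : ∀ a, Integrable (fun b ↦ G (a, b)) ν := fun a =>
    .of_bound (hG.comp measurable_prodMk_left).aestronglyMeasurable B (ae_of_all _ fun b => hB _)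
  refine variance_le_of_abs_sub_le
    hG.stronglyMeasurable.integral_prod_right'.measurable.aemeasurable fun a a' => ?_
  rw [← integral_sub (hint a) (hint a'), ← Real.norm_eq_abs]
  simpa using norm_integral_le_of_norm_le_const (μ := ν) (f := fun b ↦ G (a, b) - G (a', b))
    (ae_of_all _ fun b => hc a a' b)

theorem variance_pi_le_of_abs_sub_le {n : ℕ} (ν : Fin n → Measure α)
    [∀ i, IsProbabilityMeasure (ν i)] {F : (Fin n → α) → ℝ} (hF : Measurable F) {B : ℝ}
    (hB : ∀ x, |F x| ≤ B) (c : Fin n → ℝ)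
    (hc : ∀ i x y, (∀ j ≠ i, x j = y j) → |F x - F y| ≤ c i) :
    Var[F; Measure.pi ν] ≤ ∑ i, c i ^ 2 / 4 := by
  induction n with
  | zero =>
    simpa using variance_le_of_abs_sub_le (μ := Measure.pi ν) hF.aemeasurable (c := 0)
      fun x y => by simp [Subsingleton.elim x y]
  | succ n ih =>
    set e := MeasurableEquiv.piFinSuccAbove (fun _ : Fin (n + 1) => α) 0
    set G : α × (Fin n → α) → ℝ := fun p ↦ F (e.symm p)
    have hG : Measurable G := hF.comp e.symm.measurable
    have hsection : ∀ a i b b', (∀ j ≠ i, b j = b' j) → |G (a, b) - G (a, b')| ≤ c i.succ := by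
      intro a i b b' hbb'
      refine hc i.succ _ _ fun j hj => ?_
      cases j using Fin.cases with
      | zero => simp [e]
      | succ k => simpa [e] using hbb' k (fun hk => hj (hk ▸ rfl))
    have hfirst : ∀ a a' b, |G (a, b) - G (a', b)| ≤ c 0 := by
      intro a a' b
      refine hc 0 _ _ fun j hj => ?_
      obtain ⟨k, rfl⟩ := Fin.exists_succ_eq.mpr hj
      simp [e]
    calc Var[F; Measure.pi ν] = Var[G; (ν 0).prod (Measure.pi fun j ↦ ν j.succ)] :=
          ((measurePreserving_piFinSuccAbove ν 0).symm e).variance_fun_comp hF.aemeasurable |>.symm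
      _ = ∫ a, Var[fun b ↦ G (a, b); Measure.pi fun j ↦ ν j.succ] ∂ν 0
            + Var[fun a ↦ ∫ b, G (a, b) ∂Measure.pi fun j ↦ ν j.succ; ν 0] :=
          variance_prod_eq_integral_variance_add_variance_integral_s4 hG fun p => hB _
      _ ≤ ∑ j : Fin n, c j.succ ^ 2 / 4 + c 0 ^ 2 / 4 := by
          gcongr
          · calc ∫ a, Var[fun b ↦ G (a, b); Measure.pi fun j ↦ ν j.succ] ∂ν 0
                ≤ ∫ _, ∑ j : Fin n, c j.succ ^ 2 / 4 ∂ν 0 :=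
                  integral_mono_of_nonneg (ae_of_all _ fun a => variance_nonneg _ _)
                    (integrable_const _) (ae_of_all _ fun a =>
                      ih _ (hG.comp measurable_prodMk_left) (fun b => hB _) _ (hsection a))
              _ = ∑ j : Fin n, c j.succ ^ 2 / 4 := by simp
          · exact variance_integral_le_of_abs_sub_le hG (fun p => hB _) hfirst
      _ = ∑ i, c i ^ 2 / 4 := by rw [Fin.sum_univ_succ, add_comm]

end BoundedDifferences

lemma abs_integral_abs_sub_sub_integral_abs_sub_le {α : Type*} [MeasurableSpace α]
    {μ : Measure α} {f g φ : α → ℝ} (hf : Integrable f μ) (hg : Integrable g μ)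
    (hφ : AEStronglyMeasurable φ μ) :
    |∫ x, |f x - φ x| ∂μ - ∫ x, |g x - φ x| ∂μ| ≤ ∫ x, |f x - g x| ∂μ := by
  by_cases hφi : Integrable φ μ
  · have hfφ : Integrable (fun x ↦ |f x - φ x|) μ := (hf.sub hφi).abs
    have hgφ : Integrable (fun x ↦ |g x - φ x|) μ := (hg.sub hφi).abs
    rw [← integral_sub hfφ hgφ, ← Real.norm_eq_abs]
    refine (norm_integral_le_integral_norm _).trans
      (integral_mono (hfφ.sub hgφ).norm (hf.sub hg).abs fun x => ?_)
    simpa [Real.norm_eq_abs] using abs_abs_sub_abs_le_abs_sub (f x - φ x) (g x - φ x)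
  -- otherwise `f - φ` is not integrable, so both integrals on the left are the junk value `0`
  · have hundef : ∀ {f}, Integrable f μ → ∫ x, |f x - φ x| ∂μ = 0 := fun {f} hf =>
      integral_undef fun habs => hφi <| by
        simpa using hf.sub ((integrable_norm_iff (hf.1.sub hφ)).mp habs)
    simpa [hundef hf, hundef hg] using integral_nonneg fun x => abs_nonneg (f x - g x)

section KernelDensityEstimate

variable (K : ℝ → ℝ) (h : ℝ) {n : ℕ}

lemma integral_comp_sub_div (a : ℝ) : ∫ t, K ((t - a) / h) = |h| * ∫ u, K u :=
  (integral_sub_right_eq_self (fun t ↦ K (t / h)) a).trans (Measure.integral_comp_div K h)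

noncomputable def kde (x : Fin n → ℝ) (t : ℝ) : ℝ := 1 / (n * h) * ∑ i, K ((t - x i) / h)

noncomputable def kdeL1Error (φ : ℝ → ℝ) (x : Fin n → ℝ) : ℝ := ∫ t, |kde K h x t - φ t|

variable {K h}

lemma kde_nonneg (hK : ∀ u, 0 ≤ K u) (hh : 0 ≤ h) (x : Fin n → ℝ) (t : ℝ) :
    0 ≤ kde K h x t :=
  mul_nonneg (by positivity) (Finset.sum_nonneg fun i _ => hK _)

lemma integrable_kde (hK : Integrable K) (hh : h ≠ 0) (x : Fin n → ℝ) :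
    Integrable (kde K h x) :=
  (integrable_finsetSum _ fun i _ => (hK.comp_div hh).comp_sub_right (x i)).const_mul _

lemma integral_kde (hK : Integrable K) (hKnorm : ∫ u, K u = 1) (hh : 0 < h) (hn : n ≠ 0)
    (x : Fin n → ℝ) : ∫ t, kde K h x t = 1 := by
  unfold kde
  rw [integral_const_mul,
    integral_finsetSum _ fun i _ => (hK.comp_div hh.ne').comp_sub_right (x i)]
  simp only [integral_comp_sub_div, hKnorm, abs_of_pos hh, mul_one, Finset.sum_const,
    Finset.card_univ, Fintype.card_fin, nsmul_eq_mul]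
  field_simp

lemma kde_sub_kde {i : Fin n} {x y : Fin n → ℝ} (hxy : ∀ j ≠ i, x j = y j) (t : ℝ) :
    kde K h x t - kde K h y t = 1 / (n * h) * (K ((t - x i) / h) - K ((t - y i) / h)) := by
  unfold kde
  rw [← mul_sub, ← Finset.sum_sub_distrib,
    Finset.sum_eq_single i (fun j _ hj => by rw [hxy j hj, sub_self]) (by simp)]

lemma integral_abs_kde_sub_kde_le (hK0 : ∀ u, 0 ≤ K u) (hK : Integrable K)
    (hKnorm : ∫ u, K u = 1) (hh : 0 < h) {i : Fin n} {x y : Fin n → ℝ}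
    (hxy : ∀ j ≠ i, x j = y j) : ∫ t, |kde K h x t - kde K h y t| ≤ 2 / n := by
  have hKi : ∀ a, Integrable (fun t ↦ K ((t - a) / h)) :=
    fun a => (hK.comp_div hh.ne').comp_sub_right a
  calc ∫ t, |kde K h x t - kde K h y t|
      ≤ ∫ t, 1 / (n * h) * (K ((t - x i) / h) + K ((t - y i) / h)) := by
        refine integral_mono ((integrable_kde hK hh.ne' x).sub (integrable_kde hK hh.ne' y)).abs
          (((hKi (x i)).add (hKi (y i))).const_mul _) fun t => ?_
        rw [kde_sub_kde hxy, abs_mul, abs_of_nonneg (by positivity)]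
        gcongr
        exact (abs_sub _ _).trans (by rw [abs_of_nonneg (hK0 _), abs_of_nonneg (hK0 _)])
    _ = 2 / n := by
        rw [integral_const_mul, integral_add (hKi (x i)) (hKi (y i)), integral_comp_sub_div,
          integral_comp_sub_div, hKnorm, abs_of_pos hh]
        field_simp
        ring

variable {φ : ℝ → ℝ}

lemma abs_kdeL1Error_le (hK0 : ∀ u, 0 ≤ K u) (hK : Integrable K) (hKnorm : ∫ u, K u = 1)
    (hh : 0 < h) (hn : n ≠ 0) (hφ : AEStronglyMeasurable φ) (x : Fin n → ℝ) :
    |kdeL1Error K h φ x| ≤ (∫ t, |φ t|) + 1 := by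
  have := abs_integral_abs_sub_sub_integral_abs_sub_le (g := fun _ ↦ 0)
    (integrable_kde hK hh.ne' x) (integrable_zero _ _ _) hφ
  simp only [zero_sub, abs_neg, sub_zero] at this
  rw [integral_congr_ae (ae_of_all _ fun t => abs_of_nonneg (kde_nonneg hK0 hh.le x t)),
    integral_kde hK hKnorm hh hn] at this
  rw [kdeL1Error, abs_of_nonneg (integral_nonneg fun t => abs_nonneg _)]
  exact sub_le_iff_le_add'.mp (abs_le.mp this).2

lemma abs_kdeL1Error_sub_le (hK0 : ∀ u, 0 ≤ K u) (hK : Integrable K) (hKnorm : ∫ u, K u = 1)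
    (hh : 0 < h) (hφ : AEStronglyMeasurable φ) {i : Fin n} {x y : Fin n → ℝ}
    (hxy : ∀ j ≠ i, x j = y j) : |kdeL1Error K h φ x - kdeL1Error K h φ y| ≤ 2 / n :=
  (abs_integral_abs_sub_sub_integral_abs_sub_le (integrable_kde hK hh.ne' x)
    (integrable_kde hK hh.ne' y) hφ).trans (integral_abs_kde_sub_kde_le hK0 hK hKnorm hh hxy)

lemma measurable_kdeL1Error (hK : Measurable K) (hφ : Measurable φ) :
    Measurable (kdeL1Error (n := n) K h φ) := by
  have : Measurable fun p : (Fin n → ℝ) × ℝ ↦ |kde K h p.1 p.2 - φ p.2| := by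
    unfold kde; fun_prop
  exact this.stronglyMeasurable.integral_prod_right'.measurable

end KernelDensityEstimate

theorem variance_L1_error_kde_general
    {Ω : Type*} [MeasurableSpace Ω] (μ : Measure Ω) [IsProbabilityMeasure μ]
    {n : ℕ} (hn : 0 < n)
    (X : Fin n → Ω → ℝ) (hXmeas : ∀ i, Measurable (X i))
    (hXindep : iIndepFun X μ)
    (φ : ℝ → ℝ) (hφmeas : Measurable φ)
    (K : ℝ → ℝ) (hKmeas : Measurable K) (hKnonneg : ∀ u, 0 ≤ K u)
    (hKint : Integrable K MeasureTheory.volume)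
    (hKnorm : ∫ u, K u = 1)
    (h : ℝ) (hh : 0 < h)
    (φn : Ω → ℝ → ℝ)
    (hφn : φn = fun ω x => (1 / (n * h)) * ∑ i : Fin n, K ((x - X i ω) / h))
    (Z : Ω → ℝ) (hZ : Z = fun ω => ∫ x, |φn ω x - φ x|) :
    variance Z μ ≤ 1 / n := by
  subst hφn hZ
  have := fun i ↦ Measure.isProbabilityMeasure_map (μ := μ) (hXmeas i).aemeasurable
  have hsample : μ.map (fun ω i ↦ X i ω) = Measure.pi fun i ↦ μ.map (X i) :=
    hXindep.map_fun_eq_pi_map fun i ↦ (hXmeas i).aemeasurable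
  change Var[fun ω ↦ kdeL1Error K h φ fun i ↦ X i ω; μ] ≤ 1 / n
  calc _ = Var[kdeL1Error K h φ; Measure.pi fun i ↦ μ.map (X i)] := by
        rw [← hsample, variance_map (measurable_kdeL1Error hKmeas hφmeas).aemeasurable
          (measurable_pi_lambda _ hXmeas).aemeasurable]
        rfl
    _ ≤ ∑ _i : Fin n, (2 / n : ℝ) ^ 2 / 4 :=
      variance_pi_le_of_abs_sub_le _ (measurable_kdeL1Error hKmeas hφmeas)
        (abs_kdeL1Error_le hKnonneg hKint hKnorm hh hn.ne' hφmeas.aestronglyMeasurable) _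
        fun _ _ _ hxy ↦ abs_kdeL1Error_sub_le hKnonneg hKint hKnorm hh
          hφmeas.aestronglyMeasurable hxy
    _ = 1 / n := by
      rw [Finset.sum_const, Finset.card_univ, Fintype.card_fin, nsmul_eq_mul]
      field_simp
      ring

/-- **Variance bound for the L¹ error of kernel density estimation**: let `X 1, …, X n` be
i.i.d. real random variables with common probability density `φ`, let `K : ℝ → [0,∞)` be an
integrable kernel with `∫ K = 1`, and let `h > 0`.  The kernel density estimate is
`φₙ(x) = (1/(n h)) ∑ i, K ((x - X i)/h)` and the `L¹` error is
`Zₙ = ∫ |φₙ(x) - φ(x)| dx`.  Then `Var[Zₙ] ≤ 1/n`. -/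
theorem variance_L1_error_kde
    {Ω : Type*} [MeasurableSpace Ω] (μ : Measure Ω) [IsProbabilityMeasure μ]
    {n : ℕ} (hn : 0 < n)
    (X : Fin n → Ω → ℝ) (hXmeas : ∀ i, Measurable (X i))
    (hXindep : iIndepFun X μ)
    (φ : ℝ → ℝ) (hφmeas : Measurable φ) (hφnonneg : ∀ x, 0 ≤ φ x)
    (hlaw : ∀ i, Measure.map (X i) μ
      = MeasureTheory.volume.withDensity (fun x => ENNReal.ofReal (φ x)))
    (K : ℝ → ℝ) (hKmeas : Measurable K) (hKnonneg : ∀ u, 0 ≤ K u)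
    (hKint : Integrable K MeasureTheory.volume)
    (hKnorm : ∫ u, K u = 1)
    (h : ℝ) (hh : 0 < h)
    (φn : Ω → ℝ → ℝ)
    (hφn : φn = fun ω x => (1 / (n * h)) * ∑ i : Fin n, K ((x - X i ω) / h))
    (Z : Ω → ℝ) (hZ : Z = fun ω => ∫ x, |φn ω x - φ x|) :
    variance Z μ ≤ 1 / n :=
  variance_L1_error_kde_general μ hn X hXmeas hXindep φ hφmeas K hKmeas hKnonneg hKint hKnorm h hh
    φn hφn Z hZ
end

section
/- McDiarmid's martingale inequality with conditional variance: Let {Zₖ}_{k=0}^n be a real-valued martingale with increments ξₖ = Zₖ − Z_{k−1} satisfying, for constants d, σ > 0: |ξₖ| ≤ d almost surely, and E[ξₖ² | ℱ_{k−1}] ≤ σ² almost surely, for all k. Then for every α with 0 ≤ α ≤ d, P[|Zₙ − Z₀| ≥ αn] ≤ 2·exp(−n·d_b((δ+γ)/(1+γ) ‖ γ/(1+γ))), where γ = σ²/d², δ = α/d, and d_b(p‖q) = p·ln(p/q) + (1−p)·ln((1−p)/(1−q)) is the binary relative entropy (in nats). -/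
open MeasureTheory ProbabilityTheory Real

/-- The binary relative entropy (in nats) between `Bernoulli p` and `Bernoulli q`:
`d_b(p‖q) = p log(p/q) + (1-p) log((1-p)/(1-q))`. -/
noncomputable def binRelEntropy (p q : ℝ) : ℝ :=
  p * Real.log (p / q) + (1 - p) * Real.log ((1 - p) / (1 - q))

/-!
Bennett's argument: since `(exp u - 1 - u) / u ^ 2` is increasing, `exp (l * x)` lies below the
quadratic in `x` that is tangent to it at `x = -r` and meets it at `x = d`. Taking conditional
expectations, an increment with `ξ ≤ d`, conditional mean `0` and conditional variance at most
`d * r` has conditional moment generating function at most that of the centred two-point law on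
`{-r, d}`, namely `exp (-l r) (1 - q + q exp (l (d + r)))` with `q = r / (d + r)`. Iterating along
the filtration and applying Chernoff's bound turns the tail of `Z n - Z 0` into the Chernoff
bound of a binomial `B(n, q)` at level `n p`, `p = (α + r) / (d + r)`, whose optimal value is
`exp (-n d_b(p‖q))`; for `p = 1` the optimum is only approached as the Chernoff parameter tends
to infinity. With `r = σ² / d`, `p` and `q` are the parameters of the theorem.
-/

open Filter Topology

theorem sq_mul_integral_one_sub_mul_exp (u : ℝ) :
    u ^ 2 * ∫ t in (0:ℝ)..1, (1 - t) * exp (t * u) = exp u - 1 - u := by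
  rcases eq_or_ne u 0 with rfl | hu
  · simp
  have hderiv : ∀ t ∈ Set.uIcc (0:ℝ) 1,
      HasDerivAt (fun t => exp (t * u) * ((1 - t) / u + 1 / u ^ 2))
        ((1 - t) * exp (t * u)) t := by
    intro t _
    have h : HasDerivAt (fun t => exp (t * u) * ((1 - t) / u + 1 / u ^ 2))
        (exp (t * u) * u * ((1 - t) / u + 1 / u ^ 2) + exp (t * u) * (-1 / u)) t :=
      ((hasDerivAt_mul_const u).exp).mul
        (((hasDerivAt_id t).const_sub 1).div_const u |>.add_const _)
    convert h using 1
    field_simp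
    ring
  rw [intervalIntegral.integral_eq_sub_of_hasDerivAt hderiv
    (by apply Continuous.intervalIntegrable; fun_prop)]
  field_simp
  simp only [mul_zero, exp_zero]
  ring

theorem sq_mul_exp_sub_one_sub_le {u w : ℝ} (h : u ≤ w) :
    w ^ 2 * (exp u - 1 - u) ≤ u ^ 2 * (exp w - 1 - w) := by
  have hmono : ∫ t in (0:ℝ)..1, (1 - t) * exp (t * u) ≤
      ∫ t in (0:ℝ)..1, (1 - t) * exp (t * w) := by
    refine intervalIntegral.integral_mono_on zero_le_one
      (by apply Continuous.intervalIntegrable; fun_prop)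
      (by apply Continuous.intervalIntegrable; fun_prop) fun t ⟨ht0, ht1⟩ => ?_
    gcongr
  rw [← sq_mul_integral_one_sub_mul_exp u, ← sq_mul_integral_one_sub_mul_exp w]
  have := mul_le_mul_of_nonneg_left hmono (mul_nonneg (sq_nonneg u) (sq_nonneg w))
  linarith

theorem exp_mul_le_one_add_mul_add_sq {l y L : ℝ} (hl : 0 ≤ l) (hL : 0 < L) (hy : y ≤ L) :
    exp (l * y) ≤ 1 + l * y + (exp (l * L) - 1 - l * L) * (y / L) ^ 2 := by
  rcases hl.eq_or_lt with rfl | hl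
  · simp
  have h := sq_mul_exp_sub_one_sub_le (mul_le_mul_of_nonneg_left hy hl.le)
  have hsq : (y / L) ^ 2 = (l * y) ^ 2 / (l * L) ^ 2 := by field_simp
  rw [hsq, mul_div_assoc', ← sub_le_iff_le_add', le_div_iff₀ (by positivity)]
  linarith

noncomputable def bernoulliMGF (q t : ℝ) : ℝ := 1 - q + q * exp t

theorem bernoulliMGF_nonneg {q : ℝ} (hq0 : 0 ≤ q) (hq1 : q ≤ 1) (t : ℝ) :
    0 ≤ bernoulliMGF q t := by
  have := sub_nonneg.2 hq1
  unfold bernoulliMGF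
  positivity

theorem exp_neg_binRelEntropy_eq {p q : ℝ} (hp0 : 0 < p) (hp1 : p < 1) (hq0 : 0 < q)
    (hq1 : q < 1) :
    exp (-binRelEntropy p q) =
      exp (-(p * (log (p / q) - log ((1 - p) / (1 - q))))) *
        bernoulliMGF q (log (p / q) - log ((1 - p) / (1 - q))) := by
  have h1p : 0 < 1 - p := by linarith
  have h1q : 0 < 1 - q := by linarith
  have hmgf : bernoulliMGF q (log (p / q) - log ((1 - p) / (1 - q)))
      = exp (-log ((1 - p) / (1 - q))) := by
    rw [bernoulliMGF, exp_sub, exp_neg, exp_log (by positivity), exp_log (by positivity)]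
    field_simp
    ring
  rw [hmgf, ← exp_add, binRelEntropy]
  ring_nf

theorem tendsto_exp_neg_mul_bernoulliMGF_atTop {q : ℝ} (hq : 0 < q) :
    Tendsto (fun t => exp (-t) * bernoulliMGF q t) atTop (𝓝 (exp (-binRelEntropy 1 q))) := by
  have hD : exp (-binRelEntropy 1 q) = q := by
    simp [binRelEntropy, exp_log hq]
  have h : ∀ t, exp (-t) * bernoulliMGF q t = (1 - q) * exp (-t) + q := fun t => by
    rw [bernoulliMGF, exp_neg]
    field_simp
  simp_rw [h, hD]
  simpa using (tendsto_exp_neg_atTop_nhds_zero.const_mul (1 - q)).add_const q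

theorem exists_tendsto_exp_neg_binRelEntropy {p q : ℝ} (hq0 : 0 < q) (hq1 : q < 1)
    (hqp : q ≤ p) (hp1 : p ≤ 1) :
    ∃ t : ℕ → ℝ, (∀ j, 0 ≤ t j) ∧
      Tendsto (fun j => exp (-(p * t j)) * bernoulliMGF q (t j)) atTop
        (𝓝 (exp (-binRelEntropy p q))) := by
  rcases hp1.lt_or_eq with hp1 | rfl
  · refine ⟨fun _ => log (p / q) - log ((1 - p) / (1 - q)), fun _ => ?_, ?_⟩
    · have h1 : 0 ≤ log (p / q) := log_nonneg ((one_le_div hq0).2 hqp)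
      have h2 : log ((1 - p) / (1 - q)) ≤ 0 :=
        log_nonpos (div_nonneg (by linarith) (by linarith))
          ((div_le_one (by linarith)).2 (by linarith))
      linarith
    · rw [exp_neg_binRelEntropy_eq (by linarith) hp1 hq0 hq1]
      exact tendsto_const_nhds
  · refine ⟨fun j => j, fun j => j.cast_nonneg, ?_⟩
    simpa [Function.comp_def] using
      (tendsto_exp_neg_mul_bernoulliMGF_atTop hq0).comp tendsto_natCast_atTop_atTop

section ConditionalExpectation

variable {Ω : Type*} {m0 : MeasurableSpace Ω} {μ : Measure Ω} [IsFiniteMeasure μ]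
  {X : Ω → ℝ}

theorem integrable_exp_mul_of_le {l d : ℝ} (hX : AEStronglyMeasurable X μ) (hl : 0 ≤ l)
    (hXd : ∀ᵐ ω ∂μ, X ω ≤ d) :
    Integrable (fun ω => exp (l * X ω)) μ := by
  refine Integrable.of_bound (continuous_exp.comp_aestronglyMeasurable (hX.const_mul l))
    (exp (l * d)) ?_
  filter_upwards [hXd] with ω hω
  rw [norm_of_nonneg (exp_pos _).le]
  gcongr

variable {m : MeasurableSpace Ω}

theorem condExp_le_of_le_quadratic (hm : m ≤ m0) {f : Ω → ℝ} (hf : Integrable f μ)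
    (hX : Integrable X μ) (hX2 : Integrable (fun ω => X ω ^ 2) μ) (hX0 : μ[X|m] =ᵐ[μ] 0)
    {a b c v : ℝ} (hc : 0 ≤ c) (hvar : ∀ᵐ ω ∂μ, μ[fun ω => X ω ^ 2|m] ω ≤ v)
    (hfX : ∀ᵐ ω ∂μ, f ω ≤ a + b * X ω + c * X ω ^ 2) :
    ∀ᵐ ω ∂μ, μ[f|m] ω ≤ a + c * v := by
  have hbX : Integrable (fun ω => a + b * X ω) μ := (integrable_const a).add (hX.const_mul b)
  have hsum : μ[fun ω => a + b * X ω + c * X ω ^ 2|m] =ᵐ[μ]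
      μ[fun ω => a + b * X ω|m] + μ[fun ω => c * X ω ^ 2|m] :=
    condExp_add hbX (hX2.const_mul c) m
  have hlin : μ[fun ω => a + b * X ω|m] =ᵐ[μ] μ[fun _ => a|m] + μ[fun ω => b * X ω|m] :=
    condExp_add (integrable_const a) (hX.const_mul b) m
  have hmono : μ[f|m] ≤ᵐ[μ] μ[fun ω => a + b * X ω + c * X ω ^ 2|m] :=
    condExp_mono hf (hbX.add (hX2.const_mul c)) hfX
  filter_upwards [hmono, hsum, hlin, condExp_smul b X m, condExp_smul c (fun ω => X ω ^ 2) m,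
    hX0, hvar] with ω hmonoω hsumω hlinω hbω hcω hX0ω hvarω
  simp only [Pi.add_apply, Pi.smul_apply, Pi.zero_apply, smul_eq_mul, condExp_const hm]
    at hsumω hlinω hbω hcω hX0ω
  change μ[fun ω => b * X ω|m] ω = b * μ[X|m] ω at hbω
  change μ[fun ω => c * X ω ^ 2|m] ω = c * μ[fun ω => X ω ^ 2|m] ω at hcω
  rw [hsumω, hlinω, hbω, hcω, hX0ω] at hmonoω
  nlinarith

theorem condExp_exp_mul_le_bernoulliMGF (hm : m ≤ m0) (hX : Integrable X μ)
    (hX2 : Integrable (fun ω => X ω ^ 2) μ) (hX0 : μ[X|m] =ᵐ[μ] 0) {d r l : ℝ} (hd : 0 < d)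
    (hr : 0 ≤ r) (hl : 0 ≤ l) (hXd : ∀ᵐ ω ∂μ, X ω ≤ d)
    (hvar : ∀ᵐ ω ∂μ, μ[fun ω => X ω ^ 2|m] ω ≤ d * r) :
    ∀ᵐ ω ∂μ, μ[fun ω => exp (l * X ω)|m] ω ≤
      exp (-(l * r)) * bernoulliMGF (r / (d + r)) (l * (d + r)) := by
  have hdr : 0 < d + r := by positivity
  obtain ⟨K, hK_def⟩ : ∃ K, K = exp (l * (d + r)) - 1 - l * (d + r) := ⟨_, rfl⟩
  have hK : 0 ≤ K := by linarith [add_one_le_exp (l * (d + r))]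
  have hmajorant : ∀ᵐ ω ∂μ, exp (l * X ω) ≤
      exp (-(l * r)) * (1 + l * r + K * (r / (d + r)) ^ 2)
        + exp (-(l * r)) * (l + 2 * K * r / (d + r) ^ 2) * X ω
        + exp (-(l * r)) * K / (d + r) ^ 2 * X ω ^ 2 := by
    filter_upwards [hXd] with ω hω
    calc exp (l * X ω) = exp (-(l * r)) * exp (l * (X ω + r)) := by rw [← exp_add]; ring_nf
      _ ≤ exp (-(l * r)) * (1 + l * (X ω + r) + K * ((X ω + r) / (d + r)) ^ 2) := by
        rw [hK_def]
        gcongr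
        exact exp_mul_le_one_add_mul_add_sq hl hdr (by linarith)
      _ = _ := by field_simp; ring
  filter_upwards [condExp_le_of_le_quadratic hm (integrable_exp_mul_of_le hX.aestronglyMeasurable
    hl hXd) hX hX2 hX0 (by positivity) hvar hmajorant] with ω hω
  refine hω.trans_eq ?_
  rw [bernoulliMGF, hK_def]
  field_simp
  ring

theorem integral_mul_le_of_condExp_le (hm : m ≤ m0) {f g : Ω → ℝ} {M : ℝ}
    (hf : StronglyMeasurable[m] f) (hf0 : 0 ≤ᵐ[μ] f) (hfi : Integrable f μ)
    (hg : Integrable g μ) (hfg : Integrable (f * g) μ) (hgM : ∀ᵐ ω ∂μ, μ[g|m] ω ≤ M) :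
    ∫ ω, f ω * g ω ∂μ ≤ M * ∫ ω, f ω ∂μ := by
  have hpull := condExp_mul_of_stronglyMeasurable_left hf hfg hg
  calc ∫ ω, f ω * g ω ∂μ = ∫ ω, μ[f * g|m] ω ∂μ := (integral_condExp hm).symm
    _ = ∫ ω, f ω * μ[g|m] ω ∂μ := integral_congr_ae hpull
    _ ≤ ∫ ω, M * f ω ∂μ := by
      refine integral_mono_ae (integrable_condExp.congr hpull) (hfi.const_mul M) ?_
      filter_upwards [hf0, hgM] with ω hf0ω hgMω
      simpa only [mul_comm M] using mul_le_mul_of_nonneg_left hgMω hf0ω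
    _ = M * ∫ ω, f ω ∂μ := integral_const_mul M f

end ConditionalExpectation

section Martingale

variable {Ω : Type*} {m0 : MeasurableSpace Ω} {μ : Measure Ω} {ℱ : Filtration ℕ m0}
  {Z : ℕ → Ω → ℝ} {n : ℕ} {d r l : ℝ}

theorem exp_mul_sub_zero_succ (l : ℝ) (Z : ℕ → Ω → ℝ) (n : ℕ) :
    (fun ω => exp (l * (Z (n + 1) ω - Z 0 ω))) =
      (fun ω => exp (l * (Z n ω - Z 0 ω))) * fun ω => exp (l * (Z (n + 1) ω - Z n ω)) := by
  ext ω
  rw [Pi.mul_apply, ← exp_add]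
  ring_nf

theorem integrable_exp_mul_sub_zero [IsFiniteMeasure μ]
    (hZ : ∀ k, AEStronglyMeasurable (Z k) μ) (hl : 0 ≤ l)
    (hξd : ∀ k < n, ∀ᵐ ω ∂μ, Z (k + 1) ω - Z k ω ≤ d) :
    Integrable (fun ω => exp (l * (Z n ω - Z 0 ω))) μ := by
  induction n with
  | zero => simp
  | succ n ih =>
    rw [exp_mul_sub_zero_succ]
    refine (ih fun k hk => hξd k (by omega)).mul_bdd (c := exp (l * d))
      (by have := (hZ (n + 1)).sub (hZ n); fun_prop) ?_
    filter_upwards [hξd n n.lt_succ_self] with ω hω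
    rw [norm_of_nonneg (exp_pos _).le]
    gcongr

theorem MeasureTheory.Martingale.condExp_succ_sub_ae_eq_zero [IsFiniteMeasure μ]
    (hZ : Martingale Z ℱ μ) (k : ℕ) : μ[Z (k + 1) - Z k|ℱ k] =ᵐ[μ] 0 := by
  filter_upwards [condExp_sub (hZ.integrable (k + 1)) (hZ.integrable k) (ℱ k),
    hZ.condExp_ae_eq k.le_succ, hZ.condExp_ae_eq (le_refl k)] with ω hsub hsucc hk
  simp [hsub, hsucc, hk]

theorem MeasureTheory.Martingale.integral_exp_mul_sub_zero_le [IsProbabilityMeasure μ]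
    (hZ : Martingale Z ℱ μ) (hd : 0 < d) (hr : 0 ≤ r) (hl : 0 ≤ l)
    (hξd : ∀ k < n, ∀ᵐ ω ∂μ, Z (k + 1) ω - Z k ω ≤ d)
    (hξ2 : ∀ k < n, Integrable (fun ω => (Z (k + 1) ω - Z k ω) ^ 2) μ)
    (hvar : ∀ k < n, ∀ᵐ ω ∂μ,
      μ[fun ω => (Z (k + 1) ω - Z k ω) ^ 2|ℱ k] ω ≤ d * r) :
    ∫ ω, exp (l * (Z n ω - Z 0 ω)) ∂μ ≤
      (exp (-(l * r)) * bernoulliMGF (r / (d + r)) (l * (d + r))) ^ n := by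
  have hZm k := (hZ.integrable k).aestronglyMeasurable
  induction n with
  | zero => simp
  | succ n ih =>
    set B := exp (-(l * r)) * bernoulliMGF (r / (d + r)) (l * (d + r))
    have hB : 0 ≤ B := mul_nonneg (exp_pos _).le (bernoulliMGF_nonneg (by positivity)
      ((div_le_one (by positivity)).2 (by linarith)) _)
    have hf : StronglyMeasurable[ℱ n] fun ω => exp (l * (Z n ω - Z 0 ω)) :=
      continuous_exp.comp_stronglyMeasurable (((hZ.stronglyAdapted n).sub
        ((hZ.stronglyAdapted 0).mono (ℱ.mono n.zero_le))).const_mul l)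
    have hξ := (hZ.integrable (n + 1)).sub (hZ.integrable n)
    have hfg := integrable_exp_mul_sub_zero hZm hl hξd
    rw [exp_mul_sub_zero_succ] at hfg ⊢
    calc ∫ ω, exp (l * (Z n ω - Z 0 ω)) * exp (l * (Z (n + 1) ω - Z n ω)) ∂μ
        ≤ B * ∫ ω, exp (l * (Z n ω - Z 0 ω)) ∂μ :=
          integral_mul_le_of_condExp_le (ℱ.le n) hf (ae_of_all _ fun ω => (exp_pos _).le)
            (integrable_exp_mul_sub_zero hZm hl fun k hk => hξd k (by omega))
            (integrable_exp_mul_of_le hξ.aestronglyMeasurable hl (hξd n n.lt_succ_self)) hfg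
            (condExp_exp_mul_le_bernoulliMGF (ℱ.le n) hξ (hξ2 n n.lt_succ_self)
              (hZ.condExp_succ_sub_ae_eq_zero n) hd hr hl (hξd n n.lt_succ_self)
              (hvar n n.lt_succ_self))
      _ ≤ B * B ^ n := by
          gcongr
          exact ih (fun k hk => hξd k (by omega)) (fun k hk => hξ2 k (by omega))
            (fun k hk => hvar k (by omega))
      _ = B ^ (n + 1) := by ring

theorem MeasureTheory.Martingale.measure_le_sub_zero_le [IsProbabilityMeasure μ]
    (hZ : Martingale Z ℱ μ) (hd : 0 < d) (hr : 0 ≤ r)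
    (hξd : ∀ k < n, ∀ᵐ ω ∂μ, Z (k + 1) ω - Z k ω ≤ d)
    (hξ2 : ∀ k < n, Integrable (fun ω => (Z (k + 1) ω - Z k ω) ^ 2) μ)
    (hvar : ∀ k < n, ∀ᵐ ω ∂μ,
      μ[fun ω => (Z (k + 1) ω - Z k ω) ^ 2|ℱ k] ω ≤ d * r)
    (α : ℝ) {t : ℝ} (ht : 0 ≤ t) :
    μ {ω | α * n ≤ Z n ω - Z 0 ω} ≤
      ENNReal.ofReal ((exp (-((α + r) / (d + r) * t)) * bernoulliMGF (r / (d + r)) t) ^ n) := by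
  have hdr : 0 < d + r := by positivity
  set l := t / (d + r) with hl_def
  have hl : 0 ≤ l := by positivity
  have ht_eq : t = l * (d + r) := by rw [hl_def, div_mul_cancel₀ _ hdr.ne']
  have hchernoff := measure_ge_le_exp_mul_mgf (X := fun ω => Z n ω - Z 0 ω) (α * n) hl
    (integrable_exp_mul_sub_zero (fun k => (hZ.integrable k).aestronglyMeasurable) hl hξd)
  have hmgf := hZ.integral_exp_mul_sub_zero_le hd hr hl hξd hξ2 hvar
  have hexp : exp (-l * (α * n)) * (exp (-(l * r)) * bernoulliMGF (r / (d + r)) (l * (d + r))) ^ n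
      = (exp (-((α + r) / (d + r) * t)) * bernoulliMGF (r / (d + r)) t) ^ n := by
    rw [ht_eq, show -l * (α * n) = n * -(l * α) by ring,
      exp_nat_mul, ← mul_pow, ← mul_assoc, ← exp_add]
    congr 3
    field_simp
    ring
  rw [← ofReal_measureReal]
  exact ENNReal.ofReal_le_ofReal
    ((hchernoff.trans (mul_le_mul_of_nonneg_left hmgf (exp_pos _).le)).trans_eq hexp)

theorem MeasureTheory.Martingale.measure_le_abs_sub_zero_le [IsProbabilityMeasure μ]
    (hZ : Martingale Z ℱ μ) (hd : 0 < d) (hr : 0 ≤ r)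
    (hξ : ∀ k < n, ∀ᵐ ω ∂μ, |Z (k + 1) ω - Z k ω| ≤ d)
    (hvar : ∀ k < n, ∀ᵐ ω ∂μ,
      μ[fun ω => (Z (k + 1) ω - Z k ω) ^ 2|ℱ k] ω ≤ d * r)
    (α : ℝ) {t : ℝ} (ht : 0 ≤ t) :
    μ {ω | α * n ≤ |Z n ω - Z 0 ω|} ≤
      ENNReal.ofReal
        (2 * (exp (-((α + r) / (d + r) * t)) * bernoulliMGF (r / (d + r)) t) ^ n) := by
  have hξ2 : ∀ k < n, Integrable (fun ω => (Z (k + 1) ω - Z k ω) ^ 2) μ := fun k hk => by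
    refine Integrable.of_bound
      (((hZ.integrable (k + 1)).sub (hZ.integrable k)).aestronglyMeasurable.pow 2) (d ^ 2) ?_
    filter_upwards [hξ k hk] with ω hω
    rw [norm_of_nonneg (sq_nonneg _), ← sq_abs]
    gcongr
  have hsq : ∀ k ω, ((-Z) (k + 1) ω - (-Z) k ω) ^ 2 = (Z (k + 1) ω - Z k ω) ^ 2 := by
    intro k ω
    simp only [Pi.neg_apply]
    ring
  have hup := hZ.measure_le_sub_zero_le hd hr
    (fun k hk => (hξ k hk).mono fun ω hω => (abs_le.1 hω).2) hξ2 hvar α ht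
  have hdown := hZ.neg.measure_le_sub_zero_le hd hr
    (fun k hk => (hξ k hk).mono fun ω hω => by simp only [Pi.neg_apply]; linarith [abs_le.1 hω])
    (by simpa only [hsq] using hξ2) (by simpa only [hsq] using hvar) α ht
  calc μ {ω | α * n ≤ |Z n ω - Z 0 ω|}
      ≤ μ ({ω | α * n ≤ Z n ω - Z 0 ω} ∪ {ω | α * n ≤ (-Z) n ω - (-Z) 0 ω}) := by
        refine measure_mono fun ω hω => ?_
        simp only [Set.mem_ofPred_eq, Set.mem_union, Pi.neg_apply] at hω ⊢
        rcases le_abs'.1 hω with h | h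
        · right; linarith
        · left; exact h
    _ ≤ μ {ω | α * n ≤ Z n ω - Z 0 ω} + μ {ω | α * n ≤ (-Z) n ω - (-Z) 0 ω} :=
        measure_union_le _ _
    _ ≤ _ := by
        have hB := bernoulliMGF_nonneg (q := r / (d + r)) (t := t) (div_nonneg hr (by positivity))
          ((div_le_one (by positivity)).2 (by linarith))
        rw [two_mul, ENNReal.ofReal_add (by positivity) (by positivity)]
        exact add_le_add hup hdown

end Martingale

/-- **McDiarmid's martingale inequality with conditional variance**: let `Z 0, …, Z n` be a
real-valued martingale with respect to a filtration `ℱ` whose increments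
`ξ k = Z k - Z (k-1)` satisfy, for constants `d, σ > 0`: `|ξ k| ≤ d` a.s. and
`E[ξ k ² | ℱ (k-1)] ≤ σ²` a.s., for all `k ∈ {1, …, n}`.  Then for every `α ∈ [0, d]`,
`P[|Z n - Z 0| ≥ α n] ≤ 2 exp (-n d_b((δ+γ)/(1+γ) ‖ γ/(1+γ)))`, where `γ = σ²/d²` and
`δ = α/d`. -/
theorem mcdiarmid_martingale_conditional_variance
    {Ω : Type*} {m0 : MeasurableSpace Ω} (μ : Measure Ω) [IsProbabilityMeasure μ]
    (ℱ : Filtration ℕ m0) (Z : ℕ → Ω → ℝ) (hmart : Martingale Z ℱ μ)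
    (n : ℕ) (d σ : ℝ) (hd : 0 < d) (hσ : 0 < σ)
    (hbdd : ∀ k, 1 ≤ k → k ≤ n → ∀ᵐ ω ∂μ, |Z k ω - Z (k - 1) ω| ≤ d)
    (hvar : ∀ k, 1 ≤ k → k ≤ n →
      ∀ᵐ ω ∂μ, (μ[(fun ω' => (Z k ω' - Z (k - 1) ω') ^ 2) | ℱ (k - 1)]) ω ≤ σ ^ 2)
    (α : ℝ) (hα0 : 0 ≤ α) (hαd : α ≤ d) :
    μ {ω | α * n ≤ |Z n ω - Z 0 ω|}
      ≤ ENNReal.ofReal (2 * Real.exp (-(n *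
          binRelEntropy ((α / d + σ ^ 2 / d ^ 2) / (1 + σ ^ 2 / d ^ 2))
            ((σ ^ 2 / d ^ 2) / (1 + σ ^ 2 / d ^ 2))))) := by
  have hr : 0 < σ ^ 2 / d := by positivity
  have hp : (α / d + σ ^ 2 / d ^ 2) / (1 + σ ^ 2 / d ^ 2) =
      (α + σ ^ 2 / d) / (d + σ ^ 2 / d) := by
    field_simp
  have hq : (σ ^ 2 / d ^ 2) / (1 + σ ^ 2 / d ^ 2) = (σ ^ 2 / d) / (d + σ ^ 2 / d) := by
    field_simp
  obtain ⟨t, ht, hlim⟩ := exists_tendsto_exp_neg_binRelEntropy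
    (p := (α + σ ^ 2 / d) / (d + σ ^ 2 / d)) (q := (σ ^ 2 / d) / (d + σ ^ 2 / d))
    (by positivity) ((div_lt_one (by positivity)).2 (by linarith))
    (by gcongr; linarith) ((div_le_one (by positivity)).2 (by linarith))
  have hξ : ∀ k < n, ∀ᵐ ω ∂μ, |Z (k + 1) ω - Z k ω| ≤ d := fun k hk => by
    simpa using hbdd (k + 1) (by omega) hk
  have hvar' : ∀ k < n, ∀ᵐ ω ∂μ,
      μ[fun ω => (Z (k + 1) ω - Z k ω) ^ 2|ℱ k] ω ≤ d * (σ ^ 2 / d) := fun k hk => by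
    rw [mul_div_cancel₀ _ hd.ne']
    simpa using hvar (k + 1) (by omega) hk
  rw [hp, hq, ← mul_neg, exp_nat_mul]
  exact ge_of_tendsto' ((ENNReal.continuous_ofReal.tendsto _).comp ((hlim.pow n).const_mul 2))
    fun j => hmart.measure_le_abs_sub_zero_le hd hr.le hξ hvar' α (ht j)
end

section
/- McDiarmid's (bounded differences) inequality: Let X₁,…,Xₙ be independent random variables and let f satisfy the bounded difference property with constants c₁,…,cₙ ≥ 0, i.e., for every i and all fixed values of the other coordinates, the oscillation of f in its i-th argument is at most cᵢ. Then for every t > 0, P[|f(X₁,…,Xₙ) − E[f(X₁,…,Xₙ)]| ≥ t] ≤ 2·exp(−2t²/Σ_{k=1}^n cₖ²). -/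
open MeasureTheory ProbabilityTheory Real

universe u

section McdiarmidAux


lemma mcd_phi_pos {p : ℝ} (hp0 : 0 ≤ p) (hp1 : p ≤ 1) (h : ℝ) :
    0 < 1 - p + p * exp h := by
  rcases eq_or_lt_of_le hp0 with rfl | hp
  · simp
  · have : 0 < p * exp h := mul_pos hp (exp_pos h)
    linarith

lemma mcd_L_le {p : ℝ} (hp0 : 0 ≤ p) (hp1 : p ≤ 1) (h : ℝ) :
    -p * h + Real.log (1 - p + p * Real.exp h) ≤ h ^ 2 / 8 := by
  set φ : ℝ → ℝ := fun s => 1 - p + p * exp s with hφdef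
  have hφpos : ∀ s, 0 < φ s := fun s => mcd_phi_pos hp0 hp1 s
  set ψ : ℝ → ℝ := fun s => p * exp s / φ s with hψdef
  have hφ' : ∀ s, HasDerivAt φ (p * exp s) s := fun s => by
    exact ((Real.hasDerivAt_exp s).const_mul p).const_add (1 - p)
  have hψ0 : ψ 0 = p := by simp [hψdef, hφdef]
  have hψ01 : ∀ s, 0 ≤ ψ s ∧ ψ s ≤ 1 := by
    intro s
    constructor
    · exact div_nonneg (mul_nonneg hp0 (exp_pos s).le) (hφpos s).le
    · rw [div_le_one (hφpos s)]
      simp only [hφdef]; linarith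
  have hψ' : ∀ s, HasDerivAt ψ (ψ s * (1 - ψ s)) s := by
    intro s
    have := (((Real.hasDerivAt_exp s).const_mul p)).div (hφ' s) (hφpos s).ne'
    refine this.congr_deriv ?_
    rw [hψdef]
    simp only []
    rw [one_sub_div (hφpos s).ne', div_mul_div_comm, ← sq]
    ring_nf
  have hψlip : ∀ s, |ψ s - p| ≤ |s| / 4 := by
    intro s
    have hb : ∀ x ∈ (Set.univ : Set ℝ), ‖ψ x * (1 - ψ x)‖ ≤ 1/4 := by
      intro x _
      obtain ⟨h0, h1⟩ := hψ01 x
      rw [Real.norm_eq_abs, abs_le]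
      constructor <;> nlinarith [sq_nonneg (ψ x - 1/2)]
    have := Convex.norm_image_sub_le_of_norm_hasDerivWithin_le
      (fun x _ => (hψ' x).hasDerivWithinAt) hb convex_univ (Set.mem_univ 0) (Set.mem_univ s)
    rw [← hψ0]
    simpa [Real.norm_eq_abs, abs_sub_comm, div_eq_mul_inv, mul_comm] using this
  set L : ℝ → ℝ := fun s => -p * s + Real.log (φ s) with hLdef
  have hL' : ∀ s, HasDerivAt L (ψ s - p) s := by
    intro s
    have h1 : HasDerivAt (fun s : ℝ => -p * s) (-p) s := by
      simpa using (hasDerivAt_id s).const_mul (-p)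
    have h2 : HasDerivAt (fun s => Real.log (φ s)) (p * exp s / φ s) (s) :=
      (hφ' s).log (hφpos s).ne'
    have := h1.add h2
    refine this.congr_deriv ?_
    simp [hψdef]; ring
  set D : ℝ → ℝ := fun s => s ^ 2 / 8 - L s with hDdef
  have hD' : ∀ s, HasDerivAt D (s / 4 - (ψ s - p)) s := by
    intro s
    have h1 : HasDerivAt (fun s : ℝ => s ^ 2 / 8) (s / 4) s := by
      have := (hasDerivAt_pow 2 s).div_const 8
      exact this.congr_deriv (by norm_num; ring)
    exact h1.sub (hL' s)
  have hD0 : D 0 = 0 := by simp [hDdef, hLdef, hφdef]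
  have key : 0 ≤ D h := by
    rcases le_total 0 h with hh | hh
    · have hmono : MonotoneOn D (Set.Icc 0 h) := by
        apply monotoneOn_of_deriv_nonneg (convex_Icc 0 h)
        · exact fun x _ => (hD' x).differentiableAt.continuousAt.continuousWithinAt
        · exact fun x _ => ((hD' x).differentiableAt.differentiableWithinAt)
        · intro x hx
          rw [(hD' x).deriv]
          have hx0 : 0 ≤ x := (interior_subset hx).1
          have := hψlip x
          rw [abs_of_nonneg hx0] at this
          have := abs_le.1 this
          linarith [this.2]
      have := hmono (Set.left_mem_Icc.2 hh) (Set.right_mem_Icc.2 hh) hh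
      linarith [hD0 ▸ this]
    · have hmono : AntitoneOn D (Set.Icc h 0) := by
        apply antitoneOn_of_deriv_nonpos (convex_Icc h 0)
        · exact fun x _ => (hD' x).differentiableAt.continuousAt.continuousWithinAt
        · exact fun x _ => ((hD' x).differentiableAt.differentiableWithinAt)
        · intro x hx
          rw [(hD' x).deriv]
          have hx0 : x ≤ 0 := (interior_subset hx).2
          have := hψlip x
          rw [abs_of_nonpos hx0] at this
          have := abs_le.1 this
          linarith [this.1]
      have := hmono (Set.left_mem_Icc.2 hh) (Set.right_mem_Icc.2 hh) hh
      linarith [hD0 ▸ this]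
  have : L h ≤ h ^ 2 / 8 := by simpa [hDdef, sub_nonneg] using key
  simpa [hLdef, hφdef] using this


lemma mcd_key_ineq {a b l : ℝ} (ha : a ≤ 0) (hb : 0 ≤ b) (hab : a < b) :
    b * exp (l * a) - a * exp (l * b) ≤ (b - a) * exp (l ^ 2 * (b - a) ^ 2 / 8) := by
  have hba : 0 < b - a := by linarith
  set p : ℝ := -a / (b - a) with hpdef
  have hp0 : 0 ≤ p := div_nonneg (by linarith) hba.le
  have hp1 : p ≤ 1 := by rw [div_le_one hba]; linarith
  set h : ℝ := l * (b - a) with hhdef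
  have hla : l * a = -p * h := by
    rw [hpdef, hhdef]
    field_simp
  have key := mcd_L_le hp0 hp1 h
  have hφpos : 0 < 1 - p + p * exp h := by
    rcases eq_or_lt_of_le hp0 with hp | hp
    · rw [← hp]; norm_num
    · have : 0 < p * exp h := mul_pos hp (exp_pos h)
      linarith
  -- LHS = (b - a) * exp (-p*h) * (1 - p + p * exp h)
  have hLHS : b * exp (l * a) - a * exp (l * b) =
      (b - a) * (exp (-p * h) * (1 - p + p * exp h)) := by
    have h1 : (b - a) * (1 - p) = b := by
      rw [hpdef]; field_simp; ring
    have h2 : (b - a) * p = -a := by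
      rw [hpdef]; field_simp
    have h3 : exp (-p * h) * exp h = exp (l * b) := by
      rw [← exp_add, hla.symm]
      congr 1
      rw [hhdef]; ring
    calc b * exp (l * a) - a * exp (l * b)
        = (b - a) * (1 - p) * exp (-p * h) + (b - a) * p * (exp (-p * h) * exp h) := by
          rw [h1, h2, h3, hla]; ring
      _ = (b - a) * (exp (-p * h) * (1 - p + p * exp h)) := by ring
  rw [hLHS]
  have h8 : l ^ 2 * (b - a) ^ 2 / 8 = h ^ 2 / 8 := by rw [hhdef]; ring
  rw [h8]
  apply mul_le_mul_of_nonneg_left _ hba.le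
  have : exp (-p * h) * (1 - p + p * exp h) = exp (-p * h + Real.log (1 - p + p * exp h)) := by
    rw [exp_add, exp_log hφpos]
  rw [this]
  exact exp_le_exp.2 key

variable {α : Type*} [MeasurableSpace α] {ν : Measure α} [IsProbabilityMeasure ν]

lemma mcd_hoeffding0 {g : α → ℝ} (hg : Measurable g) {a b : ℝ}
    (hga : ∀ y, a ≤ g y) (hgb : ∀ y, g y ≤ b) (hmean : ∫ y, g y ∂ν = 0) (l : ℝ) :
    ∫ y, exp (l * g y) ∂ν ≤ exp (l ^ 2 * (b - a) ^ 2 / 8) := by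
  have hne : Nonempty α := by
    by_contra hemp
    rw [not_nonempty_iff] at hemp
    have h1 : ν Set.univ = 1 := measure_univ
    simp [Set.univ_eq_empty_iff.2 hemp] at h1
  have hgint : Integrable g ν := by
    refine (integrable_const (max |a| |b|)).mono' hg.aestronglyMeasurable ?_
    filter_upwards with y
    rw [Real.norm_eq_abs, abs_le]
    constructor
    · calc -(max |a| |b|) ≤ -|a| := by simp
        _ ≤ a := neg_abs_le a
        _ ≤ g y := hga y
    · calc g y ≤ b := hgb y
        _ ≤ |b| := le_abs_self b
        _ ≤ max |a| |b| := le_max_right _ _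
  have ha0 : a ≤ 0 := by
    have := integral_mono (integrable_const a) hgint (fun y => hga y)
    simpa [hmean] using this
  have hb0 : 0 ≤ b := by
    have := integral_mono hgint (integrable_const b) (fun y => hgb y)
    simpa [hmean] using this
  rcases eq_or_lt_of_le (ha0.trans hb0) with hab | hab
  · -- a = 0 = b, g ≡ 0
    have hg0 : ∀ y, g y = 0 := fun y =>
      le_antisymm ((hgb y).trans (by linarith)) (by linarith [hga y])
    simp only [hg0, mul_zero, exp_zero]
    rw [integral_const, probReal_univ]
    simp only [ENNReal.toReal_one, smul_eq_mul, one_mul]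
    rw [Real.one_le_exp_iff]
    positivity
  · have hexpint : Integrable (fun y => exp (l * g y)) ν := by
      refine (integrable_const (exp (|l| * (|a| + |b|)))).mono'
        (hg.const_mul l).exp.aestronglyMeasurable ?_
      filter_upwards with y
      rw [Real.norm_eq_abs, abs_of_pos (exp_pos _), exp_le_exp]
      have h1 : |g y| ≤ |a| + |b| := by
        rw [abs_le]; constructor
        · linarith [neg_abs_le a, hga y, abs_nonneg b]
        · linarith [le_abs_self b, hgb y, abs_nonneg a]
      calc l * g y ≤ |l * g y| := le_abs_self _
        _ = |l| * |g y| := abs_mul _ _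
        _ ≤ |l| * (|a| + |b|) := by
            exact mul_le_mul_of_nonneg_left h1 (abs_nonneg l)
    have hpt : ∀ y, exp (l * g y) ≤
        (exp (l * a) / (b - a)) * (b - g y) + (exp (l * b) / (b - a)) * (g y - a) := by
      intro y
      have hba : 0 < b - a := by linarith
      have hs : (0:ℝ) ≤ (b - g y) / (b - a) := div_nonneg (by linarith [hgb y]) hba.le
      have ht : (0:ℝ) ≤ (g y - a) / (b - a) := div_nonneg (by linarith [hga y]) hba.le
      have hsum : (b - g y) / (b - a) + (g y - a) / (b - a) = 1 := by
        field_simp; ring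
      have := convexOn_exp.2 (Set.mem_univ (l * a)) (Set.mem_univ (l * b)) hs ht hsum
      have harg : ((b - g y) / (b - a)) • (l * a) + ((g y - a) / (b - a)) • (l * b) = l * g y := by
        simp only [smul_eq_mul]
        field_simp
        ring
      rw [harg] at this
      calc exp (l * g y) ≤ (b - g y) / (b - a) * exp (l * a) + (g y - a) / (b - a) * exp (l * b) :=
            by simpa [smul_eq_mul] using this
        _ = (exp (l * a) / (b - a)) * (b - g y) + (exp (l * b) / (b - a)) * (g y - a) := by
            ring
    have hint1 : Integrable (fun y => (exp (l * a) / (b - a)) * (b - g y)) ν :=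
      ((integrable_const b).sub hgint).const_mul _
    have hint2 : Integrable (fun y => (exp (l * b) / (b - a)) * (g y - a)) ν :=
      (hgint.sub (integrable_const a)).const_mul _
    calc ∫ y, exp (l * g y) ∂ν
        ≤ ∫ y, ((exp (l * a) / (b - a)) * (b - g y) + (exp (l * b) / (b - a)) * (g y - a)) ∂ν :=
          integral_mono hexpint (hint1.add hint2) hpt
      _ = (exp (l * a) / (b - a)) * b + (exp (l * b) / (b - a)) * (-a) := by
          rw [integral_add hint1 hint2, integral_const_mul, integral_const_mul,
            integral_sub (integrable_const b) hgint, integral_sub hgint (integrable_const a),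
            hmean, integral_const]
          simp
      _ = (b * exp (l * a) - a * exp (l * b)) / (b - a) := by ring
      _ ≤ exp (l ^ 2 * (b - a) ^ 2 / 8) := by
          rw [div_le_iff₀ (by linarith : (0:ℝ) < b - a)]
          calc b * exp (l * a) - a * exp (l * b)
              ≤ (b - a) * exp (l ^ 2 * (b - a) ^ 2 / 8) := mcd_key_ineq ha0 hb0 hab
            _ = exp (l ^ 2 * (b - a) ^ 2 / 8) * (b - a) := by ring

lemma mcd_hoeffding {g : α → ℝ} (hg : Measurable g) {c : ℝ}
    (hosc : ∀ y y', g y - g y' ≤ c) (l : ℝ) :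
    ∫ y, exp (l * g y) ∂ν ≤ exp (l * (∫ y, g y ∂ν) + l ^ 2 * c ^ 2 / 8) := by
  have hne : Nonempty α := by
    by_contra hemp
    rw [not_nonempty_iff] at hemp
    have h1 : ν Set.univ = 1 := measure_univ
    simp [Set.univ_eq_empty_iff.2 hemp] at h1
  obtain ⟨y₀⟩ := hne
  have hc0 : 0 ≤ c := by simpa using hosc y₀ y₀
  have hbdd : BddBelow (Set.range g) := ⟨g y₀ - c, by
    rintro z ⟨y, rfl⟩; linarith [hosc y₀ y]⟩
  set a : ℝ := sInf (Set.range g) with hadef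
  have hga : ∀ y, a ≤ g y := fun y => csInf_le hbdd ⟨y, rfl⟩
  have hgb : ∀ y, g y ≤ a + c := by
    intro y
    have : g y - c ≤ a := le_csInf ⟨g y₀, y₀, rfl⟩ (by
      rintro z ⟨y', rfl⟩; linarith [hosc y y'])
    linarith
  set m : ℝ := ∫ y, g y ∂ν with hmdef
  have hgint : Integrable g ν := by
    refine (integrable_const (max |a| |a + c|)).mono' hg.aestronglyMeasurable ?_
    filter_upwards with y
    rw [Real.norm_eq_abs, abs_le]
    constructor
    · linarith [neg_abs_le a, hga y, le_max_left |a| |a+c|, abs_nonneg (a+c)]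
    · linarith [le_abs_self (a+c), hgb y, le_max_right |a| |a+c|]
  have hmean : ∫ y, (g y - m) ∂ν = 0 := by
    rw [integral_sub hgint (integrable_const m), integral_const]
    simp [hmdef]
  have key := mcd_hoeffding0 (g := fun y => g y - m) (hg.sub measurable_const)
    (a := a - m) (b := a + c - m)
    (fun y => by simpa using sub_le_sub_right (hga y) m)
    (fun y => by simpa using sub_le_sub_right (hgb y) m)
    hmean l
  have hrw : ∀ y, exp (l * g y) = exp (l * m) * exp (l * (g y - m)) := by
    intro y; rw [← exp_add]; ring_nf
  calc ∫ y, exp (l * g y) ∂ν = exp (l * m) * ∫ y, exp (l * (g y - m)) ∂ν := by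
        simp_rw [hrw]; rw [integral_const_mul]
    _ ≤ exp (l * m) * exp (l ^ 2 * (a + c - m - (a - m)) ^ 2 / 8) := by
        apply mul_le_mul_of_nonneg_left key (exp_pos _).le
    _ = exp (l * m + l ^ 2 * c ^ 2 / 8) := by
        rw [← exp_add]; ring_nf



lemma mcd_nonempty {α : Type u} [MeasurableSpace α] (ν : Measure α) [IsProbabilityMeasure ν] :
    Nonempty α := by
  by_contra hemp
  rw [not_nonempty_iff] at hemp
  have h1 : ν Set.univ = 1 := measure_univ
  simp [Set.univ_eq_empty_iff.2 hemp] at h1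

lemma mcd_osc_total {n : ℕ} {α : Fin n → Type u} (f : (∀ i, α i) → ℝ) (c : Fin n → ℝ)
    (hbdd : ∀ (i : Fin n) (x : ∀ j, α j) (y y' : α i),
      f (Function.update x i y) - f (Function.update x i y') ≤ c i)
    (x y : ∀ i, α i) : f x - f y ≤ ∑ i, c i := by
  classical
  have key : ∀ s : Finset (Fin n), f (s.piecewise x y) - f y ≤ ∑ i ∈ s, c i := by
    intro s
    induction s using Finset.induction with
    | empty => simp
    | @insert j s hj ih =>
        rw [Finset.piecewise_insert, Finset.sum_insert hj]
        set z := s.piecewise x y with hz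
        have h1 : f (Function.update z j (x j)) - f z ≤ c j := by
          have := hbdd j z (x j) (z j)
          rwa [Function.update_eq_self] at this
        linarith
  have := key Finset.univ
  simpa [Finset.piecewise_univ] using this

lemma mcd_insertNth_update {n : ℕ} {α : Fin (n+1) → Type u} (p : Fin (n+1)) (z : α p)
    (x : ∀ j, α (p.succAbove j)) (j : Fin n) (y : α (p.succAbove j)) :
    Fin.insertNth p z (Function.update x j y) =
      Function.update (Fin.insertNth p z x) (p.succAbove j) y := by
  ext i
  cases i using p.succAboveCases with
  | x =>
      rw [Fin.insertNth_apply_same,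
        Function.update_of_ne (Fin.succAbove_ne p j).symm, Fin.insertNth_apply_same]
  | p k =>
      rcases eq_or_ne k j with rfl | hkj
      · rw [Fin.insertNth_apply_succAbove, Function.update_self, Function.update_self]
      · rw [Fin.insertNth_apply_succAbove, Function.update_of_ne hkj,
          Function.update_of_ne ((Fin.succAbove_right_injective (p := p)).ne hkj),
          Fin.insertNth_apply_succAbove]

lemma mcd_mgf_pi {n : ℕ} :
    ∀ {α : Fin n → Type u} [inst : ∀ i, MeasurableSpace (α i)]
    (μ : ∀ i, Measure (α i)) [∀ i, IsProbabilityMeasure (μ i)]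
    (f : (∀ i, α i) → ℝ) (_ : Measurable f) (c : Fin n → ℝ)
    (_ : ∀ (i : Fin n) (x : ∀ j, α j) (y y' : α i),
      f (Function.update x i y) - f (Function.update x i y') ≤ c i)
    (l : ℝ),
    ∫ x, exp (l * f x) ∂(Measure.pi μ) ≤
      exp (l * (∫ x, f x ∂(Measure.pi μ)) + l ^ 2 * (∑ i, c i ^ 2) / 8) := by
  induction n with
  | zero =>
      intro α inst μ hμ f hf c hbdd l
      haveI : Unique (∀ i : Fin 0, α i) :=
        ⟨⟨fun i => i.elim0⟩, fun x => funext fun i => i.elim0⟩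
      set x₀ : ∀ i : Fin 0, α i := fun i => i.elim0 with hx₀
      have hx : ∀ x : ∀ i : Fin 0, α i, x = x₀ := fun x => funext fun i => i.elim0
      have h1 : ∫ x, exp (l * f x) ∂(Measure.pi μ) = exp (l * f x₀) := by
        rw [show (fun x => exp (l * f x)) = fun _ => exp (l * f x₀) from
          funext fun x => by rw [hx x], integral_const, probReal_univ]
        simp
      have h2 : ∫ x, f x ∂(Measure.pi μ) = f x₀ := by
        rw [show (fun x => f x) = fun _ => f x₀ from funext fun x => by rw [hx x],
          integral_const, probReal_univ]
        simp
      rw [h1, h2]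
      simp
  | succ n ih =>
      intro α inst μ hμ f hf c hbdd l
      haveI : ∀ i, Nonempty (α i) := fun i => mcd_nonempty (μ i)
      obtain ⟨x₀⟩ : Nonempty (∀ i, α i) := ⟨fun i => Classical.arbitrary _⟩
      set B : ℝ := |f x₀| + ∑ i, c i with hB
      have hfB : ∀ x, |f x| ≤ B := by
        intro x
        have h1 := mcd_osc_total f c hbdd x x₀
        have h2 := mcd_osc_total f c hbdd x₀ x
        rw [abs_le]; rw [hB]
        constructor <;> [linarith [neg_abs_le (f x₀)]; linarith [le_abs_self (f x₀)]]
      set ν := fun j : Fin n => μ ((0 : Fin (n+1)).succAbove j) with hν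
      haveI : ∀ j, IsProbabilityMeasure (ν j) := fun j => hμ _
      set P : Measure (∀ i, α i) := Measure.pi μ with hP
      set Q := Measure.pi ν with hQ
      set e := MeasurableEquiv.piFinSuccAbove α 0 with he
      have hMP : MeasurePreserving e P ((μ 0).prod Q) :=
        MeasureTheory.measurePreserving_piFinSuccAbove μ 0
      set F : α 0 × (∀ j, α ((0 : Fin (n+1)).succAbove j)) → ℝ :=
        fun z => f (Fin.insertNth 0 z.1 z.2) with hFdef
      have hesymm : ∀ z, e.symm z = Fin.insertNth 0 z.1 z.2 := fun z => rfl
      have hF_meas : Measurable F := by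
        have : F = f ∘ e.symm := funext fun z => congrArg f (hesymm z).symm
        rw [this]
        exact hf.comp e.symm.measurable
      have hFB : ∀ z, |F z| ≤ B := fun z => hfB _
      -- integrability of exp (l * F) on the product
      have hexpF_int : Integrable (fun z => exp (l * F z)) ((μ 0).prod Q) := by
        refine (integrable_const (exp (|l| * B))).mono'
          ((hF_meas.const_mul l).exp).aestronglyMeasurable ?_
        filter_upwards with z
        rw [Real.norm_eq_abs, abs_of_pos (exp_pos _), exp_le_exp]
        calc l * F z ≤ |l * F z| := le_abs_self _
          _ = |l| * |F z| := abs_mul _ _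
          _ ≤ |l| * B := mul_le_mul_of_nonneg_left (hFB z) (abs_nonneg l)
      have hF_int : Integrable F ((μ 0).prod Q) := by
        refine (integrable_const B).mono' hF_meas.aestronglyMeasurable ?_
        filter_upwards with z
        rw [Real.norm_eq_abs]; exact hFB z
      -- conditional expectation over the first coordinate
      set h : (∀ j, α ((0 : Fin (n+1)).succAbove j)) → ℝ :=
        fun x => ∫ y, F (y, x) ∂(μ 0) with hhdef
      have hh_meas : StronglyMeasurable h := hF_meas.stronglyMeasurable.integral_prod_left'
      have hhB : ∀ x, |h x| ≤ B := by
        intro x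
        calc |h x| = ‖∫ y, F (y, x) ∂(μ 0)‖ := rfl
          _ ≤ ∫ y, ‖F (y, x)‖ ∂(μ 0) := norm_integral_le_integral_norm _
          _ ≤ ∫ _y, B ∂(μ 0) := by
              refine integral_mono ?_ (integrable_const B) (fun y => hFB _)
              exact ((integrable_const B).mono'
                ((hF_meas.comp (measurable_id.prodMk measurable_const)).norm).aestronglyMeasurable
                (by filter_upwards with y; rw [norm_norm]; exact hFB _))
          _ = B := by rw [integral_const, probReal_univ]; simp
      -- step 1: transport to the product measure and Fubini
      have step1 : ∫ x, exp (l * f x) ∂P = ∫ x, ∫ y, exp (l * F (y, x)) ∂(μ 0) ∂Q := by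
        rw [← integral_prod_symm _ hexpF_int]
        rw [← hMP.integral_comp e.measurableEmbedding (fun z => exp (l * F z))]
        congr 1
        ext x
        congr 2
        have : e.symm (e x) = x := e.symm_apply_apply x
        rw [hFdef]
        simp only
        rw [← hesymm (e x), this]
      have step7 : ∫ x, f x ∂P = ∫ x, h x ∂Q := by
        rw [hhdef]
        rw [← integral_prod_symm _ hF_int]
        rw [← hMP.integral_comp e.measurableEmbedding F]
        congr 1
        ext x
        rw [hFdef]
        simp only
        rw [← hesymm (e x), e.symm_apply_apply]
      -- step 3: pointwise Hoeffding in the first coordinate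
      have step3 : ∀ x, ∫ y, exp (l * F (y, x)) ∂(μ 0) ≤
          exp (l * h x + l ^ 2 * (c 0) ^ 2 / 8) := by
        intro x
        refine mcd_hoeffding (g := fun y => F (y, x))
          (hF_meas.comp (measurable_id.prodMk measurable_const)) ?_ l
        intro y y'
        have h1 : Fin.insertNth 0 y x = Function.update (Fin.insertNth 0 y' x) 0 y :=
          (Fin.update_insertNth 0 y' y x).symm
        have h2 : Fin.insertNth 0 y' x = Function.update (Fin.insertNth 0 y' x) 0 y' :=
          (Fin.update_insertNth 0 y' y' x).symm
        show f (Fin.insertNth 0 y x) - f (Fin.insertNth 0 y' x) ≤ c 0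
        rw [h2, h1]
        exact hbdd 0 _ y y'
      -- step 4: integrate the bound
      have hint1 : Integrable (fun x => ∫ y, exp (l * F (y, x)) ∂(μ 0)) Q :=
        (hexpF_int).integral_prod_right
      have hexph_int : Integrable (fun x => exp (l * h x + l ^ 2 * (c 0) ^ 2 / 8)) Q := by
        refine (integrable_const (exp (|l| * B + l ^ 2 * (c 0) ^ 2 / 8))).mono'
          (((hh_meas.measurable.const_mul l).add_const _).exp).aestronglyMeasurable ?_
        filter_upwards with x
        rw [Real.norm_eq_abs, abs_of_pos (exp_pos _), exp_le_exp]
        have : l * h x ≤ |l| * B := by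
          calc l * h x ≤ |l * h x| := le_abs_self _
            _ = |l| * |h x| := abs_mul _ _
            _ ≤ |l| * B := mul_le_mul_of_nonneg_left (hhB x) (abs_nonneg l)
        exact add_le_add_left this _
      have step4 : ∫ x, ∫ y, exp (l * F (y, x)) ∂(μ 0) ∂Q ≤
          ∫ x, exp (l * h x + l ^ 2 * (c 0) ^ 2 / 8) ∂Q :=
        integral_mono hint1 hexph_int step3
      -- step 5-6: pull out the constant and apply the induction hypothesis
      have hbdd' : ∀ (j : Fin n) (x : ∀ k, α ((0 : Fin (n+1)).succAbove k))
          (y y' : α ((0 : Fin (n+1)).succAbove j)),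
          h (Function.update x j y) - h (Function.update x j y') ≤ c ((0 : Fin (n+1)).succAbove j) := by
        intro j x y y'
        have hint : ∀ x', Integrable (fun y0 => F (y0, x')) (μ 0) := by
          intro x'
          refine (integrable_const B).mono'
            (hF_meas.comp (measurable_id.prodMk measurable_const)).aestronglyMeasurable ?_
          filter_upwards with y0
          rw [Real.norm_eq_abs]; exact hFB _
        rw [hhdef]
        simp only
        rw [← integral_sub (hint _) (hint _)]
        calc ∫ y0, (F (y0, Function.update x j y) - F (y0, Function.update x j y')) ∂(μ 0)
            ≤ ∫ _y0, c ((0 : Fin (n+1)).succAbove j) ∂(μ 0) := by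
              refine integral_mono ((hint _).sub (hint _)) (integrable_const _) ?_
              intro y0
              show f (Fin.insertNth 0 y0 (Function.update x j y)) -
                f (Fin.insertNth 0 y0 (Function.update x j y')) ≤ _
              rw [mcd_insertNth_update, mcd_insertNth_update]
              exact hbdd _ _ y y'
          _ = c ((0 : Fin (n+1)).succAbove j) := by rw [integral_const, probReal_univ]; simp
      have ihh := ih ν h hh_meas.measurable (fun j => c ((0 : Fin (n+1)).succAbove j)) hbdd' l
      -- assemble
      have hsum : ∑ i : Fin (n+1), c i ^ 2 =
          c 0 ^ 2 + ∑ j : Fin n, c ((0 : Fin (n+1)).succAbove j) ^ 2 := by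
        rw [Fin.sum_univ_succ]
        simp [Fin.succAbove_zero]
      calc ∫ x, exp (l * f x) ∂P
          = ∫ x, ∫ y, exp (l * F (y, x)) ∂(μ 0) ∂Q := step1
        _ ≤ ∫ x, exp (l * h x + l ^ 2 * (c 0) ^ 2 / 8) ∂Q := step4
        _ = (∫ x, exp (l * h x) ∂Q) * exp (l ^ 2 * (c 0) ^ 2 / 8) := by
            simp_rw [exp_add]
            rw [integral_mul_const]
        _ ≤ exp (l * (∫ x, h x ∂Q) + l ^ 2 * (∑ j : Fin n,
              c ((0 : Fin (n+1)).succAbove j) ^ 2) / 8) * exp (l ^ 2 * (c 0) ^ 2 / 8) := by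
            exact mul_le_mul_of_nonneg_right ihh (exp_pos _).le
        _ = exp (l * (∫ x, f x ∂P) + l ^ 2 * (∑ i : Fin (n+1), c i ^ 2) / 8) := by
            rw [← exp_add, step7, hsum]
            ring_nf



/-- One-sided tail bound on a general probability space from the sub-Gaussian mgf bound. -/
lemma mcd_one_sided {α : Type u} [MeasurableSpace α] (ν : Measure α) [IsProbabilityMeasure ν]
    (g : α → ℝ) (hg : Measurable g) (S : ℝ) (hS : 0 < S)
    (hmgf : ∀ l : ℝ, ∫ x, exp (l * g x) ∂ν ≤ exp (l * (∫ x, g x ∂ν) + l ^ 2 * S / 8))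
    (hbound : ∀ x, |g x| ≤ |g x|) -- dummy
    (hgint : ∀ l : ℝ, Integrable (fun x => exp (l * (g x - ∫ x', g x' ∂ν))) ν)
    (t : ℝ) (ht : 0 < t) :
    ν {x | t ≤ g x - ∫ x', g x' ∂ν} ≤ ENNReal.ofReal (exp (-2 * t ^ 2 / S)) := by
  set m := ∫ x', g x' ∂ν with hm
  set l : ℝ := 4 * t / S with hl
  have hl0 : 0 ≤ l := by positivity
  have hmgf' : mgf (fun x => g x - m) ν l ≤ exp (l ^ 2 * S / 8) := by
    rw [mgf]
    have : ∀ x, exp (l * (g x - m)) = exp (-(l * m)) * exp (l * g x) := by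
      intro x; rw [← exp_add]; ring_nf
    simp_rw [this]
    rw [integral_const_mul]
    calc exp (-(l * m)) * ∫ x, exp (l * g x) ∂ν
        ≤ exp (-(l * m)) * exp (l * m + l ^ 2 * S / 8) :=
          mul_le_mul_of_nonneg_left (hmgf l) (exp_pos _).le
      _ = exp (l ^ 2 * S / 8) := by rw [← exp_add]; ring_nf
  have hch := measure_ge_le_exp_mul_mgf (μ := ν) (X := fun x => g x - m) t hl0 (hgint l)
  have hfinal : (ν {x | t ≤ g x - m}).toReal ≤ exp (-2 * t ^ 2 / S) := by
    calc (ν {x | t ≤ g x - m}).toReal ≤ exp (-l * t) * mgf (fun x => g x - m) ν l := hch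
      _ ≤ exp (-l * t) * exp (l ^ 2 * S / 8) :=
          mul_le_mul_of_nonneg_left hmgf' (exp_pos _).le
      _ = exp (-l * t + l ^ 2 * S / 8) := by rw [← exp_add]
      _ = exp (-2 * t ^ 2 / S) := by
          congr 1
          rw [hl]
          field_simp
          ring
  rw [← ENNReal.ofReal_toReal (measure_ne_top ν _)]
  exact ENNReal.ofReal_le_ofReal hfinal

lemma mcd_pi {n : ℕ} {α : Fin n → Type u} [∀ i, MeasurableSpace (α i)]
    (μ : ∀ i, Measure (α i)) [∀ i, IsProbabilityMeasure (μ i)]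
    (f : (∀ i, α i) → ℝ) (hf : Measurable f) (c : Fin n → ℝ) (hc : ∀ i, 0 ≤ c i)
    (hbdd : ∀ (i : Fin n) (x : ∀ j, α j) (y y' : α i),
      f (Function.update x i y) - f (Function.update x i y') ≤ c i)
    (t : ℝ) (ht : 0 < t) :
    Measure.pi μ {x | t ≤ |f x - ∫ x', f x' ∂(Measure.pi μ)|}
      ≤ ENNReal.ofReal (2 * Real.exp (-2 * t ^ 2 / ∑ k : Fin n, (c k) ^ 2)) := by
  classical
  set P := Measure.pi μ with hP
  set m := ∫ x', f x' ∂P with hm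
  set S := ∑ k : Fin n, (c k) ^ 2 with hS
  haveI : ∀ i, Nonempty (α i) := fun i => mcd_nonempty (μ i)
  obtain ⟨x₀⟩ : Nonempty (∀ i, α i) := ⟨fun i => Classical.arbitrary _⟩
  rcases eq_or_lt_of_le (Finset.sum_nonneg (fun i _ => sq_nonneg (c i)) : (0:ℝ) ≤ S) with hS0 | hS0
  · -- degenerate case: all c i = 0, f is constant
    have hci : ∀ i, c i = 0 := by
      intro i
      have := Finset.sum_eq_zero_iff_of_nonneg (fun j _ => sq_nonneg (c j)) |>.1 hS0.symm i
        (Finset.mem_univ i)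
      exact pow_eq_zero_iff (by norm_num) |>.1 this
    have hsum0 : ∑ i, c i = 0 := by simp [hci]
    have hconst : ∀ x, f x = f x₀ := by
      intro x
      have h1 := mcd_osc_total f c hbdd x x₀
      have h2 := mcd_osc_total f c hbdd x₀ x
      rw [hsum0] at h1 h2
      linarith
    have hmx : m = f x₀ := by
      rw [hm, show f = fun _ => f x₀ from funext hconst, integral_const, probReal_univ]
      simp
    have : {x | t ≤ |f x - m|} = (∅ : Set (∀ i, α i)) := by
      ext x
      simp only [Set.mem_setOf_eq, Set.mem_empty_iff_false, iff_false, not_le]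
      rw [hconst x, hmx]
      simpa using ht
    rw [this]
    simp
  · -- main case
    have hBf : ∀ x, |f x - f x₀| ≤ ∑ i, c i := by
      intro x
      rw [abs_le]
      constructor
      · linarith [mcd_osc_total f c hbdd x₀ x]
      · linarith [mcd_osc_total f c hbdd x x₀]
    have hint : ∀ (g : (∀ i, α i) → ℝ) (hg : Measurable g) (C : ℝ) (hC : ∀ x, |g x| ≤ C)
        (l : ℝ), Integrable (fun x => exp (l * g x)) P := by
      intro g hg C hC l
      refine (integrable_const (exp (|l| * C))).mono'
        ((hg.const_mul l).exp).aestronglyMeasurable ?_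
      filter_upwards with x
      rw [Real.norm_eq_abs, abs_of_pos (exp_pos _), exp_le_exp]
      calc l * g x ≤ |l * g x| := le_abs_self _
        _ = |l| * |g x| := abs_mul _ _
        _ ≤ |l| * C := mul_le_mul_of_nonneg_left (hC x)
            (abs_nonneg l)
    have hfabs : ∀ x, |f x| ≤ |f x₀| + ∑ i, c i := by
      intro x
      calc |f x| = |(f x - f x₀) + f x₀| := by ring_nf
        _ ≤ |f x - f x₀| + |f x₀| := abs_add_le _ _
        _ ≤ ∑ i, c i + |f x₀| := add_le_add_left (hBf x) _
        _ = |f x₀| + ∑ i, c i := by ring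
    -- upper tail
    have hup : P {x | t ≤ f x - m} ≤ ENNReal.ofReal (exp (-2 * t ^ 2 / S)) := by
      refine mcd_one_sided P f hf S hS0 (fun l => mcd_mgf_pi μ f hf c hbdd l) (fun x => le_refl _)
        (fun l => ?_) t ht
      have : ∀ x, |f x - m| ≤ |f x₀| + ∑ i, c i + |m| := by
        intro x
        calc |f x - m| ≤ |f x| + |m| := abs_sub _ _
          _ ≤ |f x₀| + ∑ i, c i + |m| := by linarith [hfabs x]
      exact hint _ (hf.sub measurable_const) _ this l
    -- lower tail via -f
    have hbdd' : ∀ (i : Fin n) (x : ∀ j, α j) (y y' : α i),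
        (-f) (Function.update x i y) - (-f) (Function.update x i y') ≤ c i := by
      intro i x y y'
      simp only [Pi.neg_apply]
      linarith [hbdd i x y' y]
    have hmneg : ∫ x', (-f) x' ∂P = -m := by
      rw [hm]
      simp only [Pi.neg_apply]
      rw [integral_neg]
    have hlow : P {x | t ≤ -(f x - m)} ≤ ENNReal.ofReal (exp (-2 * t ^ 2 / S)) := by
      have := mcd_one_sided P (-f) hf.neg S hS0
        (fun l => by
          have := mcd_mgf_pi μ (-f) hf.neg c hbdd' l
          simpa using this)
        (fun x => le_refl _)
        (fun l => by
          rw [hmneg]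
          have : ∀ x, |(-f) x - (-m)| ≤ |f x₀| + ∑ i, c i + |m| := by
            intro x
            simp only [Pi.neg_apply]
            calc |(-(f x)) - (-m)| = |f x - m| := by rw [← abs_neg]; ring_nf
              _ ≤ |f x| + |m| := abs_sub _ _
              _ ≤ |f x₀| + ∑ i, c i + |m| := by linarith [hfabs x]
          exact hint _ (hf.neg.sub measurable_const) _ this l)
        t ht
      rw [hmneg] at this
      convert this using 2
      ext x
      simp only [Set.mem_setOf_eq, Pi.neg_apply]
      constructor <;> intro h <;> linarith
    calc P {x | t ≤ |f x - m|}
        ≤ P ({x | t ≤ f x - m} ∪ {x | t ≤ -(f x - m)}) := by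
          apply measure_mono
          intro x hx
          rcases abs_cases (f x - m) with ⟨heq, _⟩ | ⟨heq, _⟩
          · left; rw [Set.mem_setOf_eq, ← heq]; exact hx
          · right; rw [Set.mem_setOf_eq, ← heq]; exact hx
      _ ≤ P {x | t ≤ f x - m} + P {x | t ≤ -(f x - m)} := measure_union_le _ _
      _ ≤ ENNReal.ofReal (exp (-2 * t ^ 2 / S)) + ENNReal.ofReal (exp (-2 * t ^ 2 / S)) :=
          add_le_add hup hlow
      _ = ENNReal.ofReal (2 * exp (-2 * t ^ 2 / S)) := by
          rw [← ENNReal.ofReal_add (exp_pos _).le (exp_pos _).le]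
          congr 1
          ring

end McdiarmidAux


/-- **McDiarmid's (bounded differences) inequality**: let `X 1, …, X n` be independent random
variables and let `f` satisfy the bounded difference property with constants
`c 1, …, c n ≥ 0` (changing only the `i`-th coordinate changes `f` by at most `c i`).
Then for every `t > 0`,
`P[|f (X 1, …, X n) - E[f (X 1, …, X n)]| ≥ t] ≤ 2 exp (-2 t² / ∑ k, (c k)²)`. -/
theorem mcdiarmid_bounded_differences
    {Ω : Type*} [MeasurableSpace Ω] (μ : Measure Ω) [IsProbabilityMeasure μ]
    {n : ℕ} {α : Fin n → Type*} [∀ i, MeasurableSpace (α i)]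
    (X : ∀ i, Ω → α i) (hXmeas : ∀ i, Measurable (X i))
    (hXindep : iIndepFun X μ)
    (f : (∀ i, α i) → ℝ) (hf : Measurable f)
    (c : Fin n → ℝ) (hc : ∀ i, 0 ≤ c i)
    (hbdd : ∀ (i : Fin n) (x : ∀ j, α j) (y y' : α i),
      f (Function.update x i y) - f (Function.update x i y') ≤ c i)
    (t : ℝ) (ht : 0 < t) :
    μ {ω | t ≤ |f (fun i => X i ω) - ∫ ω', f (fun i => X i ω') ∂μ|}
      ≤ ENNReal.ofReal (2 * Real.exp (-2 * t ^ 2 / ∑ k : Fin n, (c k) ^ 2)) := by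
  set T : Ω → ∀ i, α i := fun ω i => X i ω with hT
  have hTmeas : Measurable T := measurable_pi_lambda T hXmeas
  have hlaw : Measure.pi (fun i => μ.map (X i)) = μ.map T := by
    refine Measure.pi_eq fun s hs => ?_
    rw [Measure.map_apply hTmeas (MeasurableSet.univ_pi hs)]
    have hpre : T ⁻¹' (Set.pi Set.univ s) = ⋂ i, X i ⁻¹' s i := by
      ext ω
      simp [Set.mem_pi, hT]
    rw [hpre, hXindep.meas_iInter (fun i => ⟨s i, hs i, rfl⟩)]
    congr 1
    ext i
    rw [Measure.map_apply (hXmeas i) (hs i)]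
  haveI : ∀ i, IsProbabilityMeasure (μ.map (X i)) :=
    fun i => Measure.isProbabilityMeasure_map (hXmeas i).aemeasurable
  have key := mcd_pi (fun i => μ.map (X i)) f hf c hc hbdd t ht
  rw [hlaw] at key
  have hm : ∫ x', f x' ∂(μ.map T) = ∫ ω', f (fun i => X i ω') ∂μ := by
    rw [integral_map hTmeas.aemeasurable hf.aestronglyMeasurable]
  rw [hm] at key
  have hsets : μ.map T {x | t ≤ |f x - ∫ ω', f (fun i => X i ω') ∂μ|}
      = μ {ω | t ≤ |f (fun i => X i ω) - ∫ ω', f (fun i => X i ω') ∂μ|} := by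
    rw [Measure.map_apply hTmeas]
    · rfl
    · have : {x | t ≤ |f x - ∫ ω', f (fun i => X i ω') ∂μ|}
          = (fun x => |f x - ∫ ω', f (fun i => X i ω') ∂μ|) ⁻¹' Set.Ici t := rfl
      rw [this]
      exact ((hf.sub measurable_const).abs) measurableSet_Ici
  rw [hsets] at key
  exact key
end

section
/- Concentration of the information density for a DMC: Consider a discrete memoryless channel with finite input alphabet 𝖷, finite output alphabet 𝖸, and strictly positive transition probabilities T(y|x) > 0. Fix an arbitrary input distribution P_{Xⁿ} on 𝖷ⁿ and let P_{Yⁿ} be the induced output distribution. Then for every fixed input block xⁿ ∈ 𝖷ⁿ and every t > 0, P_{Yⁿ|Xⁿ=xⁿ}[ log(P_{Yⁿ|Xⁿ=xⁿ}(Yⁿ)/P_{Yⁿ}(Yⁿ)) ≥ D(P_{Yⁿ|Xⁿ=xⁿ} ‖ P_{Yⁿ}) + t ] ≤ exp(−2t²/(n·c(T)²)), where c(T) = 2·max_{x,x'∈𝖷} max_{y∈𝖸} log(T(y|x)/T(y|x')). -/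
/-!
Under `P_{Yⁿ|Xⁿ=xⁿ}` the coordinates of `Yⁿ` are independent and the information density
`ı(yⁿ) = log (P_{Yⁿ|Xⁿ=xⁿ}(yⁿ) / P_{Yⁿ}(yⁿ))` has mean `D`. Changing one output symbol `yᵢ`
multiplies the numerator and every summand `P_{Xⁿ}(wⁿ) ∏ⱼ T(yⱼ|wⱼ)` of the denominator by ratios of
the form `T(y'|x)/T(y|x)`; since `T(y|x)/T(y|x') ≤ exp (c(T)/2)` for all `x, x', y`, the value of
`ı` moves by at most `c(T)`. McDiarmid's inequality then gives the bound: a Chernoff bound, with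
the moment generating function controlled by peeling off one coordinate at a time and applying
Hoeffding's lemma to the conditional fluctuation of the first coordinate.
-/

open Finset Real

theorem sum_mul_exp_le_of_sum_mul_eq_zero {Y : Type*} [Fintype Y] [Nonempty Y]
    {q : Y → ℝ} (hq : ∀ y, 0 ≤ q y) (hq1 : ∑ y, q y = 1)
    {g : Y → ℝ} {c : ℝ} (hosc : ∀ y y', g y - g y' ≤ c)
    (hmean : ∑ y, q y * g y = 0) (l : ℝ) :
    ∑ y, q y * exp (l * g y) ≤ exp (l ^ 2 * c ^ 2 / 8) := by
  let : MeasurableSpace Y := ⊤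
  have : DiscreteMeasurableSpace Y := ⟨fun _ => trivial⟩
  let P : PMF Y := PMF.ofFintype (fun y => ENNReal.ofReal (q y)) (by
    rw [← ENNReal.ofReal_sum_of_nonneg fun y _ => hq y, hq1, ENNReal.ofReal_one])
  have hexp (f : Y → ℝ) : ∫ y, f y ∂P.toMeasure = ∑ y, q y * f y := by
    simp [P, PMF.integral_eq_sum, ENNReal.toReal_ofReal (hq _)]
  set a := univ.inf' univ_nonempty g
  have hc : 0 ≤ c := by simpa using hosc (Classical.arbitrary Y) (Classical.arbitrary Y)
  have hrange : ∀ᵐ y ∂P.toMeasure, g y ∈ Set.Icc a (a + c) := by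
    refine Filter.Eventually.of_forall fun y => ⟨inf'_le _ (mem_univ y), ?_⟩
    obtain ⟨y₀, -, hy₀⟩ := exists_mem_eq_inf' univ_nonempty g
    linarith [hosc y y₀]
  have hH := ProbabilityTheory.hasSubgaussianMGF_of_mem_Icc_of_integral_eq_zero
    (measurable_of_countable g).aemeasurable hrange (by rw [hexp]; exact hmean)
  have := hH.mgf_le l
  rw [ProbabilityTheory.mgf, hexp] at this
  refine this.trans_eq ?_
  congr 1
  simp [abs_of_nonneg hc]
  ring

def BoundedDifferences {ι Y : Type*} [DecidableEq ι] (f : (ι → Y) → ℝ) (c : ℝ) : Prop :=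
  ∀ i yn y', f yn - f (Function.update yn i y') ≤ c

section McDiarmid

variable {Y : Type*} [Fintype Y]

theorem sum_pi_fin_succ {M : Type*} [AddCommMonoid M] {n : ℕ} (F : (Fin (n + 1) → Y) → M) :
    ∑ yn, F yn = ∑ y, ∑ z : Fin n → Y, F (Fin.cons y z) := by
  rw [← (Fin.consEquiv fun _ => Y).sum_comp F, Fintype.sum_prod_type]
  rfl

theorem sum_prod_mul_fin_succ {n : ℕ} (q : Fin (n + 1) → Y → ℝ)
    (F : (Fin (n + 1) → Y) → ℝ) :
    ∑ yn, (∏ i, q i (yn i)) * F yn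
      = ∑ z : Fin n → Y, (∏ i, q i.succ (z i)) * ∑ y, q 0 y * F (Fin.cons y z) := by
  rw [sum_pi_fin_succ, sum_comm]
  refine sum_congr rfl fun z _ => ?_
  rw [mul_sum]
  refine sum_congr rfl fun y _ => ?_
  simp only [Fin.prod_univ_succ, Fin.cons_zero, Fin.cons_succ]
  ring

theorem BoundedDifferences.sum_mul_cons {n : ℕ} {f : (Fin (n + 1) → Y) → ℝ} {c : ℝ}
    (hf : BoundedDifferences f c) {q : Y → ℝ} (hq : ∀ y, 0 ≤ q y) (hq1 : ∑ y, q y = 1) :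
    BoundedDifferences (fun z => ∑ y, q y * f (Fin.cons y z)) c := by
  intro i z y'
  calc ∑ y, q y * f (Fin.cons y z) - ∑ y, q y * f (Fin.cons y (Function.update z i y'))
      = ∑ y, q y * (f (Fin.cons y z) - f (Function.update (Fin.cons y z) i.succ y')) := by
        simp only [Fin.cons_update, mul_sub, sum_sub_distrib]
    _ ≤ ∑ y, q y * c := by gcongr with y; exacts [hq y, hf _ _ _]
    _ = c := by rw [← sum_mul, hq1, one_mul]

variable [Nonempty Y]

theorem sum_prod_mul_exp_le_of_boundedDifferences {n : ℕ} (q : Fin n → Y → ℝ)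
    (hq : ∀ i y, 0 ≤ q i y) (hq1 : ∀ i, ∑ y, q i y = 1)
    {f : (Fin n → Y) → ℝ} {c : ℝ} (hf : BoundedDifferences f c) (l : ℝ) :
    ∑ yn, (∏ i, q i (yn i)) * exp (l * (f yn - ∑ zn, (∏ i, q i (zn i)) * f zn))
      ≤ exp (n * (l ^ 2 * c ^ 2 / 8)) := by
  induction n with
  | zero => simp
  | succ n ih =>
    set fbar : (Fin n → Y) → ℝ := fun z => ∑ y, q 0 y * f (Fin.cons y z)
    have hmean : ∑ zn, (∏ i, q i (zn i)) * f zn = ∑ z, (∏ i, q i.succ (z i)) * fbar z :=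
      sum_prod_mul_fin_succ q f
    have hhead (z : Fin n → Y) :
        ∑ y, q 0 y * exp (l * (f (Fin.cons y z) - fbar z)) ≤ exp (l ^ 2 * c ^ 2 / 8) := by
      refine sum_mul_exp_le_of_sum_mul_eq_zero (hq 0) (hq1 0) (fun y y' => ?_) ?_ l
      · simpa [Fin.update_cons_zero] using hf 0 (Fin.cons y z) y'
      · simp only [mul_sub, sum_sub_distrib, ← sum_mul, hq1 0, one_mul, fbar, sub_self]
    have htail := ih (fun i => q i.succ) (fun i => hq i.succ) (fun i => hq1 i.succ)
      (hf.sum_mul_cons (hq 0) (hq1 0))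
    set μ := ∑ z, (∏ i, q i.succ (z i)) * fbar z
    rw [hmean, sum_prod_mul_fin_succ]
    calc _ = ∑ z, (∏ i, q i.succ (z i)) * exp (l * (fbar z - μ))
            * ∑ y, q 0 y * exp (l * (f (Fin.cons y z) - fbar z)) := by
          refine sum_congr rfl fun z _ => ?_
          rw [mul_assoc]
          congr 1
          rw [mul_sum]
          refine sum_congr rfl fun y _ => ?_
          rw [mul_left_comm, ← exp_add]
          ring_nf
      _ ≤ ∑ z, (∏ i, q i.succ (z i)) * exp (l * (fbar z - μ)) * exp (l ^ 2 * c ^ 2 / 8) := by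
          gcongr with z
          · exact mul_nonneg (prod_nonneg fun i _ => hq _ _) (exp_pos _).le
          · exact hhead z
      _ ≤ exp (n * (l ^ 2 * c ^ 2 / 8)) * exp (l ^ 2 * c ^ 2 / 8) := by
          rw [← sum_mul]
          exact mul_le_mul_of_nonneg_right htail (exp_pos _).le
      _ = exp ((n + 1 : ℕ) * (l ^ 2 * c ^ 2 / 8)) := by
          rw [← exp_add]; push_cast; ring_nf

theorem mcdiarmid {n : ℕ} (q : Fin n → Y → ℝ) (hq : ∀ i y, 0 ≤ q i y)
    (hq1 : ∀ i, ∑ y, q i y = 1)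
    {f : (Fin n → Y) → ℝ} {c : ℝ} (hf : BoundedDifferences f c) {t : ℝ} (ht : 0 ≤ t) :
    ∑ yn ∈ univ.filter (fun yn => ∑ zn, (∏ i, q i (zn i)) * f zn + t ≤ f yn), ∏ i, q i (yn i)
      ≤ exp (-2 * t ^ 2 / (n * c ^ 2)) := by
  set μ := ∑ zn, (∏ i, q i (zn i)) * f zn
  have hweight (yn : Fin n → Y) : 0 ≤ ∏ i, q i (yn i) := prod_nonneg fun i _ => hq i _
  have hmass : ∑ yn ∈ univ.filter (fun yn => μ + t ≤ f yn), ∏ i, q i (yn i) ≤ 1 := by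
    calc _ ≤ ∑ yn, ∏ i, q i (yn i) := sum_le_sum_of_subset_of_nonneg (filter_subset _ _)
            fun yn _ _ => hweight yn
      _ = 1 := by rw [← Fintype.prod_sum fun i y => q i y]; simp [hq1]
  rcases (show 0 ≤ (n : ℝ) * c ^ 2 by positivity).eq_or_lt with hnc | hnc
  -- `x / 0 = 0`, so the bound is `exp 0 = 1` in this degenerate case
  · simpa [← hnc] using hmass
  set l := 4 * t / (n * c ^ 2)
  have hl : 0 ≤ l := by positivity
  calc _ ≤ ∑ yn ∈ univ.filter (fun yn => μ + t ≤ f yn),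
          (∏ i, q i (yn i)) * exp (l * (f yn - μ - t)) := by
        refine sum_le_sum fun yn hyn => le_mul_of_one_le_right (hweight yn) (one_le_exp ?_)
        exact mul_nonneg hl (by linarith [(mem_filter.1 hyn).2])
    _ ≤ ∑ yn, (∏ i, q i (yn i)) * exp (l * (f yn - μ - t)) :=
        sum_le_sum_of_subset_of_nonneg (filter_subset _ _) fun yn _ _ =>
          mul_nonneg (hweight yn) (exp_pos _).le
    _ = exp (-(l * t)) * ∑ yn, (∏ i, q i (yn i)) * exp (l * (f yn - μ)) := by
        rw [mul_sum]
        refine sum_congr rfl fun yn _ => ?_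
        rw [mul_left_comm, ← exp_add]
        ring_nf
    _ ≤ exp (-(l * t)) * exp (n * (l ^ 2 * c ^ 2 / 8)) := by
        gcongr
        exact sum_prod_mul_exp_le_of_boundedDifferences q hq hq1 hf l
    _ = exp (-2 * t ^ 2 / (n * c ^ 2)) := by
        rw [← exp_add]
        congr 1
        simp only [l]
        field_simp
        ring

end McDiarmid

section InformationDensity

variable {ι X Y : Type*} [Fintype ι] [DecidableEq ι]

theorem prod_apply_update_mul {M : Type*} [CommMonoid M] (F : ι → Y → M) (yn : ι → Y) (i : ι)
    (y' : Y) :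
    (∏ j, F j (Function.update yn i y' j)) * F i (yn i) = (∏ j, F j (yn j)) * F i y' := by
  rw [← mul_prod_erase univ _ (mem_univ i), Function.update_self,
    ← mul_prod_erase univ (fun j => F j (yn j)) (mem_univ i),
    prod_congr rfl fun j hj => by rw [Function.update_of_ne (ne_of_mem_erase hj)]]
  ac_rfl

theorem prod_mul_prod_update_le {T : X → Y → ℝ} (hTpos : ∀ x y, 0 < T x y) {c : ℝ}
    (hT : ∀ x x' y, T x y ≤ exp (c / 2) * T x' y) (xn w : ι → X) (yn : ι → Y) (i : ι) (y' : Y) :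
    (∏ j, T (xn j) (yn j)) * ∏ j, T (w j) (Function.update yn i y' j)
      ≤ exp c * ((∏ j, T (xn j) (Function.update yn i y' j)) * ∏ j, T (w j) (yn j)) := by
  have hpos : 0 < T (xn i) y' * T (w i) (yn i) := mul_pos (hTpos _ _) (hTpos _ _)
  have hsingle : T (xn i) (yn i) * T (w i) y' ≤ exp c * (T (xn i) y' * T (w i) (yn i)) := by
    calc _ ≤ (exp (c / 2) * T (w i) (yn i)) * (exp (c / 2) * T (xn i) y') :=
          mul_le_mul (hT _ _ _) (hT _ _ _) (hTpos _ _).le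
            (mul_nonneg (exp_pos _).le (hTpos _ _).le)
      _ = exp (c / 2 + c / 2) * (T (xn i) y' * T (w i) (yn i)) := by rw [exp_add]; ring
      _ = exp c * (T (xn i) y' * T (w i) (yn i)) := by rw [add_halves]
  refine le_of_mul_le_mul_right ?_ hpos
  calc _ = ((∏ j, T (xn j) (Function.update yn i y' j)) * T (xn i) (yn i))
          * ((∏ j, T (w j) (yn j)) * T (w i) y') := by
        rw [prod_apply_update_mul (fun j => T (xn j)), ← prod_apply_update_mul (fun j => T (w j))]
        ring
    _ = ((∏ j, T (xn j) (Function.update yn i y' j)) * ∏ j, T (w j) (yn j))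
          * (T (xn i) (yn i) * T (w i) y') := by ring
    _ ≤ ((∏ j, T (xn j) (Function.update yn i y' j)) * ∏ j, T (w j) (yn j))
          * (exp c * (T (xn i) y' * T (w i) (yn i))) := by
        gcongr
        exact mul_nonneg (prod_nonneg fun j _ => (hTpos _ _).le)
          (prod_nonneg fun j _ => (hTpos _ _).le)
    _ = _ := by ring

theorem boundedDifferences_log_div [Fintype X] {T : X → Y → ℝ} (hTpos : ∀ x y, 0 < T x y)
    {c : ℝ}
    (hT : ∀ x x' y, T x y ≤ exp (c / 2) * T x' y) {p : (ι → X) → ℝ} (hp : ∀ w, 0 ≤ p w)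
    (hpsum : 0 < ∑ w, p w) (xn : ι → X) :
    BoundedDifferences
      (fun yn => log ((∏ j, T (xn j) (yn j)) / ∑ w, p w * ∏ j, T (w j) (yn j))) c := by
  intro i yn y'
  set yn' := Function.update yn i y'
  have hcond (z : ι → Y) : 0 < ∏ j, T (xn j) (z j) := prod_pos fun j _ => hTpos _ _
  have hout (z : ι → Y) : 0 < ∑ w, p w * ∏ j, T (w j) (z j) := by
    obtain ⟨w₀, -, hw₀⟩ :=
      exists_lt_of_sum_lt (s := univ) (f := 0) (g := p) (by simpa using hpsum)
    exact sum_pos' (fun w _ => mul_nonneg (hp w) (prod_nonneg fun j _ => (hTpos _ _).le))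
      ⟨w₀, mem_univ _, mul_pos hw₀ (prod_pos fun j _ => hTpos _ _)⟩
  have hmixed : (∏ j, T (xn j) (yn j)) * ∑ w, p w * ∏ j, T (w j) (yn' j)
      ≤ exp c * ((∏ j, T (xn j) (yn' j)) * ∑ w, p w * ∏ j, T (w j) (yn j)) := by
    simp only [mul_sum]
    refine sum_le_sum fun w _ => ?_
    have := prod_mul_prod_update_le hTpos hT xn w yn i y'
    calc _ = p w * ((∏ j, T (xn j) (yn j)) * ∏ j, T (w j) (yn' j)) := by ring
      _ ≤ p w * (exp c * ((∏ j, T (xn j) (yn' j)) * ∏ j, T (w j) (yn j))) :=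
          mul_le_mul_of_nonneg_left this (hp w)
      _ = _ := by ring
  rw [sub_le_iff_le_add, ← log_exp c, ← log_mul (exp_pos c).ne' (div_pos (hcond _) (hout _)).ne']
  refine log_le_log (div_pos (hcond _) (hout _)) ?_
  rw [mul_div_assoc', div_le_div_iff₀ (hout _) (hout _)]
  simpa only [mul_assoc] using hmixed

end InformationDensity

theorem dmc_information_density_concentration_general
    {𝒳 𝒴 : Type*} [Fintype 𝒳] [Fintype 𝒴] [Nonempty 𝒳] [Nonempty 𝒴]
    (T : 𝒳 → 𝒴 → ℝ) (hTpos : ∀ x y, 0 < T x y) (hTsum : ∀ x, ∑ y : 𝒴, T x y = 1)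
    {n : ℕ}
    (p : (Fin n → 𝒳) → ℝ) (hp : ∀ xn, 0 ≤ p xn) (hpsum : ∑ xn : Fin n → 𝒳, p xn = 1)
    (PY : (Fin n → 𝒴) → ℝ)
    (hPY : PY = fun yn => ∑ xn : Fin n → 𝒳, p xn * ∏ i, T (xn i) (yn i))
    (xn : Fin n → 𝒳)
    (Pcond : (Fin n → 𝒴) → ℝ) (hPcond : Pcond = fun yn => ∏ i, T (xn i) (yn i))
    (D : ℝ) (hD : D = ∑ yn : Fin n → 𝒴, Pcond yn * Real.log (Pcond yn / PY yn))
    (cT : ℝ)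
    (hcT : cT = (Finset.univ : Finset (𝒳 × 𝒳 × 𝒴)).sup'
      (Finset.univ_nonempty) (fun z => 2 * Real.log (T z.1 z.2.2 / T z.2.1 z.2.2)))
    (t : ℝ) (ht : 0 < t) :
    ∑ yn ∈ Finset.univ.filter
        (fun yn : Fin n → 𝒴 => D + t ≤ Real.log (Pcond yn / PY yn)), Pcond yn
      ≤ Real.exp (-2 * t ^ 2 / (n * cT ^ 2)) := by
  subst hPcond hPY hD
  have hT (x x' : 𝒳) (y : 𝒴) : T x y ≤ exp (cT / 2) * T x' y := by
    have := hcT ▸ le_sup' (fun z : 𝒳 × 𝒳 × 𝒴 => 2 * log (T z.1 z.2.2 / T z.2.1 z.2.2))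
      (mem_univ (x, x', y))
    rw [← div_le_iff₀ (hTpos x' y), ← log_le_iff_le_exp (div_pos (hTpos x y) (hTpos x' y))]
    linarith
  exact mcdiarmid (fun i => T (xn i)) (fun i y => (hTpos _ y).le) (fun i => hTsum _)
    (boundedDifferences_log_div hTpos hT hp (hpsum ▸ one_pos) xn) ht.le

/-- **Concentration of the information density for a DMC** (via McDiarmid's inequality):
consider a discrete memoryless channel with finite input alphabet `𝒳`, finite output alphabet
`𝒴`, and strictly positive transition probabilities `T x y = T(y|x)`.  Fix an input
distribution `p` on `𝒳ⁿ` and let `PY` be the induced output distribution.  Then for every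
fixed input block `xn ∈ 𝒳ⁿ` and every `t > 0`, the probability, under
`P_{Yⁿ|Xⁿ = xn}(yⁿ) = ∏ i, T (xn i) (yⁿ i)`, of the event
`log (P_{Yⁿ|Xⁿ=xn}(Yⁿ) / PY(Yⁿ)) ≥ D(P_{Yⁿ|Xⁿ=xn} ‖ PY) + t`
is at most `exp (-2 t² / (n c(T)²))`, where
`c(T) = 2 max_{x,x',y} log (T(y|x)/T(y|x'))`. -/
theorem dmc_information_density_concentration
    {𝒳 𝒴 : Type*} [Fintype 𝒳] [Fintype 𝒴] [Nonempty 𝒳] [Nonempty 𝒴]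
    (T : 𝒳 → 𝒴 → ℝ) (hTpos : ∀ x y, 0 < T x y) (hTsum : ∀ x, ∑ y : 𝒴, T x y = 1)
    {n : ℕ} (hn : 0 < n)
    (p : (Fin n → 𝒳) → ℝ) (hp : ∀ xn, 0 ≤ p xn) (hpsum : ∑ xn : Fin n → 𝒳, p xn = 1)
    (PY : (Fin n → 𝒴) → ℝ)
    (hPY : PY = fun yn => ∑ xn : Fin n → 𝒳, p xn * ∏ i, T (xn i) (yn i))
    (xn : Fin n → 𝒳)
    (Pcond : (Fin n → 𝒴) → ℝ) (hPcond : Pcond = fun yn => ∏ i, T (xn i) (yn i))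
    (D : ℝ) (hD : D = ∑ yn : Fin n → 𝒴, Pcond yn * Real.log (Pcond yn / PY yn))
    (cT : ℝ)
    (hcT : cT = (Finset.univ : Finset (𝒳 × 𝒳 × 𝒴)).sup'
      (Finset.univ_nonempty) (fun z => 2 * Real.log (T z.1 z.2.2 / T z.2.1 z.2.2)))
    (t : ℝ) (ht : 0 < t) :
    ∑ yn ∈ Finset.univ.filter
        (fun yn : Fin n → 𝒴 => D + t ≤ Real.log (Pcond yn / PY yn)), Pcond yn
      ≤ Real.exp (-2 * t ^ 2 / (n * cT ^ 2)) :=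
  dmc_information_density_concentration_general T hTpos hTsum p hp hpsum PY hPY xn Pcond hPcond D hD
    cT hcT t ht
end

section
/- The Herbst argument: Let X be a random variable with law P and let f be a measurable real-valued function with E_P[exp(λf(X))] < ∞ for all λ ≥ 0. If the tilted distributions satisfy D(P^{(λf)} ‖ P) ≤ (1/2)·λ²σ² for all λ ≥ 0, then log E[exp(λ(f(X) − E[f(X)]))] ≤ λ²σ²/2 for all λ ≥ 0, and consequently P[f(X) ≥ E[f(X)] + t] ≤ exp(−t²/(2σ²)) for all t ≥ 0. -/
open MeasureTheory Real
open scoped ENNReal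

/-- The relative entropy (Kullback–Leibler divergence, in nats) `D(Q‖P) = ∫ log (dQ/dP) dQ`,
with value `∞` when `Q` is not absolutely continuous with respect to `P` or the integrand is
not integrable. -/
noncomputable def relEnt {Ω : Type*} [MeasurableSpace Ω] (Q P : Measure Ω) : ℝ≥0∞ :=
  open Classical in
  if Q ≪ P ∧ Integrable (fun ω => Real.log (Q.rnDeriv P ω).toReal) Q
  then ENNReal.ofReal (∫ ω, Real.log (Q.rnDeriv P ω).toReal ∂Q)
  else ⊤

/-!
Let `Λ(t) = log E[exp (t f)]`. The relative entropy of the tilted law is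
`D(P^{(t f)} ‖ P) = t Λ'(t) - Λ(t) = t² (Λ(t) / t)'`, so the hypothesis says exactly that
`Λ(t) / t - σ² t / 2` is nonincreasing on `(0, ∞)`. Its limit at `0⁺` is `E[f]` (Jensen from below;
`log x ≤ x - 1` and dominated convergence from above), whence `Λ(t) ≤ t E[f] + σ² t² / 2`, and
Chernoff's bound at `t = s / σ²` gives the tail estimate.
-/

open Filter Set Topology

lemma Real.abs_exp_mul_sub_one_div_le (x : ℝ) {t : ℝ} (ht₀ : 0 < t) (ht₁ : t ≤ 1) :
    |(exp (t * x) - 1) / t| ≤ |x| + |exp x - 1| := by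
  have hlow : x ≤ (exp (t * x) - 1) / t := by
    rw [le_div_iff₀ ht₀]
    linarith [add_one_le_exp (t * x)]
  have hup : (exp (t * x) - 1) / t ≤ exp x - 1 := by
    have hconv := convexOn_exp.2 (mem_univ 0) (mem_univ x) (sub_nonneg.2 ht₁) ht₀.le (by ring)
    simp only [smul_eq_mul, mul_zero, zero_add, exp_zero, mul_one] at hconv
    rw [div_le_iff₀ ht₀]
    linarith
  rw [abs_le]
  constructor <;>
    linarith [neg_abs_le x, le_abs_self (exp x - 1), abs_nonneg (exp x - 1), abs_nonneg x]

lemma Real.tendsto_exp_mul_sub_one_div_nhdsGT_zero (x : ℝ) :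
    Tendsto (fun t => (exp (t * x) - 1) / t) (𝓝[>] 0) (𝓝 x) := by
  have hderiv : HasDerivAt (fun t => exp (t * x)) x 0 := by
    simpa using ((hasDerivAt_id (0 : ℝ)).mul_const x).exp
  simpa [div_eq_inv_mul] using hderiv.tendsto_slope_zero_right

namespace ProbabilityTheory

variable {Ω : Type*} [MeasurableSpace Ω] {μ : Measure Ω} {X : Ω → ℝ}

lemma Ioi_subset_interior_integrableExpSet
    (h_int : ∀ t, 0 ≤ t → Integrable (fun ω => exp (t * X ω)) μ) :
    Ioi 0 ⊆ interior (integrableExpSet X μ) := by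
  rw [← interior_Ici]
  exact interior_mono fun t ht => h_int t ht

lemma antitoneOn_cgf_div_sub {v : ℝ} (hI : Ioi 0 ⊆ interior (integrableExpSet X μ))
    (hent : ∀ t, 0 < t → t * deriv (cgf X μ) t - cgf X μ t ≤ v * t ^ 2 / 2) :
    AntitoneOn (fun t => cgf X μ t / t - v * t / 2) (Ioi 0) := by
  have hderiv : ∀ t ∈ Ioi (0 : ℝ), HasDerivAt (fun t => cgf X μ t / t - v * t / 2)
      ((t * deriv (cgf X μ) t - cgf X μ t) / t ^ 2 - v / 2) t := by
    intro t ht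
    have hcgf := (analyticAt_cgf (hI ht)).differentiableAt.hasDerivAt
    exact ((hcgf.div (hasDerivAt_id' t) (ne_of_gt ht)).sub
      (((hasDerivAt_id' t).const_mul v).div_const 2)).congr_deriv (by ring)
  refine antitoneOn_of_hasDerivWithinAt_nonpos (convex_Ioi 0)
    (f' := fun t => (t * deriv (cgf X μ) t - cgf X μ t) / t ^ 2 - v / 2)
    (fun t ht => (hderiv t ht).continuousAt.continuousWithinAt) (fun t ht => ?_) (fun t ht => ?_)
  · rw [interior_Ioi] at ht ⊢
    exact (hderiv t ht).hasDerivWithinAt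
  · rw [interior_Ioi] at ht
    rw [sub_nonpos, div_le_iff₀ (pow_pos ht 2)]
    linarith [hent t ht]

variable [IsProbabilityMeasure μ]

lemma relEnt_tilted_mul_eq {t : ℝ} (ht : t ∈ interior (integrableExpSet X μ)) :
    relEnt (μ.tilted (t * X ·)) μ = ENNReal.ofReal (t * deriv (cgf X μ) t - cgf X μ t) := by
  have h_int : Integrable (fun ω => exp (t * X ω)) μ :=
    interior_subset (s := integrableExpSet X μ) ht
  have hllr : (fun ω => log ((μ.tilted (t * X ·)).rnDeriv μ ω).toReal)
      =ᵐ[μ.tilted (t * X ·)] fun ω => t * X ω - cgf X μ t :=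
    (tilted_absolutelyContinuous μ _).ae_le (log_rnDeriv_tilted_left_self h_int)
  have hX : Integrable X (μ.tilted (t * X ·)) := memLp_one_iff_integrable.1 (memLp_tilted_mul ht 1)
  have hllr_int : Integrable (fun ω => t * X ω - cgf X μ t) (μ.tilted (t * X ·)) :=
    (hX.const_mul t).sub (integrable_const _)
  have := isProbabilityMeasure_tilted h_int
  rw [relEnt, if_pos ⟨tilted_absolutelyContinuous μ _, hllr_int.congr hllr.symm⟩,
    integral_congr_ae hllr, integral_sub (hX.const_mul t) (integrable_const _),
    integral_const_mul, integral_tilted_mul_self ht]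
  simp

lemma mul_integral_le_cgf (hX : Integrable X μ) {t : ℝ}
    (ht : Integrable (fun ω => exp (t * X ω)) μ) : t * μ[X] ≤ cgf X μ t := by
  have hjensen := convexOn_exp.map_integral_le continuous_exp.continuousOn isClosed_univ
    (ae_of_all _ fun ω => mem_univ (t * X ω)) (hX.const_mul t) ht
  rw [integral_const_mul] at hjensen
  exact (le_log_iff_exp_le (mgf_pos ht)).2 hjensen

lemma tendsto_mgf_sub_one_div_nhdsGT_zero (hX : Integrable X μ)
    (h_int : ∀ t, 0 ≤ t → Integrable (fun ω => exp (t * X ω)) μ) :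
    Tendsto (fun t => (mgf X μ t - 1) / t) (𝓝[>] 0) (𝓝 μ[X]) := by
  have h_eq : ∀ᶠ t in 𝓝[>] 0, ∫ ω, (exp (t * X ω) - 1) / t ∂μ = (mgf X μ t - 1) / t := by
    filter_upwards [self_mem_nhdsWithin] with t (ht : 0 < t)
    rw [integral_div, integral_sub (h_int t ht.le) (integrable_const 1)]
    simp [mgf]
  have h_bound : Integrable (fun ω => |X ω| + |exp (X ω) - 1|) μ :=
    hX.abs.add (((h_int 1 zero_le_one).sub (integrable_const 1)).abs.congr
      (ae_of_all _ fun ω => by simp))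
  refine Tendsto.congr' h_eq (tendsto_integral_filter_of_dominated_convergence _ ?_ ?_ h_bound
    (ae_of_all _ fun ω => tendsto_exp_mul_sub_one_div_nhdsGT_zero (X ω)))
  · have hXm := hX.1
    exact Eventually.of_forall fun t => by fun_prop
  · filter_upwards [Ioc_mem_nhdsGT zero_lt_one] with t ht
    exact ae_of_all _ fun ω => abs_exp_mul_sub_one_div_le (X ω) ht.1 ht.2

lemma tendsto_cgf_div_nhdsGT_zero (hX : Integrable X μ)
    (h_int : ∀ t, 0 ≤ t → Integrable (fun ω => exp (t * X ω)) μ) :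
    Tendsto (fun t => cgf X μ t / t) (𝓝[>] 0) (𝓝 μ[X]) := by
  refine tendsto_of_tendsto_of_tendsto_of_le_of_le' tendsto_const_nhds
    (tendsto_mgf_sub_one_div_nhdsGT_zero hX h_int) ?_ ?_
  · filter_upwards [self_mem_nhdsWithin] with t (ht : 0 < t)
    rw [le_div_iff₀ ht, mul_comm]
    exact mul_integral_le_cgf hX (h_int t ht.le)
  · filter_upwards [self_mem_nhdsWithin] with t (ht : 0 < t)
    exact div_le_div_of_nonneg_right (log_le_sub_one_of_pos (mgf_pos (h_int t ht.le))) ht.le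

theorem cgf_le_of_mul_deriv_cgf_sub_cgf_le {v : ℝ} (hX : Integrable X μ)
    (h_int : ∀ t, 0 ≤ t → Integrable (fun ω => exp (t * X ω)) μ)
    (hent : ∀ t, 0 < t → t * deriv (cgf X μ) t - cgf X μ t ≤ v * t ^ 2 / 2)
    {t : ℝ} (ht : 0 ≤ t) :
    cgf X μ t ≤ t * μ[X] + v * t ^ 2 / 2 := by
  rcases ht.eq_or_lt with rfl | ht
  · simp
  have hanti := antitoneOn_cgf_div_sub (Ioi_subset_interior_integrableExpSet h_int) hent
  have hlim : Tendsto (fun s => cgf X μ s / s - v * s / 2) (𝓝[>] 0) (𝓝 (μ[X] - v * 0 / 2)) :=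
    (tendsto_cgf_div_nhdsGT_zero hX h_int).sub
      ((continuous_const.mul continuous_id).div_const 2).continuousWithinAt
  have hle : cgf X μ t / t - v * t / 2 ≤ μ[X] := by
    refine le_of_le_of_eq (ge_of_tendsto hlim ?_) (by ring)
    filter_upwards [Ioc_mem_nhdsGT ht] with s hs
    exact hanti hs.1 ht hs.2
  rw [sub_le_iff_le_add, div_le_iff₀ ht] at hle
  linarith

lemma measureReal_ge_add_le_exp_of_cgf_le {m v : ℝ}
    (h_int : ∀ t, 0 ≤ t → Integrable (fun ω => exp (t * X ω)) μ)
    (hcgf : ∀ t, 0 ≤ t → cgf X μ t ≤ t * m + v * t ^ 2 / 2) {ε : ℝ} (hε : 0 ≤ ε) :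
    μ.real {ω | m + ε ≤ X ω} ≤ exp (-ε ^ 2 / (2 * v)) := by
  rcases le_or_gt v 0 with hv | hv
  · calc μ.real {ω | m + ε ≤ X ω} ≤ 1 := measureReal_le_one
      _ ≤ exp (-ε ^ 2 / (2 * v)) :=
        one_le_exp (div_nonneg_of_nonpos (neg_nonpos.2 (sq_nonneg ε)) (by linarith))
  -- `ε / v` minimises the Chernoff exponent `-t ε + v t² / 2`
  have ht : 0 ≤ ε / v := by positivity
  calc μ.real {ω | m + ε ≤ X ω} ≤ exp (-(ε / v) * (m + ε) + cgf X μ (ε / v)) :=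
        measure_ge_le_exp_cgf _ ht (h_int _ ht)
    _ ≤ exp (-(ε / v) * (m + ε) + (ε / v * m + v * (ε / v) ^ 2 / 2)) := by
        gcongr
        exact hcgf _ ht
    _ = exp (-ε ^ 2 / (2 * v)) := by
        congr 1
        field

lemma log_integral_exp_mul_sub_eq {t : ℝ} (ht : Integrable (fun ω => exp (t * X ω)) μ) (c : ℝ) :
    log (∫ ω, exp (t * (X ω - c)) ∂μ) = cgf X μ t - t * c := by
  have hsplit : ∀ ω, exp (t * (X ω - c)) = exp (-(t * c)) * exp (t * X ω) := by
    intro ω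
    rw [← exp_add]
    ring_nf
  simp_rw [hsplit]
  rw [integral_const_mul]
  change log (exp (-(t * c)) * mgf X μ t) = log (mgf X μ t) - t * c
  rw [log_mul (exp_ne_zero _) (mgf_pos ht).ne', log_exp]
  ring

end ProbabilityTheory

open ProbabilityTheory

theorem herbst_argument_general
    {Ω : Type*} [MeasurableSpace Ω] (P : Measure Ω) [IsProbabilityMeasure P]
    (f : Ω → ℝ) (hfint : Integrable f P)
    (hexp : ∀ lam : ℝ, 0 ≤ lam → Integrable (fun ω => Real.exp (lam * f ω)) P)
    (σ : ℝ)
    (hD : ∀ lam : ℝ, 0 ≤ lam →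
      relEnt (P.tilted (fun ω => lam * f ω)) P ≤ ENNReal.ofReal (lam ^ 2 * σ ^ 2 / 2)) :
    (∀ lam : ℝ, 0 ≤ lam →
      Real.log (∫ ω, Real.exp (lam * (f ω - ∫ ω', f ω' ∂P)) ∂P) ≤ lam ^ 2 * σ ^ 2 / 2)
    ∧ (∀ t : ℝ, 0 ≤ t →
      P {ω | (∫ ω', f ω' ∂P) + t ≤ f ω} ≤ ENNReal.ofReal (Real.exp (-t ^ 2 / (2 * σ ^ 2)))) := by
  have hent : ∀ t, 0 < t → t * deriv (cgf f P) t - cgf f P t ≤ σ ^ 2 * t ^ 2 / 2 := by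
    intro t ht
    have h := hD t ht.le
    rw [relEnt_tilted_mul_eq (Ioi_subset_interior_integrableExpSet hexp ht),
      ENNReal.ofReal_le_ofReal_iff (by positivity)] at h
    linarith
  have hcgf : ∀ t, 0 ≤ t → cgf f P t ≤ t * P[f] + σ ^ 2 * t ^ 2 / 2 :=
    fun t ht => cgf_le_of_mul_deriv_cgf_sub_cgf_le hfint hexp hent ht
  refine ⟨fun lam hlam => ?_, fun t ht => ?_⟩
  · rw [log_integral_exp_mul_sub_eq (hexp lam hlam)]
    linarith [hcgf lam hlam]
  · rw [ENNReal.le_ofReal_iff_toReal_le (measure_ne_top _ _) (exp_nonneg _)]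
    exact measureReal_ge_add_le_exp_of_cgf_le hexp hcgf ht

/-- **The Herbst argument**: let `X ∼ P` and let `f` be a measurable function with
`E_P[exp (λ f)] < ∞` for all `λ ≥ 0`.  If the tilted distributions `P^{(λ f)}` satisfy
`D(P^{(λ f)} ‖ P) ≤ (1/2) λ² σ²` for all `λ ≥ 0`, then
`log E[exp (λ (f(X) - E[f(X)]))] ≤ λ² σ² / 2` for all `λ ≥ 0`, and consequently
`P[f(X) ≥ E[f(X)] + t] ≤ exp (-t² / (2 σ²))` for all `t ≥ 0`. -/
theorem herbst_argument
    {Ω : Type*} [MeasurableSpace Ω] (P : Measure Ω) [IsProbabilityMeasure P]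
    (f : Ω → ℝ) (hfmeas : Measurable f) (hfint : Integrable f P)
    (hexp : ∀ lam : ℝ, 0 ≤ lam → Integrable (fun ω => Real.exp (lam * f ω)) P)
    (σ : ℝ) (hσ : 0 < σ)
    (hD : ∀ lam : ℝ, 0 ≤ lam →
      relEnt (P.tilted (fun ω => lam * f ω)) P ≤ ENNReal.ofReal (lam ^ 2 * σ ^ 2 / 2)) :
    (∀ lam : ℝ, 0 ≤ lam →
      Real.log (∫ ω, Real.exp (lam * (f ω - ∫ ω', f ω' ∂P)) ∂P) ≤ lam ^ 2 * σ ^ 2 / 2)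
    ∧ (∀ t : ℝ, 0 ≤ t →
      P {ω | (∫ ω', f ω' ∂P) + t ≤ f ω} ≤ ENNReal.ofReal (Real.exp (-t ^ 2 / (2 * σ ^ 2)))) :=
  herbst_argument_general P f hfint hexp σ hD
end

section
/- Integral representation of the logarithmic moment-generating function via relative entropy: Let X ∼ P and let f be a measurable real-valued function such that ψ(λ) = log E[exp(λ(f(X) − E[f(X)]))] is finite for all λ in a neighborhood of [0, λ₀]. Then for every λ ∈ (0, λ₀], ψ(λ) = λ·∫₀^λ D(P^{(tf)} ‖ P)/t² dt. -/
open MeasureTheory Real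

/-- The relative entropy (in nats) `D(Q‖P) = ∫ log (dQ/dP) dQ`, as a real number (meaningful
when `Q ≪ P` and the integrand is `Q`-integrable). -/
noncomputable def relEntR {Ω : Type*} [MeasurableSpace Ω] (Q P : Measure Ω) : ℝ :=
  ∫ ω, Real.log (Q.rnDeriv P ω).toReal ∂Q

/-!
With `Λ` the cumulant-generating function of `f`, the tilted measure `P^{(t f)}` has density
`exp (t f - Λ t)`, so `D(P^{(t f)} ‖ P) = t Λ'(t) - Λ(t)`, which is `t²` times the derivative of
`t ↦ Λ(t) / t`. Integrating from `0`, where `Λ(t) / t → Λ'(0) = E f`, gives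
`Λ(λ) / λ - E f = ψ(λ) / λ`. Convexity of `Λ` makes the integrand nonnegative, hence integrable
up to `0`.
-/

open ProbabilityTheory Set Filter

section Calculus

variable {Λ Λ' : ℝ → ℝ}

lemma hasDerivAt_dslope_zero {t : ℝ} (ht : t ≠ 0) (hΛ0 : Λ 0 = 0) (h : HasDerivAt Λ (Λ' t) t) :
    HasDerivAt (dslope Λ 0) ((t * Λ' t - Λ t) / t ^ 2) t := by
  have hslope : dslope Λ 0 =ᶠ[nhds t] fun u => Λ u / u := by
    filter_upwards [eventually_ne_nhds ht] with u hu
    rw [dslope_of_ne _ hu, slope_def_field, hΛ0, sub_zero, sub_zero]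
  have hdiv := (h.div (hasDerivAt_id t) ht).congr_of_eventuallyEq hslope
  rwa [id_eq, mul_one, mul_comm (Λ' t)] at hdiv

lemma integral_mul_deriv_sub_div_sq {a : ℝ} (ha : 0 < a) (hΛ0 : Λ 0 = 0)
    (hderiv : ∀ t ∈ Icc 0 a, HasDerivAt Λ (Λ' t) t) (hle : ∀ t ∈ Ioo 0 a, Λ t ≤ t * Λ' t) :
    ∫ t in (0 : ℝ)..a, (t * Λ' t - Λ t) / t ^ 2 = Λ a / a - Λ' 0 := by
  have hderiv_dslope : ∀ t ∈ Ioo 0 a,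
      HasDerivAt (dslope Λ 0) ((t * Λ' t - Λ t) / t ^ 2) t := fun t ht =>
    hasDerivAt_dslope_zero ht.1.ne' hΛ0 (hderiv t (Ioo_subset_Icc_self ht))
  have hcont : ContinuousOn (dslope Λ 0) (Icc 0 a) := by
    intro t ht
    rcases eq_or_ne t 0 with rfl | ht0
    · exact (continuousAt_dslope_same.2 (hderiv 0 ht).differentiableAt).continuousWithinAt
    · exact (hasDerivAt_dslope_zero ht0 hΛ0 (hderiv t ht)).continuousAt.continuousWithinAt
  have hint : IntervalIntegrable (fun t => (t * Λ' t - Λ t) / t ^ 2) volume 0 a := by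
    refine intervalIntegral.intervalIntegrable_deriv_of_nonneg (g := dslope Λ 0) ?_ ?_ ?_
    · rwa [uIcc_of_le ha.le]
    · simpa [ha.le] using hderiv_dslope
    · simp only [ha.le, min_eq_left, max_eq_right]
      exact fun t ht => div_nonneg (sub_nonneg.2 (hle t ht)) (sq_nonneg t)
  rw [intervalIntegral.integral_eq_sub_of_hasDerivAt_of_le ha.le hcont hderiv_dslope hint,
    dslope_same, (hderiv 0 (left_mem_Icc.2 ha.le)).deriv, dslope_of_ne _ ha.ne', slope_def_field,
    hΛ0, sub_zero, sub_zero]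

end Calculus

namespace ProbabilityTheory

variable {Ω : Type*} [MeasurableSpace Ω] {μ : Measure Ω} {X : Ω → ℝ} {t : ℝ}

lemma convexOn_cgf : ConvexOn ℝ (interior (integrableExpSet X μ)) (cgf X μ) := by
  refine convexOn_of_deriv2_nonneg' convex_integrableExpSet.interior
    analyticOnNhd_cgf.differentiableOn analyticOnNhd_cgf.deriv.differentiableOn fun v hv => ?_
  rw [← iteratedDeriv_eq_iterate, ← variance_tilted_mul hv]
  exact variance_nonneg _ _

lemma cgf_le_mul_deriv_cgf [IsZeroOrProbabilityMeasure μ] (ht : 0 < t)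
    (h0 : 0 ∈ interior (integrableExpSet X μ)) (hmem : t ∈ interior (integrableExpSet X μ)) :
    cgf X μ t ≤ t * deriv (cgf X μ) t := by
  have := convexOn_cgf.slope_le_deriv h0 hmem ht (analyticAt_cgf hmem).differentiableAt
  rwa [slope_def_field, cgf_zero, sub_zero, sub_zero, div_le_iff₀ ht, mul_comm] at this

lemma cgf_sub_const [NeZero μ] (c : ℝ) (ht : Integrable (fun ω => exp (t * X ω)) μ) :
    cgf (fun ω => X ω - c) μ t = cgf X μ t - t * c := by
  simp_rw [cgf, sub_eq_add_neg, mgf_add_const, log_mul (mgf_pos' (NeZero.ne μ) ht).ne'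
    (exp_pos _).ne', log_exp, mul_neg]

end ProbabilityTheory

lemma relEntR_tilted_mul {Ω : Type*} [MeasurableSpace Ω] {μ : Measure Ω} [SigmaFinite μ]
    [NeZero μ] {X : Ω → ℝ} {t : ℝ} (ht : t ∈ interior (integrableExpSet X μ)) :
    relEntR (μ.tilted (t * X ·)) μ = t * deriv (cgf X μ) t - cgf X μ t := by
  have hexp : Integrable (fun ω => exp (t * X ω)) μ := interior_subset (s := integrableExpSet X μ) ht
  have := isProbabilityMeasure_tilted hexp
  have hlog := (log_rnDeriv_tilted_left_self hexp).filter_mono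
    (tilted_absolutelyContinuous μ (t * X ·)).ae_le
  rw [relEntR, integral_congr_ae hlog, integral_sub ((memLp_one_iff_integrable.1
      (memLp_tilted_mul ht 1)).const_mul t) (integrable_const _), integral_const_mul,
    integral_tilted_mul_self ht, integral_const, probReal_univ, one_smul]
  rfl

theorem lmgf_eq_integral_relEnt_general
    {Ω : Type*} [MeasurableSpace Ω] (P : Measure Ω) [IsProbabilityMeasure P]
    (f : Ω → ℝ)
    (lam₀ : ℝ)
    (ε : ℝ) (hε : 0 < ε)
    (hexp : ∀ t ∈ Set.Ioo (-ε) (lam₀ + ε), Integrable (fun ω => Real.exp (t * f ω)) P)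
    (lam : ℝ) (hlam : lam ∈ Set.Ioc 0 lam₀) :
    Real.log (∫ ω, Real.exp (lam * (f ω - ∫ ω', f ω' ∂P)) ∂P)
      = lam * ∫ t in (0 : ℝ)..lam, relEntR (P.tilted (fun ω => t * f ω)) P / t ^ 2 := by
  obtain ⟨hlam, hlam_le⟩ := hlam
  have hmem : ∀ t ∈ Icc 0 lam, t ∈ interior (integrableExpSet f P) := fun t ht =>
    interior_maximal hexp isOpen_Ioo ⟨by linarith [ht.1], by linarith [ht.2]⟩
  have h0 := hmem 0 (left_mem_Icc.2 hlam.le)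
  have hrel : ∫ t in (0 : ℝ)..lam, relEntR (P.tilted (fun ω => t * f ω)) P / t ^ 2
      = ∫ t in (0 : ℝ)..lam, (t * deriv (cgf f P) t - cgf f P t) / t ^ 2 :=
    intervalIntegral.integral_congr fun t ht => by
      rw [uIcc_of_le hlam.le] at ht
      rw [relEntR_tilted_mul (hmem t ht)]
  have hmean : deriv (cgf f P) 0 = ∫ ω, f ω ∂P := by
    simp [deriv_cgf_zero h0]
  change cgf (fun ω => f ω - ∫ ω', f ω' ∂P) P lam = _
  rw [cgf_sub_const _ (hexp lam ⟨by linarith, by linarith⟩), hrel,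
    integral_mul_deriv_sub_div_sq hlam cgf_zero
      (fun t ht => (analyticAt_cgf (hmem t ht)).differentiableAt.hasDerivAt)
      (fun t ht => cgf_le_mul_deriv_cgf ht.1 h0 (hmem t (Ioo_subset_Icc_self ht))),
    hmean]
  field_simp

/-- **Integral representation of the logarithmic moment-generating function via relative
entropy**: let `X ∼ P` and let `f` be measurable such that
`ψ(λ) = log E[exp (λ (f(X) - E[f(X)]))]` is finite for all `λ` in a neighborhood of `[0, λ₀]`.
Then for every `λ ∈ (0, λ₀]`, `ψ(λ) = λ ∫₀^λ D(P^{(t f)} ‖ P) / t² dt`. -/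
theorem lmgf_eq_integral_relEnt
    {Ω : Type*} [MeasurableSpace Ω] (P : Measure Ω) [IsProbabilityMeasure P]
    (f : Ω → ℝ) (hfmeas : Measurable f) (hfint : Integrable f P)
    (lam₀ : ℝ) (hlam₀ : 0 < lam₀)
    (ε : ℝ) (hε : 0 < ε)
    (hexp : ∀ t ∈ Set.Ioo (-ε) (lam₀ + ε), Integrable (fun ω => Real.exp (t * f ω)) P)
    (lam : ℝ) (hlam : lam ∈ Set.Ioc 0 lam₀) :
    Real.log (∫ ω, Real.exp (lam * (f ω - ∫ ω', f ω' ∂P)) ∂P)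
      = lam * ∫ t in (0 : ℝ)..lam, relEntR (P.tilted (fun ω => t * f ω)) P / t ^ 2 :=
  lmgf_eq_integral_relEnt_general P f lam₀ ε hε hexp lam hlam
end

section
/- Bernoulli logarithmic Sobolev inequality: Let P = Bern(1/2)^{⊗n} be the uniform distribution on {0,1}ⁿ and X ∼ P. For every function f : {0,1}ⁿ → ℝ, D(P^{(f)} ‖ P) ≤ (1/8)·E[|Df(X)|²·e^{f(X)}] / E[e^{f(X)}], where Df(xⁿ) = √(Σ_{i=1}^n |f(xⁿ) − f(xⁿ ⊕ eᵢ)|²) and xⁿ ⊕ eᵢ denotes xⁿ with its i-th bit flipped. -/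
open MeasureTheory ProbabilityTheory Real
open scoped ENNReal

/-! Since `dP^{(f)}/dP = e^f / E[e^f]`, the inequality says `Ent_P(e^f) ≤ E[|Df|² e^f] / 8`,
where `Ent_P(g) = E[g log g] - E[g] log E[g]`. Entropy tensorizes: splitting off the first bit,
the entropy on `{0,1}ⁿ⁺¹` is the sum of the entropies of the two restrictions to `{0,1}ⁿ` plus
the two-point entropy of their masses `U = ∑ e^{f(0,y)}`, `V = ∑ e^{f(1,y)}`. That two-point
entropy is convex and positively homogeneous, hence subadditive, so it is at most the sum over `y`
of the two-point entropies of `(e^{f(0,y)}, e^{f(1,y)})`, and the inequality reduces by induction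
to `n = 1`. There, writing the two values of `f` as `m + t` and `m - t`, it becomes
`t tanh t - log cosh t ≤ t² / 2`, which holds because the difference vanishes at `0` and its
derivative is `t tanh² t`. -/

open Finset

lemma mul_sinh_sub_cosh_mul_log_cosh_le (t : ℝ) :
    t * sinh t - cosh t * log (cosh t) ≤ t ^ 2 / 2 * cosh t := by
  set u : ℝ → ℝ := fun s ↦ s ^ 2 / 2 * cosh s - s * sinh s + cosh s * log (cosh s)
  have hu : ∀ s, HasDerivAt u (s ^ 2 / 2 * sinh s + sinh s * log (cosh s)) s := fun s ↦ by
    have hlog := (hasDerivAt_cosh s).log (cosh_pos s).ne'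
    refine ((((hasDerivAt_pow 2 s).div_const 2).mul (hasDerivAt_cosh s)).sub
      ((hasDerivAt_id s).mul (hasDerivAt_sinh s)) |>.add
        ((hasDerivAt_cosh s).mul hlog)).congr_deriv ?_
    field_simp [(cosh_pos s).ne']
    simp only [id]
    ring
  have hmono : MonotoneOn u (Set.Ici 0) := by
    refine monotoneOn_of_deriv_nonneg (convex_Ici 0)
      (fun s _ ↦ (hu s).continuousAt.continuousWithinAt)
      (fun s _ ↦ (hu s).differentiableAt.differentiableWithinAt) fun s hs ↦ ?_
    rw [interior_Ici, Set.mem_Ioi] at hs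
    have := sinh_pos_iff.mpr hs
    have := log_nonneg (one_le_cosh s)
    rw [(hu s).deriv]
    positivity
  have hu_nonneg : ∀ s, 0 ≤ s → 0 ≤ u s := fun s hs ↦ by
    simpa [u] using hmono Set.self_mem_Ici hs hs
  rcases le_total 0 t with ht | ht
  · have := hu_nonneg t ht
    simp only [u] at this
    linarith
  · have := hu_nonneg (-t) (neg_nonneg.mpr ht)
    simp only [u, cosh_neg, sinh_neg] at this
    linarith

/-- Twice the entropy, under the uniform measure on `{0,1}`, of the function taking the values
`u` and `v`. -/
noncomputable def pairEntropy (u v : ℝ) : ℝ :=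
  u * log u + v * log v - (u + v) * log ((u + v) / 2)

lemma pairEntropy_exp_le (a b : ℝ) :
    pairEntropy (exp a) (exp b) ≤ (a - b) ^ 2 * (exp a + exp b) / 8 := by
  set m := (a + b) / 2
  set t := (a - b) / 2
  have ha : exp a = exp m * (cosh t + sinh t) := by
    rw [cosh_add_sinh, ← exp_add]; congr 1; ring
  have hb : exp b = exp m * (cosh t - sinh t) := by
    rw [cosh_sub_sinh, ← exp_add]; congr 1; ring
  have hlog : log ((exp a + exp b) / 2) = m + log (cosh t) := by
    rw [ha, hb, show exp m * (cosh t + sinh t) + exp m * (cosh t - sinh t)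
        = exp m * cosh t * 2 by ring, mul_div_cancel_right₀ _ two_ne_zero,
      log_mul (exp_pos m).ne' (cosh_pos t).ne', log_exp]
  have key := mul_le_mul_of_nonneg_left (mul_sinh_sub_cosh_mul_log_cosh_le t) (exp_pos m).le
  rw [pairEntropy, log_exp, log_exp, hlog, ha, hb, show a = m + t by ring,
    show b = m - t by ring]
  nlinarith [key]

/-- The log-sum inequality: Jensen for `x ↦ x log x` at the points `a i / b i`, with weights
proportional to `b i`. -/
lemma sum_mul_log_sum_div_sum_le {ι : Type*} (s : Finset ι) {a b : ι → ℝ}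
    (ha : ∀ i ∈ s, 0 ≤ a i) (hb : ∀ i ∈ s, 0 < b i) :
    (∑ i ∈ s, a i) * log ((∑ i ∈ s, a i) / ∑ i ∈ s, b i)
      ≤ ∑ i ∈ s, a i * log (a i / b i) := by
  rcases s.eq_empty_or_nonempty with rfl | hs
  · simp
  have hB : 0 < ∑ i ∈ s, b i := sum_pos hb hs
  have jensen := convexOn_mul_log.map_sum_le (t := s) (w := fun i ↦ b i / ∑ j ∈ s, b j)
    (p := fun i ↦ a i / b i) (fun i hi ↦ div_nonneg (hb i hi).le hB.le)
    (by rw [← sum_div, div_self hB.ne'])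
    fun i hi ↦ Set.mem_Ici.mpr (div_nonneg (ha i hi) (hb i hi).le)
  have hmean : ∑ i ∈ s, (b i / ∑ j ∈ s, b j) • (a i / b i)
      = (∑ i ∈ s, a i) / ∑ j ∈ s, b j := by
    rw [sum_div]
    exact sum_congr rfl fun i hi ↦ by rw [smul_eq_mul]; field_simp [(hb i hi).ne']
  have hmean_mul_log : ∑ i ∈ s, (b i / ∑ j ∈ s, b j) • (a i / b i * log (a i / b i))
      = (∑ i ∈ s, a i * log (a i / b i)) / ∑ j ∈ s, b j := by
    rw [sum_div]
    exact sum_congr rfl fun i hi ↦ by rw [smul_eq_mul]; field_simp [(hb i hi).ne']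
  rw [hmean, hmean_mul_log, le_div_iff₀ hB] at jensen
  calc _ = (∑ i ∈ s, a i) / (∑ j ∈ s, b j) * log ((∑ i ∈ s, a i) / ∑ j ∈ s, b j)
        * ∑ j ∈ s, b j := by field_simp
    _ ≤ _ := jensen

lemma pairEntropy_sum_le {ι : Type*} (s : Finset ι) {u v : ι → ℝ}
    (hu : ∀ i ∈ s, 0 < u i) (hv : ∀ i ∈ s, 0 < v i) :
    pairEntropy (∑ i ∈ s, u i) (∑ i ∈ s, v i) ≤ ∑ i ∈ s, pairEntropy (u i) (v i) := by
  rcases s.eq_empty_or_nonempty with rfl | hs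
  · simp [pairEntropy]
  have hsplit : ∀ {x y : ℝ}, 0 < x → 0 < y →
      pairEntropy x y = x * log (x / (x + y)) + y * log (y / (x + y)) + (x + y) * log 2 := by
    intro x y hx hy
    rw [pairEntropy, log_div hx.ne' (by positivity), log_div hy.ne' (by positivity),
      log_div (by positivity) two_ne_zero]
    ring
  have huv : ∀ i ∈ s, 0 < u i + v i := fun i hi ↦ add_pos (hu i hi) (hv i hi)
  have hU := sum_mul_log_sum_div_sum_le s (fun i hi ↦ (hu i hi).le) huv
  have hV := sum_mul_log_sum_div_sum_le s (fun i hi ↦ (hv i hi).le) huv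
  rw [sum_add_distrib] at hU hV
  rw [hsplit (sum_pos hu hs) (sum_pos hv hs), sum_congr rfl fun i hi ↦ hsplit (hu i hi) (hv i hi),
    sum_add_distrib, sum_add_distrib, ← sum_mul, sum_add_distrib]
  linarith

lemma Fin.sum_univ_bool_cons {n : ℕ} {M : Type*} [AddCommMonoid M]
    (g : (Fin (n + 1) → Bool) → M) :
    ∑ x, g x = ∑ y, (g (Fin.cons false y) + g (Fin.cons true y)) := by
  rw [← (Fin.consEquiv fun _ ↦ Bool).sum_comp, Fintype.sum_prod_type, Fintype.sum_bool,
    ← sum_add_distrib]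
  exact sum_congr rfl fun _ _ ↦ add_comm _ _

/-- `2ⁿ Ent_P(e^f)` for the uniform measure `P` on `{0,1}ⁿ`. -/
noncomputable def expEntropy {n : ℕ} (f : (Fin n → Bool) → ℝ) : ℝ :=
  ∑ x, exp (f x) * f x - (∑ x, exp (f x)) * log ((∑ x, exp (f x)) / 2 ^ n)

/-- `2ⁿ E_P[|Df|² e^f]` for the uniform measure `P` on `{0,1}ⁿ`. -/
noncomputable def flipEnergy {n : ℕ} (f : (Fin n → Bool) → ℝ) : ℝ :=
  ∑ x, (∑ i, (f x - f (Function.update x i (!x i))) ^ 2) * exp (f x)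

section Tensorization

variable {n : ℕ}

lemma expEntropy_cons (f : (Fin (n + 1) → Bool) → ℝ) :
    expEntropy f = expEntropy (fun y ↦ f (Fin.cons false y))
      + expEntropy (fun y ↦ f (Fin.cons true y))
      + pairEntropy (∑ y, exp (f (Fin.cons false y))) (∑ y, exp (f (Fin.cons true y))) := by
  have hpos : ∀ b : Bool, 0 < ∑ y : Fin n → Bool, exp (f (Fin.cons b y)) :=
    fun b ↦ sum_pos (fun y _ ↦ exp_pos _) univ_nonempty
  have h2 : (0 : ℝ) < 2 ^ n := by positivity
  simp only [expEntropy, pairEntropy, Fin.sum_univ_bool_cons (fun x ↦ exp (f x) * f x),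
    Fin.sum_univ_bool_cons (fun x ↦ exp (f x)), sum_add_distrib]
  rw [log_div (hpos false).ne' h2.ne', log_div (hpos true).ne' h2.ne',
    log_div (add_pos (hpos false) (hpos true)).ne' (by positivity),
    log_div (add_pos (hpos false) (hpos true)).ne' two_ne_zero, pow_succ,
    log_mul h2.ne' two_ne_zero]
  ring

lemma flipEnergy_cons (f : (Fin (n + 1) → Bool) → ℝ) :
    flipEnergy f = flipEnergy (fun y ↦ f (Fin.cons false y))
      + flipEnergy (fun y ↦ f (Fin.cons true y))
      + ∑ y, (f (Fin.cons false y) - f (Fin.cons true y)) ^ 2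
          * (exp (f (Fin.cons false y)) + exp (f (Fin.cons true y))) := by
  have hflip : ∀ (b : Bool) (y : Fin n → Bool),
      ∑ i, (f (Fin.cons b y) - f (Function.update (Fin.cons b y : Fin (n + 1) → Bool) i
        (!(Fin.cons b y : Fin (n + 1) → Bool) i))) ^ 2
      = (f (Fin.cons b y) - f (Fin.cons (!b) y)) ^ 2
        + ∑ i, (f (Fin.cons b y) - f (Fin.cons b (Function.update y i (!y i)))) ^ 2 := by
    intro b y
    simp only [Fin.sum_univ_succ, Fin.cons_zero, Fin.update_cons_zero, Fin.cons_succ,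
      Fin.cons_update]
  simp only [flipEnergy, Fin.sum_univ_bool_cons, hflip, ← sum_add_distrib]
  refine sum_congr rfl fun y _ ↦ ?_
  simp only [Bool.not_false, Bool.not_true]
  ring

lemma expEntropy_le_flipEnergy (f : (Fin n → Bool) → ℝ) : expEntropy f ≤ flipEnergy f / 8 := by
  induction n with
  | zero => simp [expEntropy, flipEnergy]
  | succ n ih =>
    have hpair := pairEntropy_sum_le univ (fun y _ ↦ exp_pos (f (Fin.cons false y)))
      (fun y _ ↦ exp_pos (f (Fin.cons true y)))
    have htwo := sum_le_sum fun y (_ : y ∈ univ) ↦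
      pairEntropy_exp_le (f (Fin.cons false y)) (f (Fin.cons true y))
    rw [← sum_div] at htwo
    rw [expEntropy_cons, flipEnergy_cons]
    linarith [ih fun y ↦ f (Fin.cons false y), ih fun y ↦ f (Fin.cons true y)]

end Tensorization

lemma relEnt_tilted_self {Ω : Type*} [MeasurableSpace Ω] {μ : Measure Ω} [SigmaFinite μ]
    [NeZero μ] {f : Ω → ℝ} (hf : Integrable (fun x ↦ exp (f x)) μ)
    (hfQ : Integrable f (μ.tilted f)) :
    relEnt (μ.tilted f) μ = ENNReal.ofReal (∫ x, f x ∂μ.tilted f - log (∫ x, exp (f x) ∂μ)) := by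
  have hlog := (log_rnDeriv_tilted_left_self hf).filter_mono
    (tilted_absolutelyContinuous μ f).ae_le
  have := isProbabilityMeasure_tilted hf
  have hint := hfQ.sub (integrable_const (log (∫ x, exp (f x) ∂μ)))
  rw [relEnt, if_pos ⟨tilted_absolutelyContinuous μ f, hint.congr hlog.symm⟩,
    integral_congr_ae hlog, integral_sub hfQ (integrable_const _), integral_const]
  simp

lemma PMF.integral_uniformOfFintype {α : Type*} [Fintype α] [Nonempty α] [MeasurableSpace α]
    [MeasurableSingletonClass α] (g : α → ℝ) :
    ∫ x, g x ∂(PMF.uniformOfFintype α).toMeasure = (∑ x, g x) / Fintype.card α := by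
  simp [PMF.integral_eq_sum, ← mul_sum, div_eq_inv_mul]

/-- **Bernoulli logarithmic Sobolev inequality**: let `P = Bern(1/2)^{⊗n}` be the uniform
distribution on `{0,1}ⁿ` and `X ∼ P`.  For every `f : {0,1}ⁿ → ℝ`,
`D(P^{(f)} ‖ P) ≤ (1/8) E[|Df(X)|² e^{f(X)}] / E[e^{f(X)}]`, where
`|Df(x)|² = ∑ i, |f(x) - f(x ⊕ eᵢ)|²` and `x ⊕ eᵢ` is `x` with its `i`-th bit flipped. -/
theorem bernoulli_log_sobolev
    {n : ℕ} (P : Measure (Fin n → Bool))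
    (hP : P = (PMF.uniformOfFintype (Fin n → Bool)).toMeasure)
    (f : (Fin n → Bool) → ℝ) :
    relEnt (P.tilted f) P
      ≤ ENNReal.ofReal ((1 / 8) *
          (∫ x, (∑ i : Fin n, (f x - f (Function.update x i (!(x i)))) ^ 2) * Real.exp (f x) ∂P)
            / ∫ x, Real.exp (f x) ∂P) := by
  subst hP
  have hcard : (Fintype.card (Fin n → Bool) : ℝ) = 2 ^ n := by simp
  rw [relEnt_tilted_self .of_finite .of_finite, integral_tilted]
  simp only [PMF.integral_uniformOfFintype, hcard]
  have hS : 0 < ∑ x, exp (f x) := sum_pos (fun x _ ↦ exp_pos _) univ_nonempty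
  have hlhs : (∑ x, (exp (f x) / ((∑ x, exp (f x)) / 2 ^ n)) • f x) / 2 ^ n
      - log ((∑ x, exp (f x)) / 2 ^ n) = expEntropy f / ∑ x, exp (f x) := by
    simp_rw [expEntropy, smul_eq_mul, div_mul_eq_mul_div, ← sum_div]
    field_simp
  have hrhs : 1 / 8 * ((∑ x, (∑ i, (f x - f (Function.update x i (!x i))) ^ 2) * exp (f x)) / 2 ^ n)
      / ((∑ x, exp (f x)) / 2 ^ n) = flipEnergy f / 8 / ∑ x, exp (f x) := by
    rw [flipEnergy]
    field_simp
  rw [hlhs, hrhs]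
  exact ENNReal.ofReal_le_ofReal (div_le_div_of_nonneg_right (expEntropy_le_flipEnergy f) hS.le)
end

section
/- Maurer's variance representation of the relative entropy: Let X be a random variable with law P and let f be a measurable real-valued function such that E_P[exp(λf(X))] < ∞ for all λ in a neighborhood of [0, λ₀]. Then for every λ ∈ [0, λ₀], D(P^{(λf)} ‖ P) = ∫₀^λ ∫_t^λ Var^{(sf)}[f(X)] ds dt, where Var^{(sf)}[f(X)] denotes the variance of f(X) under the tilted distribution P^{(sf)}. -/
open MeasureTheory ProbabilityTheory Real

theorem integral_integral_eq_mul_deriv_sub {ψ ψ' ψ'' : ℝ → ℝ} {a b : ℝ} (hab : a ≤ b)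
    (hψ : ∀ x ∈ Set.Icc a b, HasDerivAt ψ (ψ' x) x)
    (hψ' : ∀ x ∈ Set.Icc a b, HasDerivAt ψ' (ψ'' x) x)
    (hψ'' : ContinuousOn ψ'' (Set.Icc a b)) :
    ∫ t in a..b, ∫ s in t..b, ψ'' s = (b - a) * ψ' b - (ψ b - ψ a) := by
  have hψ'_int : IntervalIntegrable ψ' volume a b :=
    ContinuousOn.intervalIntegrable fun x hx =>
      (hψ' x (Set.uIcc_of_le hab ▸ hx)).continuousAt.continuousWithinAt
  have inner : ∀ t ∈ Set.uIcc a b, ∫ s in t..b, ψ'' s = ψ' b - ψ' t := by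
    intro t ht
    rw [Set.uIcc_of_le hab] at ht
    have hsub : Set.uIcc t b ⊆ Set.Icc a b := by
      rw [Set.uIcc_of_le ht.2]
      exact Set.Icc_subset_Icc_left ht.1
    exact intervalIntegral.integral_eq_sub_of_hasDerivAt (fun s hs => hψ' s (hsub hs))
      (hψ''.mono hsub).intervalIntegrable
  rw [intervalIntegral.integral_congr inner,
    intervalIntegral.integral_sub intervalIntegrable_const hψ'_int,
    intervalIntegral.integral_const, smul_eq_mul,
    intervalIntegral.integral_eq_sub_of_hasDerivAt (fun x hx => hψ x (Set.uIcc_of_le hab ▸ hx))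
      hψ'_int]

section CumulantGeneratingFunction

variable {Ω : Type*} [MeasurableSpace Ω] {μ : Measure Ω} {X : Ω → ℝ} {t : ℝ}

theorem hasDerivAt_cgf (ht : t ∈ interior (integrableExpSet X μ)) :
    HasDerivAt (cgf X μ) (deriv (cgf X μ) t) t :=
  (analyticAt_cgf ht).differentiableAt.hasDerivAt

theorem hasDerivAt_deriv_cgf (ht : t ∈ interior (integrableExpSet X μ)) :
    HasDerivAt (deriv (cgf X μ)) (iteratedDeriv 2 (cgf X μ) t) t := by
  rw [iteratedDeriv_succ, iteratedDeriv_one]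
  exact (analyticAt_cgf ht).deriv.differentiableAt.hasDerivAt

theorem continuousOn_iteratedDeriv_two_cgf :
    ContinuousOn (iteratedDeriv 2 (cgf X μ)) (interior (integrableExpSet X μ)) := by
  intro t ht
  rw [iteratedDeriv_succ, iteratedDeriv_one]
  exact (analyticAt_cgf ht).deriv.deriv.continuousAt.continuousWithinAt

theorem relEntR_tilted_mul_self [IsProbabilityMeasure μ]
    (ht : t ∈ interior (integrableExpSet X μ)) :
    relEntR (μ.tilted (t * X ·)) μ = t * deriv (cgf X μ) t - cgf X μ t := by
  have hint : Integrable (fun ω => exp (t * X ω)) μ :=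
    interior_subset (s := integrableExpSet X μ) ht
  have : IsProbabilityMeasure (μ.tilted (t * X ·)) := isProbabilityMeasure_tilted hint
  have hX : Integrable X (μ.tilted (t * X ·)) :=
    memLp_one_iff_integrable.1 (memLp_tilted_mul ht 1)
  have hlog := (log_rnDeriv_tilted_left_self hint).filter_mono
    (tilted_absolutelyContinuous μ (t * X ·)).ae_le
  rw [relEntR, integral_congr_ae hlog, integral_sub (hX.const_mul t) (integrable_const _),
    integral_const_mul, integral_tilted_mul_self ht]
  simp [cgf, mgf]

end CumulantGeneratingFunction

theorem maurer_relEnt_eq_double_integral_variance_general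
    {Ω : Type*} [MeasurableSpace Ω] (P : Measure Ω) [IsProbabilityMeasure P]
    (f : Ω → ℝ)
    (lam₀ : ℝ)
    (ε : ℝ) (hε : 0 < ε)
    (hexp : ∀ t ∈ Set.Ioo (-ε) (lam₀ + ε), Integrable (fun ω => Real.exp (t * f ω)) P)
    (lam : ℝ) (hlam : lam ∈ Set.Icc 0 lam₀) :
    relEntR (P.tilted (fun ω => lam * f ω)) P
      = ∫ t in (0 : ℝ)..lam, ∫ s in t..lam, variance f (P.tilted (fun ω => s * f ω)) := by
  have hI : Set.Icc 0 lam ⊆ interior (integrableExpSet f P) :=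
    (Set.Icc_subset_Ioo (by linarith) (by linarith [hlam.2])).trans
      (interior_maximal hexp isOpen_Ioo)
  have hvar : ∀ t ∈ Set.uIcc 0 lam, ∀ s ∈ Set.uIcc t lam,
      variance f (P.tilted (fun ω => s * f ω)) = iteratedDeriv 2 (cgf f P) s := by
    intro t ht s hs
    rw [Set.uIcc_of_le hlam.1] at ht
    rw [Set.uIcc_of_le ht.2] at hs
    exact variance_tilted_mul (hI ⟨ht.1.trans hs.1, hs.2⟩)
  rw [intervalIntegral.integral_congr fun t ht => intervalIntegral.integral_congr (hvar t ht),
    integral_integral_eq_mul_deriv_sub hlam.1 (fun t ht => hasDerivAt_cgf (hI ht))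
      (fun t ht => hasDerivAt_deriv_cgf (hI ht)) (continuousOn_iteratedDeriv_two_cgf.mono hI),
    relEntR_tilted_mul_self (hI ⟨hlam.1, le_rfl⟩), cgf_zero]
  ring

/-- **Maurer's variance representation of the relative entropy**: let `X ∼ P` and let `f` be
measurable with `E_P[exp (λ f)] < ∞` for all `λ` in a neighborhood of `[0, λ₀]`.  Then for
every `λ ∈ [0, λ₀]`,
`D(P^{(λ f)} ‖ P) = ∫₀^λ ∫_t^λ Var^{(s f)}[f(X)] ds dt`,
where `Var^{(s f)}[f(X)]` is the variance of `f(X)` under the tilted distribution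
`P^{(s f)}`. -/
theorem maurer_relEnt_eq_double_integral_variance
    {Ω : Type*} [MeasurableSpace Ω] (P : Measure Ω) [IsProbabilityMeasure P]
    (f : Ω → ℝ) (hfmeas : Measurable f)
    (lam₀ : ℝ) (hlam₀ : 0 ≤ lam₀)
    (ε : ℝ) (hε : 0 < ε)
    (hexp : ∀ t ∈ Set.Ioo (-ε) (lam₀ + ε), Integrable (fun ω => Real.exp (t * f ω)) P)
    (lam : ℝ) (hlam : lam ∈ Set.Icc 0 lam₀) :
    relEntR (P.tilted (fun ω => lam * f ω)) P
      = ∫ t in (0 : ℝ)..lam, ∫ s in t..lam, variance f (P.tilted (fun ω => s * f ω)) :=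
  maurer_relEnt_eq_double_integral_variance_general P f lam₀ ε hε hexp lam hlam
end

section
/- Maurer's method for log-Sobolev inequalities: Let X ∼ P, let f be a measurable real-valued function with E_P[exp(λf(X))] < ∞ for all λ ≥ 0, and suppose there exist a constant c > 0 and a number Γ ≥ 0 such that Var^{(λf)}[f(X)] ≤ c·Γ² for all λ ≥ 0, where Var^{(λf)} denotes variance under the tilted distribution P^{(λf)}. Then D(P^{(λf)} ‖ P) ≤ (1/2)·λ²·c·Γ² for all λ ≥ 0. -/
open MeasureTheory ProbabilityTheory Real
open scoped ENNReal

/-!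
Let `ψ(λ) = log E[exp (λ f)]` be the cumulant generating function. The tilted measure has
density `exp (λ f - ψ λ)`, so `D(P^{(λ f)} ‖ P) = λ ψ'(λ) - ψ(λ)`, while
`ψ''(λ) = Var^{(λ f)}[f] ≤ c Γ²`. Integrating `ψ'(λ) - ψ'(s) ≤ c Γ² (λ - s)` over `s ∈ (ε, λ]`
gives `λ ψ'(λ) - ψ(λ) ≤ ε ψ'(λ) - ψ(ε) + c Γ² (λ - ε)² / 2`, and `ψ(ε) → ψ(0) = 0` as `ε → 0⁺`.
The detour through `ε` is needed because `f` need not be integrable, so `ψ` need not be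
differentiable at `0`; it is only right continuous there.
-/

open Filter Set Topology

lemma monotoneOn_Ioc_of_hasDerivAt_nonneg {f f' : ℝ → ℝ} {a b : ℝ}
    (hf : ∀ x ∈ Ioc a b, HasDerivAt f (f' x) x) (hf' : ∀ x ∈ Ioo a b, 0 ≤ f' x) :
    MonotoneOn f (Ioc a b) :=
  monotoneOn_of_hasDerivWithinAt_nonneg (convex_Ioc a b)
    (fun x hx => (hf x hx).continuousAt.continuousWithinAt)
    (fun x hx => (hf x (interior_subset hx)).hasDerivWithinAt)
    (by simpa only [interior_Ioc] using hf')

theorem mul_sub_le_of_hasDerivAt_of_deriv_le {ψ m v : ℝ → ℝ} {K t : ℝ} (ht : 0 < t)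
    (hψ : ∀ s ∈ Ioc 0 t, HasDerivAt ψ (m s) s) (hm : ∀ s ∈ Ioc 0 t, HasDerivAt m (v s) s)
    (hv : ∀ s ∈ Ioc 0 t, v s ≤ K) (hψ0 : Tendsto ψ (𝓝[>] 0) (𝓝 0)) :
    t * m t - ψ t ≤ K * t ^ 2 / 2 := by
  have ht_mem : t ∈ Ioc 0 t := ⟨ht, le_rfl⟩
  have hm_sub : ∀ s ∈ Ioc 0 t, m t - m s ≤ K * (t - s) := by
    intro s hs
    have hmono := monotoneOn_Ioc_of_hasDerivAt_nonneg (f := fun s => K * s - m s)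
      (fun x hx => (((hasDerivAt_id' x).const_mul K).sub (hm x hx)).congr_deriv (by ring))
      (fun x hx => sub_nonneg.2 (hv x (Ioo_subset_Ioc_self hx)))
    linarith [hmono hs ht_mem hs.2]
  set k : ℝ → ℝ := fun s => ψ s - s * m t - K * (t - s) ^ 2 / 2
  have hk : MonotoneOn k (Ioc 0 t) := by
    refine monotoneOn_Ioc_of_hasDerivAt_nonneg (f' := fun s => m s - m t + K * (t - s))
      (fun x hx => ?_) (fun x hx => by linarith [hm_sub x (Ioo_subset_Ioc_self hx)])
    exact (((hψ x hx).sub ((hasDerivAt_id' x).mul_const (m t))).sub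
      ((((hasDerivAt_id' x).const_sub t).pow 2).const_mul K |>.div_const 2)).congr_deriv
      (by ring)
  have hpoly : Tendsto (fun s => s * m t + K * (t - s) ^ 2 / 2) (𝓝[>] 0) (𝓝 (K * t ^ 2 / 2)) :=
    (Continuous.tendsto' (by fun_prop) 0 _ (by simp)).mono_left nhdsWithin_le_nhds
  have hk0 : Tendsto k (𝓝[>] 0) (𝓝 (0 - K * t ^ 2 / 2)) :=
    (hψ0.sub hpoly).congr fun s => by simp only [k]; ring
  have hkt : 0 - K * t ^ 2 / 2 ≤ k t :=
    le_of_tendsto hk0 <| by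
      filter_upwards [Ioo_mem_nhdsGT ht] with s hs
      exact hk ⟨hs.1, hs.2.le⟩ ht_mem hs.2.le
  simp only [k, sub_self] at hkt
  linarith

lemma exp_mul_le_exp_mul_add_exp_mul {a b t x : ℝ} (hat : a ≤ t) (htb : t ≤ b) :
    exp (t * x) ≤ exp (a * x) + exp (b * x) := by
  rcases le_total 0 x with hx | hx
  · linarith [exp_le_exp.2 (mul_le_mul_of_nonneg_right htb hx), exp_pos (a * x)]
  · linarith [exp_le_exp.2 (mul_le_mul_of_nonpos_right hat hx), exp_pos (b * x)]

namespace ProbabilityTheory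

variable {Ω : Type*} [MeasurableSpace Ω] {X : Ω → ℝ} {μ : Measure Ω}

lemma continuousOn_mgf_Icc {a b : ℝ} (ha : Integrable (fun ω => exp (a * X ω)) μ)
    (hb : Integrable (fun ω => exp (b * X ω)) μ) : ContinuousOn (mgf X μ) (Icc a b) :=
  continuousOn_of_dominated
    (fun t ht => (integrable_exp_mul_of_le_of_le ha hb ht.1 ht.2).aestronglyMeasurable)
    (fun t ht => ae_of_all _ fun ω => by
      rw [norm_of_nonneg (exp_pos _).le]
      exact exp_mul_le_exp_mul_add_exp_mul ht.1 ht.2)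
    (ha.add hb) (ae_of_all _ fun ω => by fun_prop)

lemma tendsto_cgf_nhdsGT_zero [IsProbabilityMeasure μ] {u : ℝ} (hu : 0 < u)
    (h : Integrable (fun ω => exp (u * X ω)) μ) : Tendsto (cgf X μ) (𝓝[>] 0) (𝓝 0) := by
  have h0 : Integrable (fun ω => exp (0 * X ω)) μ := by simp
  have hmgf : Tendsto (mgf X μ) (𝓝[>] 0) (𝓝 1) := by
    rw [← mgf_zero (X := X) (μ := μ)]
    exact ((continuousOn_mgf_Icc h0 h).continuousWithinAt ⟨le_rfl, hu.le⟩
      |>.mono_of_mem_nhdsWithin (Icc_mem_nhdsGT hu)).tendsto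
  show Tendsto (fun s => log (mgf X μ s)) _ _
  simpa only [log_one] using hmgf.log one_ne_zero

end ProbabilityTheory

lemma relEnt_self {Ω : Type*} [MeasurableSpace Ω] (μ : Measure Ω) [SigmaFinite μ] :
    relEnt μ μ = 0 := by
  have hlog : (fun ω => log (μ.rnDeriv μ ω).toReal) =ᵐ[μ] 0 := by
    filter_upwards [Measure.rnDeriv_self μ] with ω hω
    simp [hω]
  rw [relEnt, if_pos ⟨.rfl, (integrable_zero _ _ _).congr hlog.symm⟩, integral_congr_ae hlog]
  simp

lemma relEnt_tilted_mul {Ω : Type*} [MeasurableSpace Ω] {X : Ω → ℝ} {μ : Measure Ω}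
    [IsProbabilityMeasure μ] {t : ℝ} (ht : t ∈ interior (integrableExpSet X μ)) :
    relEnt (μ.tilted (t * X ·)) μ = ENNReal.ofReal (t * deriv (cgf X μ) t - cgf X μ t) := by
  have hexp : Integrable (fun ω => exp (t * X ω)) μ :=
    integrable_of_mem_integrableExpSet (interior_subset ht)
  have := isProbabilityMeasure_tilted hexp
  have hlog := (tilted_absolutelyContinuous μ (t * X ·)).ae_eq (log_rnDeriv_tilted_left_self hexp)
  have hX : Integrable X (μ.tilted (t * X ·)) :=
    memLp_one_iff_integrable.1 (memLp_tilted_mul ht 1)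
  have hlog_int := (hX.const_mul t).sub (integrable_const (log (∫ ω, exp (t * X ω) ∂μ)))
  rw [relEnt, if_pos ⟨tilted_absolutelyContinuous μ _, hlog_int.congr hlog.symm⟩,
    integral_congr_ae hlog, integral_sub (hX.const_mul t) (integrable_const _),
    integral_const_mul, integral_tilted_mul_self ht]
  simp [cgf, mgf]

theorem maurer_method_log_sobolev_general
    {Ω : Type*} [MeasurableSpace Ω] (P : Measure Ω) [IsProbabilityMeasure P]
    (f : Ω → ℝ)
    (hexp : ∀ lam : ℝ, 0 ≤ lam → Integrable (fun ω => Real.exp (lam * f ω)) P)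
    (c : ℝ) (Γ : ℝ)
    (hvar : ∀ lam : ℝ, 0 ≤ lam →
      variance f (P.tilted (fun ω => lam * f ω)) ≤ c * Γ ^ 2) :
    ∀ lam : ℝ, 0 ≤ lam →
      relEnt (P.tilted (fun ω => lam * f ω)) P
        ≤ ENNReal.ofReal ((1 / 2) * lam ^ 2 * c * Γ ^ 2) := by
  intro lam hlam
  rcases hlam.eq_or_lt with rfl | hlam
  · simp [relEnt_self]
  have hinterior : Ioi 0 ⊆ interior (integrableExpSet f P) := by
    rw [← interior_Ici]
    exact interior_mono hexp
  have hcgf : ∀ s ∈ Ioc 0 lam, AnalyticAt ℝ (cgf f P) s := fun s hs =>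
    analyticAt_cgf (hinterior hs.1)
  have hbound := mul_sub_le_of_hasDerivAt_of_deriv_le (K := c * Γ ^ 2) hlam
    (fun s hs => (hcgf s hs).differentiableAt.hasDerivAt)
    (fun s hs => by
      simpa only [iteratedDeriv_succ, iteratedDeriv_zero] using
        (hcgf s hs).deriv.differentiableAt.hasDerivAt)
    (fun s hs => variance_tilted_mul (hinterior hs.1) ▸ hvar s hs.1.le)
    (tendsto_cgf_nhdsGT_zero one_pos (hexp 1 zero_le_one))
  rw [relEnt_tilted_mul (hinterior hlam)]
  exact ENNReal.ofReal_le_ofReal (by linarith)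

/-- **Maurer's method for log-Sobolev inequalities**: let `X ∼ P`, let `f` be measurable with
`E_P[exp (λ f)] < ∞` for all `λ ≥ 0`, and suppose there are a constant `c > 0` and a number
`Γ ≥ 0` such that `Var^{(λ f)}[f(X)] ≤ c Γ²` for all `λ ≥ 0`, the variance being computed
under the tilted distribution `P^{(λ f)}`.  Then
`D(P^{(λ f)} ‖ P) ≤ (1/2) λ² c Γ²` for all `λ ≥ 0`. -/
theorem maurer_method_log_sobolev
    {Ω : Type*} [MeasurableSpace Ω] (P : Measure Ω) [IsProbabilityMeasure P]
    (f : Ω → ℝ) (hfmeas : Measurable f)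
    (hexp : ∀ lam : ℝ, 0 ≤ lam → Integrable (fun ω => Real.exp (lam * f ω)) P)
    (c : ℝ) (hc : 0 < c) (Γ : ℝ) (hΓ : 0 ≤ Γ)
    (hvar : ∀ lam : ℝ, 0 ≤ lam →
      variance f (P.tilted (fun ω => lam * f ω)) ≤ c * Γ ^ 2) :
    ∀ lam : ℝ, 0 ≤ lam →
      relEnt (P.tilted (fun ω => lam * f ω)) P
        ≤ ENNReal.ofReal ((1 / 2) * lam ^ 2 * c * Γ ^ 2) :=
  maurer_method_log_sobolev_general P f hexp c Γ hvar
end
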